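/- arXiv:0803.0988 — 13 statements merged into one kernel-verified Lean document; each statement's English description precedes it below -/
import Mathlib

section
/- Let M be an n×n symmetric M-matrix with diagonal entries m_{ii}, let ζ and r be real numbers with 0 < ζ ≤ 1 and 0 < r ≤ 1/4, and let D be a random diagonal n×n matrix whose diagonal entries d_i are chosen independently and uniformly from the interval (0,1). Let T = { i ∈ [n] : (MD·1)_i ≥ r·m_{ii} }, where 1 is the all-ones vector, and let β be the fraction of indices i for which m_{ii} is less than ζ times the average diagonal entry of M. Then with probability at least (1−4r)/(4r+7), |T| ≥ (1/8 − r/2)·(1 − β − 2/(3ζ))·n. -/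
open MeasureTheory ProbabilityTheory Matrix
open scoped ENNReal

lemma unif_lintegral : ∫⁻ x in Set.Ioo (0:ℝ) 1, ENNReal.ofReal x = ENNReal.ofReal (1/2) := by
  rw [← ofReal_integral_eq_lintegral_ofReal]
  · congr 1
    rw [← integral_Ioc_eq_integral_Ioo, ← intervalIntegral.integral_of_le (by norm_num : (0:ℝ) ≤ 1)]
    simp
  · have : IntervalIntegrable (fun x : ℝ => x) volume 0 1 := intervalIntegral.intervalIntegrable_id
    exact (intervalIntegrable_iff_integrableOn_Ioo_of_le (by norm_num)).mp this
  · filter_upwards [self_mem_ae_restrict measurableSet_Ioo] with x hx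
    exact le_of_lt hx.1

/-- If X is uniform on (0,1), independent of Y, then P(X < r + Y) ≤ r + E. -/
lemma prob_lt_add {Ω : Type*} [MeasurableSpace Ω] (μ : Measure Ω) [IsProbabilityMeasure μ]
    (X Y : Ω → ℝ) (hX : Measurable X) (hY : Measurable Y) (hindep : IndepFun X Y μ)
    (hXunif : μ.map X = volume.restrict (Set.Ioo (0:ℝ) 1))
    (r E : ℝ) (hr : 0 ≤ r) (hE0 : 0 ≤ E)
    (hE : ∫⁻ ω, ENNReal.ofReal (Y ω) ∂μ ≤ ENNReal.ofReal E) :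
    μ {ω | X ω < r + Y ω} ≤ ENNReal.ofReal (r + E) := by
  have hjoint : μ.map (fun ω => (Y ω, X ω)) = (μ.map Y).prod (μ.map X) :=
    (indepFun_iff_map_prod_eq_prod_map_map hY.aemeasurable hX.aemeasurable).mp hindep.symm
  have hs : MeasurableSet {p : ℝ × ℝ | p.2 < r + p.1} :=
    measurableSet_lt measurable_snd (measurable_const.add measurable_fst)
  have h1 : μ {ω | X ω < r + Y ω} = (μ.map Y).prod (μ.map X) {p : ℝ × ℝ | p.2 < r + p.1} := by
    rw [← hjoint, Measure.map_apply (hY.prodMk hX) hs]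
    rfl
  rw [h1, Measure.prod_apply hs]
  have hinner : ∀ y : ℝ, (μ.map X) (Prod.mk y ⁻¹' {p : ℝ × ℝ | p.2 < r + p.1})
      ≤ ENNReal.ofReal (r + y) := by
    intro y
    rw [hXunif]
    have : (Prod.mk y ⁻¹' {p : ℝ × ℝ | p.2 < r + p.1}) = Set.Iio (r + y) := rfl
    rw [this, Measure.restrict_apply measurableSet_Iio]
    calc volume (Set.Iio (r+y) ∩ Set.Ioo 0 1) ≤ volume (Set.Ioo 0 (r+y)) := by
          apply measure_mono; rintro x ⟨hx1, hx2, _⟩; exact ⟨hx2, hx1⟩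
      _ = ENNReal.ofReal (r + y) := by simp
  calc ∫⁻ y, (μ.map X) (Prod.mk y ⁻¹' {p : ℝ × ℝ | p.2 < r + p.1}) ∂(μ.map Y)
      ≤ ∫⁻ y, ENNReal.ofReal (r + y) ∂(μ.map Y) := lintegral_mono hinner
    _ = ∫⁻ ω, ENNReal.ofReal (r + Y ω) ∂μ :=
        lintegral_map (by fun_prop) hY
    _ ≤ ∫⁻ ω, (ENNReal.ofReal r + ENNReal.ofReal (Y ω)) ∂μ :=
        lintegral_mono fun ω => ENNReal.ofReal_add_le
    _ = ENNReal.ofReal r + ∫⁻ ω, ENNReal.ofReal (Y ω) ∂μ := by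
        rw [lintegral_add_left measurable_const]; simp
    _ ≤ ENNReal.ofReal r + ENNReal.ofReal E := by gcongr
    _ = ENNReal.ofReal (r + E) := (ENNReal.ofReal_add hr hE0).symm

lemma ofReal_sum_le {α : Type*} (s : Finset α) (f : α → ℝ) :
    ENNReal.ofReal (∑ j ∈ s, f j) ≤ ∑ j ∈ s, ENNReal.ofReal (f j) := by
  classical
  induction s using Finset.induction_on with
  | empty => simp
  | @insert _ _ h ih =>
    rw [Finset.sum_insert h, Finset.sum_insert h]
    exact le_trans ENNReal.ofReal_add_le (by gcongr)

lemma prob_bad_index {Ω : Type*} [MeasurableSpace Ω] (μ : Measure Ω) [IsProbabilityMeasure μ]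
    {n : ℕ} (d : Fin n → Ω → ℝ) (hd : ∀ i, Measurable (d i))
    (hindep : iIndepFun d μ)
    (hunif : ∀ i, μ.map (d i) = volume.restrict (Set.Ioo (0 : ℝ) 1))
    (i : Fin n) (c : Fin n → ℝ) (hc : ∀ j, 0 ≤ c j) (r : ℝ) (hr : 0 ≤ r) :
    μ {ω | d i ω < r + ∑ j ∈ Finset.univ.erase i, c j * d j ω}
      ≤ ENNReal.ofReal (r + (∑ j ∈ Finset.univ.erase i, c j) / 2) := by
  classical
  set S : Finset (Fin n) := Finset.univ.erase i with hS
  have hY : Measurable (fun ω => ∑ j ∈ S, c j * d j ω) :=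
    Finset.measurable_sum _ (fun j _ => (hd j).const_mul (c j))
  have hI : IndepFun (d i) (fun ω => ∑ j ∈ S, c j * d j ω) μ := by
    have h := hindep.indepFun_finset {i} S (by simp [hS]) hd
    have h2 := h.comp (φ := fun v : {x // x ∈ ({i} : Finset (Fin n))} → ℝ => v ⟨i, Finset.mem_singleton_self i⟩)
      (ψ := fun v : {x // x ∈ S} → ℝ => ∑ j : {x // x ∈ S}, c j.1 * v j) (_mγ := inferInstance) (_mγ' := inferInstance)
      (measurable_pi_apply _)
      (Finset.measurable_sum _ (fun j _ => by fun_prop))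
    have e1 : (fun v : {x // x ∈ ({i} : Finset (Fin n))} → ℝ => v ⟨i, Finset.mem_singleton_self i⟩) ∘
        (fun a (j : ({i} : Finset (Fin n))) => d j a) = d i := rfl
    have e2 : (fun v : {x // x ∈ S} → ℝ => ∑ j : {x // x ∈ S}, c j.1 * v j) ∘
        (fun a (j : (S : Finset (Fin n))) => d j a) = fun ω => ∑ j ∈ S, c j * d j ω := by
      funext ω
      simp only [Function.comp_apply]
      rw [← Finset.sum_coe_sort S (fun j => c j * d j ω)]
    rwa [e1, e2] at h2
  have hEbound : ∫⁻ ω, ENNReal.ofReal (∑ j ∈ S, c j * d j ω) ∂μ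
      ≤ ENNReal.ofReal ((∑ j ∈ S, c j) / 2) := by
    calc ∫⁻ ω, ENNReal.ofReal (∑ j ∈ S, c j * d j ω) ∂μ
        ≤ ∫⁻ ω, ∑ j ∈ S, ENNReal.ofReal (c j * d j ω) ∂μ :=
          lintegral_mono fun ω => ofReal_sum_le _ _
      _ = ∑ j ∈ S, ∫⁻ ω, ENNReal.ofReal (c j * d j ω) ∂μ :=
          lintegral_finset_sum _ (fun j _ => ENNReal.measurable_ofReal.comp ((hd j).const_mul (c j)))
      _ = ∑ j ∈ S, ENNReal.ofReal (c j) * ENNReal.ofReal (1/2) := by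
          refine Finset.sum_congr rfl fun j _ => ?_
          have h1 : ∫⁻ ω, ENNReal.ofReal (d j ω) ∂μ = ENNReal.ofReal (1/2) := by
            rw [← lintegral_map ENNReal.measurable_ofReal (hd j), hunif j, unif_lintegral]
          simp_rw [ENNReal.ofReal_mul (hc j)]
          rw [lintegral_const_mul _ (by fun_prop : Measurable fun ω => ENNReal.ofReal (d j ω)), h1]
      _ = ENNReal.ofReal ((∑ j ∈ S, c j) / 2) := by
          rw [← Finset.sum_mul, ← ENNReal.ofReal_sum_of_nonneg (fun j _ => hc j),
            ← ENNReal.ofReal_mul (Finset.sum_nonneg fun j _ => hc j), mul_one_div]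
  exact prob_lt_add μ (d i) _ (hd i) hY hI (hunif i) r _ hr
    (div_nonneg (Finset.sum_nonneg fun j _ => hc j) (by norm_num)) hEbound

/-- **Random Scaling Lemma.** If `M` is an `n × n` symmetric M-matrix (symmetric positive
definite with nonpositive off-diagonal entries) and `D` is a random diagonal matrix whose
diagonal entries are independent and uniform on `(0,1)`, then with probability at least
`(1-4r)/(4r+7)`, the number of rows `i` with `(M D 1)_i ≥ r m_{ii}` is at least
`(1/8 - r/2)(1 - β - 2/(3ζ)) n`, where `β` is the fraction of diagonal entries of `M` smaller
than `ζ` times the average diagonal entry. -/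
theorem random_scaling_lemma
    {n : ℕ} (M : Matrix (Fin n) (Fin n) ℝ)
    (hMposdef : M.PosDef) (hMoff : ∀ i j : Fin n, i ≠ j → M i j ≤ 0)
    (ζ r : ℝ) (hζ0 : 0 < ζ) (hζ1 : ζ ≤ 1) (hr0 : 0 < r) (hr : r ≤ 1 / 4)
    {Ω : Type*} [MeasurableSpace Ω] (μ : Measure Ω) [IsProbabilityMeasure μ]
    (d : Fin n → Ω → ℝ) (hd : ∀ i, Measurable (d i))
    (hindep : iIndepFun d μ)
    (hunif : ∀ i, μ.map (d i) = volume.restrict (Set.Ioo (0 : ℝ) 1))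
    (β : ℝ)
    (hβ : β = ((Finset.univ.filter fun i : Fin n =>
        M i i < ζ * ((∑ j, M j j) / n)).card : ℝ) / n) :
    ENNReal.ofReal ((1 - 4 * r) / (4 * r + 7)) ≤
      μ {ω | (1 / 8 - r / 2) * (1 - β - 2 / (3 * ζ)) * n ≤
        ((Finset.univ.filter fun i : Fin n =>
          r * M i i ≤ ((M * Matrix.diagonal fun j => d j ω) *ᵥ fun _ => 1) i).card : ℝ)} := by
  classical
  have hone : ENNReal.ofReal ((1 - 4*r)/(4*r+7)) ≤ 1 := by
    rw [← ENNReal.ofReal_one]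
    apply ENNReal.ofReal_le_ofReal
    rw [div_le_one (by linarith)]; linarith
  set a : ℝ := (1/8 - r/2) * (1 - β - 2/(3*ζ)) * n with ha
  clear_value a
  by_cases hpos : 0 < a
  swap
  · have hU : {ω : Ω | a ≤ ((Finset.univ.filter fun i : Fin n =>
        r * M i i ≤ ((M * Matrix.diagonal fun j => d j ω) *ᵥ fun _ => 1) i).card : ℝ)} = Set.univ :=
      Set.eq_univ_of_forall fun ω => le_trans (not_lt.mp hpos) (Nat.cast_nonneg _)
    rw [hU, measure_univ]; exact hone
  -- main case
  have hcoeff : (0:ℝ) ≤ 1/8 - r/2 := by linarith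
  have hn : 0 < n := by
    rcases Nat.eq_zero_or_pos n with h | h
    · exfalso; rw [ha, h] at hpos; simp at hpos
    · exact h
  have hnR : (0:ℝ) < n := Nat.cast_pos.mpr hn
  have hBn : 0 < (1 - β - 2/(3*ζ)) * n := by
    by_contra h
    push_neg at h
    have : a ≤ 0 := by
      rw [ha, mul_assoc]
      exact mul_nonpos_of_nonneg_of_nonpos hcoeff h
    linarith
  -- diagonal entries positive
  have hdiag : ∀ i, 0 < M i i := by
    intro i
    have h := hMposdef.dotProduct_mulVec_pos (x := Pi.single i 1) (by
      intro h
      have := congrFun h i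
      simp at this)
    simpa [dotProduct, Matrix.mulVec, Pi.single_apply, Finset.sum_ite_eq', mul_ite, ite_mul] using h
  set m' : ℝ := (∑ j, M j j) / n with hm'
  have hm'pos : 0 < m' := by
    rw [hm']
    exact div_pos (Finset.sum_pos (fun i _ => hdiag i) ⟨⟨0, hn⟩, Finset.mem_univ _⟩) hnR
  set R : Fin n → ℝ := fun i => ∑ j ∈ Finset.univ.erase i, -M i j with hRdef
  clear_value R
  have hR0 : ∀ i, 0 ≤ R i := by
    intro i
    rw [hRdef]
    exact Finset.sum_nonneg fun j hj => neg_nonneg.2 (hMoff i j (Ne.symm (Finset.mem_erase.mp hj).1))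
  have hquad : (0:ℝ) ≤ ∑ i, ∑ j, M i j := by
    have h := hMposdef.posSemidef.dotProduct_mulVec_nonneg (fun _ => (1:ℝ))
    simpa [dotProduct, Matrix.mulVec] using h
  have hRsum : ∑ i, R i ≤ ∑ i, M i i := by
    have key : ∀ i, M i i - R i = ∑ j, M i j := by
      intro i
      rw [← Finset.add_sum_erase Finset.univ (fun j => M i j) (Finset.mem_univ i), hRdef]
      simp [Finset.sum_neg_distrib]
    have h2 : ∑ i, (M i i - R i) = ∑ i, ∑ j, M i j := Finset.sum_congr rfl fun i _ => key i
    rw [Finset.sum_sub_distrib] at h2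
    linarith
  -- the good set
  set G : Finset (Fin n) := Finset.univ.filter (fun i => ζ * m' ≤ M i i ∧ R i ≤ (3*ζ/2) * m') with hG
  clear_value G
  set bad1 : Finset (Fin n) := Finset.univ.filter (fun i : Fin n => M i i < ζ * m') with hbad1
  set bad2 : Finset (Fin n) := Finset.univ.filter (fun i : Fin n => (3*ζ/2) * m' < R i) with hbad2
  clear_value bad1 bad2
  have hcard1 : (bad1.card : ℝ) = β * n := by
    rw [hβ]
    field_simp
  have hcard2 : (bad2.card : ℝ) ≤ 2/(3*ζ) * n := by
    have ht : 0 < (3*ζ/2) * m' := by positivity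
    have hsum2 : (bad2.card : ℝ) * ((3*ζ/2) * m') ≤ ∑ i, M i i := by
      calc (bad2.card : ℝ) * ((3*ζ/2) * m') = ∑ _i ∈ bad2, (3*ζ/2) * m' := by
            rw [Finset.sum_const, nsmul_eq_mul]
        _ ≤ ∑ i ∈ bad2, R i := Finset.sum_le_sum fun i hi => by
            rw [hbad2, Finset.mem_filter] at hi
            exact le_of_lt hi.2
        _ ≤ ∑ i, R i := Finset.sum_le_sum_of_subset_of_nonneg (Finset.subset_univ _)
            (fun i _ _ => hR0 i)
        _ ≤ ∑ i, M i i := hRsum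
    have hsum3 : (∑ i, M i i) = n * m' := by
      rw [hm']; field_simp
    rw [hsum3] at hsum2
    calc (bad2.card : ℝ) ≤ (n * m') / ((3*ζ/2) * m') := (le_div_iff₀ ht).mpr hsum2
      _ = 2/(3*ζ) * n := by field_simp
  have hGcard : (1 - β - 2/(3*ζ)) * n ≤ (G.card : ℝ) := by
    have hcover : (Finset.univ : Finset (Fin n)) ⊆ G ∪ (bad1 ∪ bad2) := by
      intro i _
      by_cases h1 : i ∈ bad1
      · exact Finset.mem_union_right _ (Finset.mem_union_left _ h1)
      by_cases h2 : i ∈ bad2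
      · exact Finset.mem_union_right _ (Finset.mem_union_right _ h2)
      · refine Finset.mem_union_left _ ?_
        rw [hG, Finset.mem_filter]
        rw [hbad1, Finset.mem_filter] at h1
        rw [hbad2, Finset.mem_filter] at h2
        push_neg at h1 h2
        exact ⟨Finset.mem_univ _, h1 (Finset.mem_univ _), h2 (Finset.mem_univ _)⟩
    have hle : n ≤ G.card + (bad1.card + bad2.card) := by
      calc n = (Finset.univ : Finset (Fin n)).card := (Finset.card_fin n).symm
        _ ≤ (G ∪ (bad1 ∪ bad2)).card := Finset.card_le_card hcover
        _ ≤ G.card + (bad1 ∪ bad2).card := Finset.card_union_le _ _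
        _ ≤ G.card + (bad1.card + bad2.card) := by
            exact Nat.add_le_add_left (Finset.card_union_le _ _) _
    have hleR : (n:ℝ) ≤ (G.card : ℝ) + ((bad1.card : ℝ) + (bad2.card : ℝ)) := by
      exact_mod_cast hle
    rw [hcard1] at hleR
    nlinarith [hcard2]
  -- events
  set c : Fin n → Fin n → ℝ := fun i j => if j = i then 0 else (-M i j) / M i i with hc
  have hcnn : ∀ i j, 0 ≤ c i j := by
    intro i j
    rw [hc]
    by_cases h : j = i
    · simp [h]
    · simp only [h, if_false]
      exact div_nonneg (neg_nonneg.2 (hMoff i j (Ne.symm h))) (hdiag i).le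
  set A : Fin n → Set Ω := fun i =>
    {ω | d i ω < r + ∑ j ∈ Finset.univ.erase i, c i j * d j ω} with hA
  have hAmeas : ∀ i, MeasurableSet (A i) := fun i =>
    measurableSet_lt (hd i)
      (measurable_const.add (Finset.measurable_sum _ fun j _ => (hd j).const_mul _))
  have hsumc : ∀ i, ∑ j ∈ Finset.univ.erase i, c i j = R i / M i i := by
    intro i
    rw [hRdef]
    simp only []
    rw [Finset.sum_div]
    refine Finset.sum_congr rfl fun j hj => ?_
    rw [hc]
    simp [(Finset.mem_erase.mp hj).1]
  clear_value c
  have hAbound : ∀ i ∈ G, μ (A i) ≤ ENNReal.ofReal (3/4 + r) := by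
    intro i hi
    have h := prob_bad_index μ d hd hindep hunif i (c i) (hcnn i) r hr0.le
    refine le_trans h (ENNReal.ofReal_le_ofReal ?_)
    rw [hG] at hi
    obtain ⟨-, h1, h2⟩ := Finset.mem_filter.mp hi
    have hMi := hdiag i
    rw [hsumc]
    have hd2 : R i / M i i ≤ 3/2 := by
      rw [div_le_iff₀ hMi]
      nlinarith
    linarith
  -- relating the target filter to the events A i
  have hTA : ∀ (ω : Ω) (i : Fin n),
      (r * M i i ≤ ((M * Matrix.diagonal fun j => d j ω) *ᵥ fun _ => (1:ℝ)) i) ↔ ω ∉ A i := by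
    intro ω i
    have hm := hdiag i
    have hmv : ((M * Matrix.diagonal fun j => d j ω) *ᵥ fun _ => (1:ℝ)) i
        = ∑ j, M i j * d j ω := by
      simp [Matrix.mulVec, dotProduct, Matrix.mul_diagonal]
    set Sv : ℝ := ∑ j ∈ Finset.univ.erase i, c i j * d j ω with hSv
    have hsplit : ∑ j, M i j * d j ω = M i i * d i ω - Sv * M i i := by
      rw [← Finset.add_sum_erase _ (fun j => M i j * d j ω) (Finset.mem_univ i), hSv,
        Finset.sum_mul]
      have : ∀ j ∈ Finset.univ.erase i, c i j * d j ω * M i i = -(M i j * d j ω) := by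
        intro j hj
        rw [hc]
        simp only [(Finset.mem_erase.mp hj).1, if_false]
        field_simp
      rw [Finset.sum_congr rfl this, Finset.sum_neg_distrib]
      ring
    rw [hmv, hsplit]
    have hmem : ω ∈ A i ↔ d i ω < r + Sv := Iff.rfl
    constructor
    · intro h hmem2
      rw [hmem] at hmem2
      have h2 : (r + Sv) * M i i ≤ d i ω * M i i := by linarith
      have h3 : r + Sv ≤ d i ω := le_of_mul_le_mul_right h2 hm
      linarith
    · intro h
      have h2 : r + Sv ≤ d i ω := not_lt.mp (fun hlt => h (hmem.mpr hlt))
      have h3 := mul_le_mul_of_nonneg_right h2 hm.le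
      linarith
  clear_value A
  -- the counting function
  set f : Ω → ℝ≥0∞ := fun ω => ∑ i ∈ G, (A i).indicator (fun _ => 1) ω with hf
  have hfmeas : Measurable f :=
    Finset.measurable_sum _ fun i _ => measurable_const.indicator (hAmeas i)
  have hfint : ∫⁻ ω, f ω ∂μ ≤ (G.card : ℝ≥0∞) * ENNReal.ofReal (3/4 + r) := by
    rw [hf]
    rw [lintegral_finset_sum _ fun i _ => measurable_const.indicator (hAmeas i)]
    calc ∑ i ∈ G, ∫⁻ ω, (A i).indicator (fun _ => 1) ω ∂μ
        = ∑ i ∈ G, μ (A i) := Finset.sum_congr rfl fun i _ => lintegral_indicator_one (hAmeas i)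
      _ ≤ ∑ _i ∈ G, ENNReal.ofReal (3/4 + r) := Finset.sum_le_sum hAbound
      _ = (G.card : ℝ≥0∞) * ENNReal.ofReal (3/4 + r) := by
          rw [Finset.sum_const, nsmul_eq_mul]
  clear_value f
  set g : ℝ := (G.card : ℝ) with hg
  clear_value g
  have hgag : a ≤ (1/8 - r/2) * g := by
    calc a = (1/8 - r/2) * ((1 - β - 2/(3*ζ)) * n) := by rw [ha]; ring
      _ ≤ (1/8 - r/2) * g := mul_le_mul_of_nonneg_left hGcard hcoeff
  have hg0 : 0 < g := lt_of_lt_of_le hBn hGcard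
  have hrg : 0 < r * g := mul_pos hr0 hg0
  have hga2 : 0 < g - a := by linarith
  have hincl : {ω : Ω | a ≤ ((Finset.univ.filter fun i : Fin n =>
        r * M i i ≤ ((M * Matrix.diagonal fun j => d j ω) *ᵥ fun _ => 1) i).card : ℝ)}ᶜ
      ⊆ {ω | ENNReal.ofReal (g - a) ≤ f ω} := by
    intro ω hω
    simp only [Set.mem_compl_iff, Set.mem_setOf_eq, not_le] at hω
    have hcount : f ω = ((G.filter fun i => ω ∈ A i).card : ℝ≥0∞) := by
      rw [hf]
      simp_rw [Set.indicator_apply]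
      rw [Finset.sum_boole]
    have hsubset : G.filter (fun i => ω ∉ A i) ⊆ Finset.univ.filter (fun i : Fin n =>
        r * M i i ≤ ((M * Matrix.diagonal fun j => d j ω) *ᵥ fun _ => 1) i) := by
      intro i hi
      obtain ⟨hiG, hiA⟩ := Finset.mem_filter.mp hi
      exact Finset.mem_filter.mpr ⟨Finset.mem_univ _, (hTA ω i).mpr hiA⟩
    have hcardsplit : (G.filter fun i => ω ∈ A i).card + (G.filter fun i => ω ∉ A i).card
        = G.card := Finset.card_filter_add_card_filter_not _
    have h1 : ((G.filter fun i => ω ∉ A i).card : ℝ) < a :=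
      lt_of_le_of_lt (by exact_mod_cast Finset.card_le_card hsubset) hω
    have h2 : g - a ≤ ((G.filter fun i => ω ∈ A i).card : ℝ) := by
      have h3 := congrArg (Nat.cast : ℕ → ℝ) hcardsplit
      push_cast at h3
      rw [hg]
      linarith
    rw [Set.mem_setOf_eq, hcount]
    calc ENNReal.ofReal (g - a)
        ≤ ENNReal.ofReal (((G.filter fun i => ω ∈ A i).card : ℕ) : ℝ) :=
          ENNReal.ofReal_le_ofReal h2
      _ = _ := ENNReal.ofReal_natCast _
  have hSc : μ ({ω : Ω | a ≤ ((Finset.univ.filter fun i : Fin n =>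
        r * M i i ≤ ((M * Matrix.diagonal fun j => d j ω) *ᵥ fun _ => 1) i).card : ℝ)}ᶜ)
      ≤ ENNReal.ofReal ((6+8*r)/(7+4*r)) := by
    have hmarkov := mul_meas_ge_le_lintegral₀ (μ := μ) hfmeas.aemeasurable (ENNReal.ofReal (g - a))
    have h1 : ENNReal.ofReal (g - a) * μ ({ω : Ω | a ≤ ((Finset.univ.filter fun i : Fin n =>
        r * M i i ≤ ((M * Matrix.diagonal fun j => d j ω) *ᵥ fun _ => 1) i).card : ℝ)}ᶜ)
        ≤ ∫⁻ ω, f ω ∂μ :=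
      le_trans (mul_le_mul_right (measure_mono hincl) _) hmarkov
    have h2 : ∫⁻ ω, f ω ∂μ
        ≤ ENNReal.ofReal ((6+8*r)/(7+4*r)) * ENNReal.ofReal (g - a) := by
      refine le_trans hfint ?_
      have hgcast : (G.card : ℝ≥0∞) = ENNReal.ofReal g := by
        rw [hg, ENNReal.ofReal_natCast]
      rw [hgcast, ← ENNReal.ofReal_mul hg0.le,
        ← ENNReal.ofReal_mul (by positivity : (0:ℝ) ≤ (6+8*r)/(7+4*r))]
      apply ENNReal.ofReal_le_ofReal
      have hkey : (6+8*r)/(7+4*r) * (7/8 + r/2) = 3/4 + r := by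
        field_simp
        ring
      have hga3 : (7/8 + r/2) * g ≤ g - a := by linarith
      calc g * (3/4 + r) = (6+8*r)/(7+4*r) * ((7/8 + r/2) * g) := by
            rw [← mul_assoc, hkey]; ring
        _ ≤ (6+8*r)/(7+4*r) * (g - a) :=
            mul_le_mul_of_nonneg_left hga3 (by positivity)
    have h3 := le_trans h1 h2
    rw [mul_comm (ENNReal.ofReal ((6+8*r)/(7+4*r))) _] at h3
    exact (ENNReal.mul_le_mul_iff_right (ENNReal.ofReal_pos.mpr hga2).ne' ENNReal.ofReal_ne_top).mp h3
  have hsplit2 : (1:ℝ≥0∞) ≤ μ {ω : Ω | a ≤ ((Finset.univ.filter fun i : Fin n =>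
        r * M i i ≤ ((M * Matrix.diagonal fun j => d j ω) *ᵥ fun _ => 1) i).card : ℝ)}
      + μ ({ω : Ω | a ≤ ((Finset.univ.filter fun i : Fin n =>
        r * M i i ≤ ((M * Matrix.diagonal fun j => d j ω) *ᵥ fun _ => 1) i).card : ℝ)}ᶜ) := by
    rw [← measure_univ (μ := μ), ← Set.union_compl_self {ω : Ω | a ≤ ((Finset.univ.filter fun i : Fin n =>
        r * M i i ≤ ((M * Matrix.diagonal fun j => d j ω) *ᵥ fun _ => 1) i).card : ℝ)}]
    exact measure_union_le _ _
  have heq : ENNReal.ofReal ((1 - 4*r)/(4*r+7)) = 1 - ENNReal.ofReal ((6+8*r)/(7+4*r)) := by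
    rw [← ENNReal.ofReal_one, ← ENNReal.ofReal_sub _ (by positivity : (0:ℝ) ≤ (6+8*r)/(7+4*r))]
    congr 1
    field_simp
    ring
  rw [heq, tsub_le_iff_right]
  exact le_trans hsplit2 (add_le_add_right hSc _)
end

section
/- Let A be an n×m real matrix and c ∈ ℝ^m. Suppose (ȳ, s̄) satisfies Aᵀȳ + s̄ = c with all entries of s̄ positive and A·S̄^{-1}1_m = 0, where S̄ = diag(s̄) and 1_m is the all-ones vector (i.e., (ȳ, s̄) is the analytic center of the dual polytope). Then for every (y, s) with Aᵀy + s = c and s ≥ 0 componentwise, we have m·s̄_j ≥ s_j for every coordinate j. -/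
open Matrix

/-- If `(ȳ, s̄)` is the analytic center of the dual polytope
`Ω^D = {(y, s) : Aᵀ y + s = c, s ≥ 0}` (i.e. `A S̄⁻¹ 1 = 0`), then for every `(y, s)` in the
polytope, each slack satisfies `s_j ≤ m s̄_j`. -/
theorem analytic_center_slack_bound {n m : ℕ} (A : Matrix (Fin n) (Fin m) ℝ)
    (c : Fin m → ℝ) (ybar : Fin n → ℝ) (sbar : Fin m → ℝ)
    (hfeas : Aᵀ *ᵥ ybar + sbar = c) (hpos : ∀ j, 0 < sbar j)
    (hcenter : A *ᵥ (fun j => (sbar j)⁻¹) = 0) :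
    ∀ (y : Fin n → ℝ) (s : Fin m → ℝ), Aᵀ *ᵥ y + s = c → (∀ j, 0 ≤ s j) →
      ∀ j, s j ≤ m * sbar j := by
  intro y s hfeas' hs j
  set t : Fin m → ℝ := fun j => (sbar j)⁻¹ with ht
  have hdiff : s - sbar = Aᵀ *ᵥ (ybar - y) := by
    have : Aᵀ *ᵥ y + s = Aᵀ *ᵥ ybar + sbar := by rw [hfeas, hfeas']
    rw [Matrix.mulVec_sub]
    funext i
    have := congrFun this i
    simp [Matrix.mulVec_sub] at this ⊢
    linarith
  have hzero : (s - sbar) ⬝ᵥ t = 0 := by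
    rw [hdiff, Matrix.mulVec_transpose, ← Matrix.dotProduct_mulVec, hcenter]
    simp
  have hsum : ∑ k, s k * t k = m := by
    have h1 : ∑ k, (s k - sbar k) * t k = 0 := hzero
    have h2 : ∀ k, sbar k * t k = 1 := fun k => mul_inv_cancel₀ (hpos k).ne'
    have : ∑ k, s k * t k = ∑ k, sbar k * t k := by
      have heq : ∑ k, (s k - sbar k) * t k
          = ∑ k, s k * t k - ∑ k, sbar k * t k := by
        rw [← Finset.sum_sub_distrib]
        exact Finset.sum_congr rfl (fun k _ => sub_mul (s k) (sbar k) (t k))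
      rw [heq] at h1
      linarith
    rw [this, Finset.sum_congr rfl (fun k _ => h2 k)]
    simp
  have hterm : s j * t j ≤ ∑ k, s k * t k := by
    apply Finset.single_le_sum (f := fun k => s k * t k)
    · intro k _
      exact mul_nonneg (hs k) (le_of_lt (inv_pos.mpr (hpos k)))
    · exact Finset.mem_univ j
  rw [hsum] at hterm
  have : s j * (sbar j)⁻¹ ≤ m := hterm
  calc s j = s j * (sbar j)⁻¹ * sbar j := by
        rw [mul_assoc, inv_mul_cancel₀ (hpos j).ne', mul_one]
    _ ≤ m * sbar j := by
        exact mul_le_mul_of_nonneg_right this (hpos j).le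
end

section
/- Let A be an n×m real matrix with full row rank, c ∈ ℝ^m, and y ∈ ℝⁿ such that s = c − Aᵀy has all entries positive. Suppose η = η_A(s) satisfies η < 1. Let ε₃ = 1/(20(√m + 1)), and let d_y ∈ ℝⁿ be any vector satisfying ‖d_y + (AS^{-2}Aᵀ)^{-1}AS^{-1}1_m‖_{AS^{-2}Aᵀ} ≤ ε₃·η, where S = diag(s). Define y⁺ = y + (1−ε₃)·d_y and s⁺ = c − Aᵀy⁺. Then (i) all entries of s⁺ are positive, and (ii) η_A(s⁺) ≤ η² + η/20. -/
open Matrix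

open Matrix

/-- Euclidean norm of a vector. -/
noncomputable def eucNorm {ι : Type*} [Fintype ι] (v : ι → ℝ) : ℝ :=
  Real.sqrt (v ⬝ᵥ v)

/-- The diagonal matrix `S⁻¹` with entries `1 / s i`. -/
noncomputable def diagInv {ι : Type*} [Fintype ι] [DecidableEq ι] (s : ι → ℝ) :
    Matrix ι ι ℝ :=
  Matrix.diagonal fun i => (s i)⁻¹

/-- `x_A(s) = S⁻¹ (1 - S⁻¹ Aᵀ (A S⁻² Aᵀ)⁻¹ A S⁻¹ 1)`. -/
noncomputable def xA {n m : ℕ} (A : Matrix (Fin n) (Fin m) ℝ) (s : Fin m → ℝ) :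
    Fin m → ℝ :=
  (diagInv s *ᵥ fun _ => 1) -
    ((diagInv s * diagInv s * Aᵀ * (A * diagInv s * diagInv s * Aᵀ)⁻¹ * A * diagInv s) *ᵥ
      fun _ => 1)

/-- `η_A(s) = ‖S⁻¹ Aᵀ (A S⁻² Aᵀ)⁻¹ A S⁻¹ 1‖`. -/
noncomputable def etaA {κ ι : Type*} [Fintype κ] [Fintype ι] [DecidableEq κ] [DecidableEq ι]
    (B : Matrix κ ι ℝ) (t : ι → ℝ) : ℝ :=
  eucNorm ((diagInv t * Bᵀ * (B * diagInv t * diagInv t * Bᵀ)⁻¹ * B * diagInv t) *ᵥ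
    fun _ => 1)


/-- The matrix norm `‖v‖_M = √(vᵀ M v)`. -/
noncomputable def mnorm {ι : Type*} [Fintype ι] (M : Matrix ι ι ℝ) (v : ι → ℝ) : ℝ :=
  Real.sqrt (v ⬝ᵥ M *ᵥ v)

section Auxiliary

lemma dot_self_nonneg {ι : Type*} [Fintype ι] (v : ι → ℝ) : 0 ≤ v ⬝ᵥ v :=
  Finset.sum_nonneg fun _ _ => mul_self_nonneg _

lemma eucNorm_nonneg {ι : Type*} [Fintype ι] (v : ι → ℝ) : 0 ≤ eucNorm v :=
  Real.sqrt_nonneg _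

lemma abs_le_eucNorm {ι : Type*} [Fintype ι] (v : ι → ℝ) (i : ι) : |v i| ≤ eucNorm v := by
  have h1 : v i * v i ≤ v ⬝ᵥ v :=
    Finset.single_le_sum (f := fun j => v j * v j) (fun j _ => mul_self_nonneg (v j))
      (Finset.mem_univ i)
  calc |v i| = Real.sqrt (v i * v i) := (Real.sqrt_mul_self_eq_abs _).symm
    _ ≤ eucNorm v := Real.sqrt_le_sqrt h1

lemma eucNorm_eq_norm {ι : Type*} [Fintype ι] (v : ι → ℝ) :
    eucNorm v = ‖(WithLp.equiv 2 (ι → ℝ)).symm v‖ := by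
  rw [eucNorm, EuclideanSpace.norm_eq]
  congr 1
  simp [dotProduct, sq, Real.norm_eq_abs, abs_mul_abs_self]

lemma eucNorm_add_le {ι : Type*} [Fintype ι] (a b : ι → ℝ) :
    eucNorm (a + b) ≤ eucNorm a + eucNorm b := by
  rw [eucNorm_eq_norm, eucNorm_eq_norm, eucNorm_eq_norm]
  exact norm_add_le _ _

lemma eucNorm_smul {ι : Type*} [Fintype ι] (c : ℝ) (v : ι → ℝ) :
    eucNorm (c • v) = |c| * eucNorm v := by
  rw [eucNorm, eucNorm, smul_dotProduct, dotProduct_smul, smul_eq_mul, smul_eq_mul,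
    ← mul_assoc, Real.sqrt_mul (mul_self_nonneg c), Real.sqrt_mul_self_eq_abs]

lemma eucNorm_mul_le {ι : Type*} [Fintype ι] (a b : ι → ℝ) :
    eucNorm (fun i => a i * b i) ≤ eucNorm a * eucNorm b := by
  rw [eucNorm, eucNorm, eucNorm, ← Real.sqrt_mul (dot_self_nonneg a)]
  apply Real.sqrt_le_sqrt
  simp only [dotProduct]
  calc ∑ i, (a i * b i) * (a i * b i) ≤ ∑ i, (∑ j, a j * a j) * (b i * b i) := by
        apply Finset.sum_le_sum
        intro i _
        have h1 : a i * a i ≤ ∑ j, a j * a j :=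
          Finset.single_le_sum (f := fun j => a j * a j) (fun j _ => mul_self_nonneg (a j))
            (Finset.mem_univ i)
        nlinarith [mul_self_nonneg (b i), mul_self_nonneg (a i)]
    _ = (∑ j, a j * a j) * ∑ i, b i * b i := by rw [← Finset.mul_sum]

lemma dot_gram {n m : ℕ} (B : Matrix (Fin n) (Fin m) ℝ) (v : Fin n → ℝ) :
    v ⬝ᵥ ((B * Bᵀ) *ᵥ v) = (Bᵀ *ᵥ v) ⬝ᵥ (Bᵀ *ᵥ v) := by
  rw [← Matrix.mulVec_mulVec, Matrix.dotProduct_mulVec, ← Matrix.mulVec_transpose]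

lemma proj_contract {n m : ℕ} (B : Matrix (Fin n) (Fin m) ℝ)
    (hdet : IsUnit (B * Bᵀ).det) (v : Fin m → ℝ) :
    eucNorm ((Bᵀ * (B * Bᵀ)⁻¹ * B) *ᵥ v) ≤ eucNorm v := by
  set M : Matrix (Fin n) (Fin n) ℝ := B * Bᵀ with hM
  set P : Matrix (Fin m) (Fin m) ℝ := Bᵀ * M⁻¹ * B with hP
  have hMt : Mᵀ = M := by rw [hM, Matrix.transpose_mul, Matrix.transpose_transpose]
  have hPt : Pᵀ = P := by
    rw [hP, Matrix.transpose_mul, Matrix.transpose_mul, Matrix.transpose_transpose,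
      Matrix.transpose_nonsing_inv, hMt, Matrix.mul_assoc]
  have hPP : P * P = P := by
    rw [hP]
    calc Bᵀ * M⁻¹ * B * (Bᵀ * M⁻¹ * B) = Bᵀ * M⁻¹ * (M * (M⁻¹ * B)) := by
          rw [hM]; simp only [Matrix.mul_assoc]
      _ = Bᵀ * M⁻¹ * B := by rw [Matrix.mul_nonsing_inv_cancel_left _ _ hdet]
  set p : Fin m → ℝ := P *ᵥ v with hp
  have hpp : p ⬝ᵥ p = p ⬝ᵥ v := by
    have h1 : P *ᵥ p = p := by rw [hp, Matrix.mulVec_mulVec, hPP]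
    calc p ⬝ᵥ p = (P *ᵥ v) ⬝ᵥ p := by rw [hp]
      _ = (v ᵥ* Pᵀ) ⬝ᵥ p := by rw [Matrix.vecMul_transpose]
      _ = (v ᵥ* P) ⬝ᵥ p := by rw [hPt]
      _ = v ⬝ᵥ (P *ᵥ p) := (Matrix.dotProduct_mulVec _ _ _).symm
      _ = v ⬝ᵥ p := by rw [h1]
      _ = p ⬝ᵥ v := dotProduct_comm _ _
  have hq : 0 ≤ (v - p) ⬝ᵥ (v - p) := dot_self_nonneg _
  have hexp : (v - p) ⬝ᵥ (v - p) = v ⬝ᵥ v - p ⬝ᵥ v := by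
    rw [sub_dotProduct, dotProduct_sub, dotProduct_sub, hpp,
      dotProduct_comm v p]
    ring
  have hle : p ⬝ᵥ p ≤ v ⬝ᵥ v := by rw [hpp]; linarith [hexp ▸ hq]
  exact Real.sqrt_le_sqrt hle

lemma gram_isUnit {n m : ℕ} (A : Matrix (Fin n) (Fin m) ℝ) (hrank : A.rank = n)
    (t : Fin m → ℝ) (ht : ∀ i, t i ≠ 0) :
    IsUnit ((A * diagInv t) * (A * diagInv t)ᵀ).det := by
  by_contra hcon
  have hdet0 : ((A * diagInv t) * (A * diagInv t)ᵀ).det = 0 := by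
    by_contra hne; exact hcon (isUnit_iff_ne_zero.mpr hne)
  obtain ⟨v, hv0, hMv⟩ := (Matrix.exists_mulVec_eq_zero_iff).mpr hdet0
  have h2 : ((A * diagInv t)ᵀ *ᵥ v) ⬝ᵥ ((A * diagInv t)ᵀ *ᵥ v) = 0 := by
    rw [← dot_gram, hMv, dotProduct_zero]
  have h3 : (A * diagInv t)ᵀ *ᵥ v = 0 := dotProduct_self_eq_zero.mp h2
  rw [Matrix.transpose_mul, diagInv, Matrix.diagonal_transpose, ← Matrix.mulVec_mulVec] at h3
  have h4 : Aᵀ *ᵥ v = 0 := by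
    funext i
    have hcomp := congrFun h3 i
    rw [Matrix.mulVec_diagonal] at hcomp
    have hti : (t i)⁻¹ ≠ 0 := inv_ne_zero (ht i)
    exact (mul_eq_zero.mp hcomp).resolve_left hti
  have hAt : (Aᵀ).rank = n := by rw [Matrix.rank_transpose, hrank]
  have h5 : Module.finrank ℝ (LinearMap.ker (Aᵀ).mulVecLin) = 0 := by
    have hrk := LinearMap.finrank_range_add_finrank_ker ((Aᵀ).mulVecLin)
    rw [Matrix.rank] at hAt
    rw [Module.finrank_pi] at hrk
    rw [hAt] at hrk
    simp at hrk
    rw [Matrix.mulVecLin_transpose, hrk]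
    exact finrank_bot ℝ _
  have hker : v ∈ LinearMap.ker (Aᵀ).mulVecLin := by
    rw [LinearMap.mem_ker, Matrix.mulVecLin_apply, h4]
  rw [Submodule.finrank_eq_zero.mp h5] at hker
  exact hv0 hker

lemma etaA_proj {n m : ℕ} (A : Matrix (Fin n) (Fin m) ℝ) (t : Fin m → ℝ) :
    etaA A t = eucNorm (((A * diagInv t)ᵀ * ((A * diagInv t) * (A * diagInv t)ᵀ)⁻¹ *
      (A * diagInv t)) *ᵥ fun _ => 1) := by
  rw [etaA]
  congr 2
  simp only [Matrix.transpose_mul, diagInv, Matrix.diagonal_transpose, Matrix.mul_assoc]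

end Auxiliary

set_option maxHeartbeats 1000000

/-- **Approximate Newton step towards the analytic center.** If `s = c - Aᵀ y > 0`,
`η = η_A(s) < 1`, `ε₃ = 1/(20(√m + 1))`, and `d_y` approximately solves the Newton system in
the sense that `‖d_y + (A S⁻² Aᵀ)⁻¹ A S⁻¹ 1‖_{A S⁻² Aᵀ} ≤ ε₃ η`, then for
`y⁺ = y + (1 - ε₃) d_y` and `s⁺ = c - Aᵀ y⁺` we have `s⁺ > 0` and
`η_A(s⁺) ≤ η² + η/20`. -/
theorem newton_step {n m : ℕ} (A : Matrix (Fin n) (Fin m) ℝ) (hrank : A.rank = n)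
    (c : Fin m → ℝ) (y : Fin n → ℝ) (s : Fin m → ℝ) (hsdef : s = c - Aᵀ *ᵥ y)
    (hs : ∀ i, 0 < s i)
    (η : ℝ) (hη : η = etaA A s) (hη1 : η < 1)
    (ε₃ : ℝ) (hε₃ : ε₃ = 1 / (20 * (Real.sqrt m + 1)))
    (dy : Fin n → ℝ)
    (hdy : mnorm (A * diagInv s * diagInv s * Aᵀ)
        (dy + (A * diagInv s * diagInv s * Aᵀ)⁻¹ *ᵥ (A *ᵥ (diagInv s *ᵥ fun _ => 1)))
      ≤ ε₃ * η) :
    (∀ i, 0 < (c - Aᵀ *ᵥ (y + (1 - ε₃) • dy)) i) ∧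
      etaA A (c - Aᵀ *ᵥ (y + (1 - ε₃) • dy)) ≤ η ^ 2 + η / 20 := by
  rcases Nat.eq_zero_or_pos m with hm0 | hm1
  · subst hm0
    refine ⟨fun i => i.elim0, ?_⟩
    have hzero : ∀ (t : Fin 0 → ℝ), etaA A t = 0 := fun t => by
      simp [etaA, eucNorm, dotProduct]
    rw [hzero, hη, hzero]
    norm_num
  · have hsne : ∀ i, s i ≠ 0 := fun i => ne_of_gt (hs i)
    obtain ⟨B, hBdef⟩ : ∃ B, B = A * diagInv s := ⟨_, rfl⟩
    have hBt : Bᵀ = diagInv s * Aᵀ := by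
      rw [hBdef, Matrix.transpose_mul, diagInv, Matrix.diagonal_transpose]
    have hMeq : A * diagInv s * diagInv s * Aᵀ = B * Bᵀ := by
      rw [hBt, hBdef]; exact Matrix.mul_assoc _ _ _
    have hdet : IsUnit (B * Bᵀ).det := by rw [hBdef]; exact gram_isUnit A hrank s hsne
    obtain ⟨hv, hhv⟩ : ∃ hv, hv = (Bᵀ * (B * Bᵀ)⁻¹ * B) *ᵥ (fun _ => 1 : Fin m → ℝ) := ⟨_, rfl⟩
    have hηh : η = eucNorm ((Bᵀ * (B * Bᵀ)⁻¹ * B) *ᵥ (fun _ => 1 : Fin m → ℝ)) := by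
      rw [hη, etaA_proj, ← hBdef]
    have hηhv : η = eucNorm hv := by rw [hηh, hhv]
    obtain ⟨e, hedef⟩ : ∃ e, e = dy + (B * Bᵀ)⁻¹ *ᵥ (B *ᵥ (fun _ => 1 : Fin m → ℝ)) := ⟨_, rfl⟩
    obtain ⟨u, hudef⟩ : ∃ u, u = Bᵀ *ᵥ e := ⟨_, rfl⟩
    have hu : eucNorm u ≤ ε₃ * η := by
      rw [hMeq] at hdy
      rw [Matrix.mulVec_mulVec _ A (diagInv s)] at hdy
      rw [← hBdef, ← hedef] at hdy
      rw [mnorm, dot_gram, ← hudef] at hdy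
      rw [eucNorm]
      exact hdy
    have hBdy : Bᵀ *ᵥ dy = u - hv := by
      have h1 : u = Bᵀ *ᵥ dy + hv := by
        rw [hudef, hedef, Matrix.mulVec_add, hhv]
        congr 1
        rw [Matrix.mulVec_mulVec, Matrix.mulVec_mulVec]
      rw [h1]; abel
    have hDAdy : diagInv s *ᵥ (Aᵀ *ᵥ dy) = u - hv := by
      rw [Matrix.mulVec_mulVec, ← hBt, hBdy]
    have hAdy : ∀ i, (Aᵀ *ᵥ dy) i = s i * (u i - hv i) := by
      intro i
      have h1 := congrFun hDAdy i
      rw [diagInv, Matrix.mulVec_diagonal] at h1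
      simp only [Pi.sub_apply] at h1
      calc (Aᵀ *ᵥ dy) i = s i * ((s i)⁻¹ * (Aᵀ *ᵥ dy) i) := by
            rw [← mul_assoc, mul_inv_cancel₀ (hsne i), one_mul]
        _ = s i * (u i - hv i) := by rw [h1]
    have hts : c - Aᵀ *ᵥ (y + (1 - ε₃) • dy) = s - (1 - ε₃) • (Aᵀ *ᵥ dy) := by
      rw [Matrix.mulVec_add, Matrix.mulVec_smul, hsdef]
      abel
    obtain ⟨d, hd⟩ : ∃ d : Fin m → ℝ, d = fun i => 1 + (1 - ε₃) * (hv i - u i) := ⟨_, rfl⟩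
    have hti : ∀ i, (c - Aᵀ *ᵥ (y + (1 - ε₃) • dy)) i = s i * d i := by
      intro i
      rw [hts]
      simp only [Pi.sub_apply, Pi.smul_apply, smul_eq_mul, hAdy i, hd]
      ring
    have hη0 : 0 ≤ η := by rw [hηhv]; exact eucNorm_nonneg hv
    have hsqm0 : (0:ℝ) ≤ Real.sqrt m := Real.sqrt_nonneg _
    have hsqm : (1:ℝ) ≤ Real.sqrt m := by
      rw [show (1:ℝ) = Real.sqrt 1 from (Real.sqrt_one).symm]
      apply Real.sqrt_le_sqrt
      have h1m : (1:ℕ) ≤ m := hm1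
      exact_mod_cast h1m
    have hε₃pos : 0 < ε₃ := by rw [hε₃]; positivity
    have hε₃le : ε₃ ≤ 1 / 40 := by
      rw [hε₃, div_le_div_iff₀ (by linarith) (by norm_num)]
      linarith
    have habsh : ∀ i, |hv i| ≤ η := fun i => by rw [hηhv]; exact abs_le_eucNorm hv i
    have habsu : ∀ i, |u i| ≤ ε₃ * η := fun i => le_trans (abs_le_eucNorm u i) hu
    have hdpos : ∀ i, 0 < d i := by
      intro i
      obtain ⟨h1, h2⟩ := abs_le.mp (habsh i)
      obtain ⟨h3, h4⟩ := abs_le.mp (habsu i)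
      rw [hd]
      show 0 < 1 + (1 - ε₃) * (hv i - u i)
      nlinarith [mul_nonneg (show (0:ℝ) ≤ 1 - ε₃ by linarith) (show (0:ℝ) ≤ hv i + η by linarith),
        mul_nonneg (show (0:ℝ) ≤ 1 - ε₃ by linarith) (show (0:ℝ) ≤ ε₃ * η - u i by linarith),
        mul_nonneg (mul_nonneg hε₃pos.le hε₃pos.le) hη0]
    have hpos : ∀ i, 0 < (c - Aᵀ *ᵥ (y + (1 - ε₃) • dy)) i := fun i => by
      rw [hti i]; exact mul_pos (hs i) (hdpos i)
    refine ⟨hpos, ?_⟩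
    obtain ⟨t, htdef⟩ : ∃ t, t = c - Aᵀ *ᵥ (y + (1 - ε₃) • dy) := ⟨_, rfl⟩
    rw [← htdef]
    have htpos : ∀ i, 0 < t i := fun i => by rw [htdef]; exact hpos i
    have htne : ∀ i, t i ≠ 0 := fun i => ne_of_gt (htpos i)
    have hts' : ∀ i, t i = s i * d i := fun i => by rw [htdef]; exact hti i
    obtain ⟨C, hCdef⟩ : ∃ C, C = A * diagInv t := ⟨_, rfl⟩
    have hdetC : IsUnit (C * Cᵀ).det := by rw [hCdef]; exact gram_isUnit A hrank t htne
    have hηt : etaA A t = eucNorm ((Cᵀ * (C * Cᵀ)⁻¹ * C) *ᵥ (fun _ => 1 : Fin m → ℝ)) := by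
      rw [etaA_proj, ← hCdef]
    obtain ⟨w, hw⟩ : ∃ w : Fin m → ℝ, w = fun i => d i * (1 - hv i) := ⟨_, rfl⟩
    have hCw : C *ᵥ w = 0 := by
      have h1 : diagInv t *ᵥ w = diagInv s *ᵥ ((fun _ => 1 : Fin m → ℝ) - hv) := by
        funext i
        rw [diagInv, diagInv, Matrix.mulVec_diagonal, Matrix.mulVec_diagonal]
        simp only [Pi.sub_apply]
        rw [hts' i, hw]
        have hd0 : d i ≠ 0 := ne_of_gt (hdpos i)
        have hs0 : s i ≠ 0 := hsne i
        field_simp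
      have hBB : B * (Bᵀ * (B * Bᵀ)⁻¹ * B) = B := by
        calc B * (Bᵀ * (B * Bᵀ)⁻¹ * B) = (B * Bᵀ) * ((B * Bᵀ)⁻¹ * B) := by
              simp only [Matrix.mul_assoc]
          _ = B := Matrix.mul_nonsing_inv_cancel_left _ _ hdet
      calc C *ᵥ w = A *ᵥ (diagInv t *ᵥ w) := by rw [hCdef, ← Matrix.mulVec_mulVec]
        _ = A *ᵥ (diagInv s *ᵥ ((fun _ => 1 : Fin m → ℝ) - hv)) := by rw [h1]
        _ = B *ᵥ ((fun _ => 1 : Fin m → ℝ) - hv) := by rw [Matrix.mulVec_mulVec, ← hBdef]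
        _ = B *ᵥ (fun _ => 1 : Fin m → ℝ) - B *ᵥ hv := Matrix.mulVec_sub _ _ _
        _ = 0 := by rw [hhv, Matrix.mulVec_mulVec, hBB, sub_self]
    have hproj : etaA A t ≤ eucNorm ((fun _ => 1 : Fin m → ℝ) - w) := by
      rw [hηt]
      have h2 : (Cᵀ * (C * Cᵀ)⁻¹ * C) *ᵥ (fun _ => 1 : Fin m → ℝ)
          = (Cᵀ * (C * Cᵀ)⁻¹ * C) *ᵥ ((fun _ => 1 : Fin m → ℝ) - w) := by
        rw [Matrix.mulVec_sub]
        have h3 : (Cᵀ * (C * Cᵀ)⁻¹ * C) *ᵥ w = 0 := by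
          rw [← Matrix.mulVec_mulVec, ← Matrix.mulVec_mulVec, hCw, Matrix.mulVec_zero,
            Matrix.mulVec_zero]
        rw [h3, sub_zero]
      rw [h2]
      exact proj_contract C hdetC _
    have hdecomp : (fun _ => 1 : Fin m → ℝ) - w
        = ε₃ • hv + (1 - ε₃) • u + (1 - ε₃) • (fun i => hv i * hv i)
          + (-(1 - ε₃)) • (fun i => u i * hv i) := by
      funext i
      simp only [Pi.sub_apply, Pi.add_apply, Pi.smul_apply, smul_eq_mul, hw, hd]
      ring
    have hε₃1 : (0:ℝ) < 1 - ε₃ := by linarith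
    have e1 : eucNorm (ε₃ • hv) = ε₃ * η := by
      rw [eucNorm_smul, abs_of_pos hε₃pos, hηhv]
    have e2 : eucNorm ((1 - ε₃) • u) ≤ (1 - ε₃) * (ε₃ * η) := by
      rw [eucNorm_smul, abs_of_pos hε₃1]
      exact mul_le_mul_of_nonneg_left hu (by linarith)
    have e3 : eucNorm ((1 - ε₃) • fun i => hv i * hv i) ≤ (1 - ε₃) * (η * η) := by
      rw [eucNorm_smul, abs_of_pos hε₃1]
      refine mul_le_mul_of_nonneg_left ?_ (by linarith)
      calc eucNorm (fun i => hv i * hv i) ≤ eucNorm hv * eucNorm hv := eucNorm_mul_le _ _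
        _ = η * η := by rw [← hηhv]
    have e4 : eucNorm ((-(1 - ε₃)) • fun i => u i * hv i) ≤ (1 - ε₃) * ((ε₃ * η) * η) := by
      rw [eucNorm_smul, abs_neg, abs_of_pos hε₃1]
      refine mul_le_mul_of_nonneg_left ?_ (by linarith)
      calc eucNorm (fun i => u i * hv i) ≤ eucNorm u * eucNorm hv := eucNorm_mul_le _ _
        _ ≤ (ε₃ * η) * eucNorm hv := mul_le_mul_of_nonneg_right hu (eucNorm_nonneg hv)
        _ = (ε₃ * η) * η := by rw [← hηhv]
    have hb1 : eucNorm ((fun _ => 1 : Fin m → ℝ) - w)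
        ≤ ε₃ * η + (1 - ε₃) * (ε₃ * η) + (1 - ε₃) * (η * η) + (1 - ε₃) * ((ε₃ * η) * η) := by
      rw [hdecomp]
      have t1 := eucNorm_add_le
        (ε₃ • hv + (1 - ε₃) • u + (1 - ε₃) • (fun i => hv i * hv i))
        ((-(1 - ε₃)) • fun i => u i * hv i)
      have t2 := eucNorm_add_le (ε₃ • hv + (1 - ε₃) • u)
        ((1 - ε₃) • (fun i => hv i * hv i))
      have t3 := eucNorm_add_le (ε₃ • hv) ((1 - ε₃) • u)
      linarith
    have hfinal : ε₃ * η + (1 - ε₃) * (ε₃ * η) + (1 - ε₃) * (η * η) + (1 - ε₃) * ((ε₃ * η) * η)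
        ≤ η ^ 2 + η / 20 := by
      nlinarith [mul_nonneg (show (0:ℝ) ≤ 1/40 - ε₃ by linarith) hη0,
        mul_nonneg (mul_nonneg hε₃pos.le hε₃pos.le) (mul_nonneg hη0 hη0),
        mul_nonneg (mul_nonneg hε₃pos.le hε₃pos.le) hη0,
        mul_nonneg hε₃pos.le hη0, mul_nonneg hη0 hη0, hη1, hη0, hε₃pos, hε₃le]
    linarith
end

section
/- Let A be an n×m real matrix, b ∈ ℝⁿ, s ∈ ℝ^m with all entries positive, and s_gap > 0. Let Ã = [A, −b·1_mᵀ] (an n×2m matrix) and s̃ = (s, s_gap·1_m) ∈ ℝ^{2m}, and assume Ã·S̃^{-2}·Ãᵀ is positive definite, where S̃ = diag(s̃). Then the vector x = (s_gap/m)·S^{-1}1_m, where S = diag(s), satisfies ‖Ax − b‖_{(ÃS̃^{-2}Ãᵀ)^{-1}} = (s_gap/m)·η_{Ã}(s̃). In particular, if η_{Ã}(s̃) = 0 then Ax = b. -/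
open Matrix

open Matrix

/-- For `Ã = [A, -b 1ᵀ]` and `s̃ = (s, s_gap 1)`, the vector `x = (s_gap / m) S⁻¹ 1`
satisfies `‖A x - b‖_{(Ã S̃⁻² Ãᵀ)⁻¹} = (s_gap / m) η_{Ã}(s̃)`; in particular `A x = b`
whenever `η_{Ã}(s̃) = 0`. -/
theorem primal_from_central_path {n m : ℕ} (A : Matrix (Fin n) (Fin m) ℝ)
    (b : Fin n → ℝ) (s : Fin m → ℝ) (hs : ∀ i, 0 < s i) (sgap : ℝ) (hsgap : 0 < sgap)
    (Atil : Matrix (Fin n) (Fin m ⊕ Fin m) ℝ)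
    (hAtil : Atil = Matrix.fromCols A (Matrix.of fun i (_ : Fin m) => -b i))
    (stil : Fin m ⊕ Fin m → ℝ) (hstil : stil = Sum.elim s fun _ => sgap)
    (hPD : (Atil * diagInv stil * diagInv stil * Atilᵀ).PosDef)
    (x : Fin m → ℝ) (hx : x = fun i => (sgap / m) * (s i)⁻¹) :
    mnorm (Atil * diagInv stil * diagInv stil * Atilᵀ)⁻¹ (A *ᵥ x - b) =
        (sgap / m) * etaA Atil stil ∧
      (etaA Atil stil = 0 → A *ᵥ x = b) := by
  have hdet : IsUnit (Atil * diagInv stil * diagInv stil * Atilᵀ).det :=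
    isUnit_iff_ne_zero.mpr hPD.det_pos.ne'
  set D := diagInv stil with hD
  set M := Atil * D * D * Atilᵀ with hM
  rcases Nat.eq_zero_or_pos m with hm | hm
  · -- degenerate case m = 0
    subst hm
    have hM0 : M = 0 := by
      ext i j
      rw [hM]
      simp [Matrix.mul_apply]
    have hn : IsEmpty (Fin n) := by
      by_contra h
      rw [not_isEmpty_iff] at h
      have := hPD.det_pos
      rw [hM0, Matrix.det_zero] at this
      exact lt_irrefl 0 this
    constructor
    · have h1 : (A *ᵥ x - b) = 0 := funext fun i => (hn.false i).elim
      have h2 : (sgap / ((0:ℕ):ℝ)) = 0 := by simp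
      rw [h1, h2, zero_mul, mnorm]
      simp
    · intro _
      funext i; exact (hn.false i).elim
  · have hm' : (m:ℝ) ≠ 0 := Nat.cast_ne_zero.mpr hm.ne'
    set c := sgap / (m:ℝ) with hc
    have hc0 : 0 ≤ c := le_of_lt (div_pos hsgap (by exact_mod_cast hm))
    have hmd : Dᵀ = D := by rw [hD, diagInv]; exact Matrix.diagonal_transpose _
    have hMt : Mᵀ = M := by
      rw [hM]
      simp only [Matrix.transpose_mul, Matrix.transpose_transpose, hmd, Matrix.mul_assoc]
    have hMM : M * M⁻¹ = 1 := Matrix.mul_nonsing_inv _ hdet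
    have hMMl : M⁻¹ * M = 1 := Matrix.nonsing_inv_mul _ hdet
    have hMit : M⁻¹ᵀ = M⁻¹ := by rw [Matrix.transpose_nonsing_inv, hMt]
    set P := D * Atilᵀ * M⁻¹ * Atil * D with hP
    have hPt : Pᵀ = P := by
      rw [hP]
      simp only [Matrix.transpose_mul, Matrix.transpose_transpose, hmd, hMit,
        Matrix.mul_assoc]
    have hPP : P * P = P := by
      have h1 : P * P = D * Atilᵀ * M⁻¹ * (M * (M⁻¹ * (Atil * D))) := by
        rw [hP, hM]; simp only [Matrix.mul_assoc]
      rw [h1, ← Matrix.mul_assoc M, hMM, Matrix.one_mul, hP]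
      simp only [Matrix.mul_assoc]
    set o : Fin m ⊕ Fin m → ℝ := fun _ => 1 with ho
    have hq1 : (P *ᵥ o) ⬝ᵥ (P *ᵥ o) = o ⬝ᵥ (P *ᵥ o) := by
      rw [Matrix.dotProduct_mulVec, ← Matrix.mulVec_transpose, hPt,
        Matrix.mulVec_mulVec, hPP, dotProduct_comm]
    have hDo : D *ᵥ o = Sum.elim (fun i => (s i)⁻¹) (fun _ => sgap⁻¹) := by
      funext j
      rw [hD, diagInv]
      cases j <;> simp [Matrix.mulVec_diagonal, hstil, ho]
    have hB : (Matrix.of fun i (_ : Fin m) => -b i) *ᵥ (fun _ => sgap⁻¹) =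
        (-((m:ℝ) * sgap⁻¹)) • b := by
      funext i
      simp [Matrix.mulVec, dotProduct, Finset.sum_const]
      ring
    have hcoef : c * ((m:ℝ) * sgap⁻¹) = 1 := by
      rw [hc]; field_simp
    have hy : A *ᵥ x - b = c • ((Atil * D) *ᵥ o) := by
      rw [← Matrix.mulVec_mulVec, hDo, hAtil, Matrix.fromCols_mulVec_sumElim, hB]
      have hxs : x = c • (fun j => (s j)⁻¹) := by
        funext j; simp [hx, hc]
      rw [hxs, Matrix.mulVec_smul, smul_add, smul_smul, mul_neg, hcoef, neg_one_smul]
      abel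
    have hyq : ((Atil * D) *ᵥ o) ⬝ᵥ (M⁻¹ *ᵥ ((Atil * D) *ᵥ o)) = o ⬝ᵥ (P *ᵥ o) := by
      rw [Matrix.mulVec_mulVec, Matrix.dotProduct_mulVec, ← Matrix.mulVec_transpose,
        Matrix.mulVec_mulVec]
      have hPe : (M⁻¹ * (Atil * D))ᵀ * (Atil * D) = P := by
        simp only [Matrix.transpose_mul, hmd, hMit, hP, Matrix.mul_assoc]
      rw [hPe, dotProduct_comm]
    have heta : etaA Atil stil = Real.sqrt (o ⬝ᵥ (P *ᵥ o)) := by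
      rw [etaA, eucNorm, ← hD, ← hM, ← hP, ← ho, hq1]
    have hq0 : 0 ≤ o ⬝ᵥ (P *ᵥ o) := by
      rw [← hyq]
      simpa using hPD.inv.posSemidef.dotProduct_mulVec_nonneg ((Atil * D) *ᵥ o)
    constructor
    · rw [mnorm, hy, heta, Matrix.mulVec_smul, smul_dotProduct,
        dotProduct_smul, hyq, smul_eq_mul, smul_eq_mul,
        show c * (c * (o ⬝ᵥ P *ᵥ o)) = c ^ 2 * (o ⬝ᵥ P *ᵥ o) by ring,
        Real.sqrt_mul (sq_nonneg c), Real.sqrt_sq hc0]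
    · intro heq
      rw [heta, Real.sqrt_eq_zero hq0] at heq
      have hy0 : (Atil * D) *ᵥ o = 0 := by
        by_contra h
        have := hPD.inv.dotProduct_mulVec_pos h
        simp only [star_trivial] at this
        rw [hyq] at this
        exact lt_irrefl 0 (heq ▸ this)
      have : A *ᵥ x - b = 0 := by rw [hy, hy0, smul_zero]
      exact sub_eq_zero.mp this
end

section
/- Let A be an n×m real matrix with m ≥ 1, b ∈ ℝⁿ, s ∈ ℝ^m with all entries positive, and s_gap > 0, and let Ã = [A, −b·1_mᵀ], assumed to have full row rank. Suppose η_{Ã}((s, s_gap·1_m)) ≤ 1/10. Let s'_gap = (1 − 1/(10√m))·s_gap. Then s'_gap > 0 and η_{Ã}((s, s'_gap·1_m)) < 21/100. -/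
open Matrix

open Matrix

lemma dot_mulVecT {κ ι : Type*} [Fintype κ] [Fintype ι] (M : Matrix κ ι ℝ)
    (x : ι → ℝ) (y : κ → ℝ) : x ⬝ᵥ (Mᵀ *ᵥ y) = (M *ᵥ x) ⬝ᵥ y := by
  rw [Matrix.dotProduct_mulVec, Matrix.vecMul_transpose, dotProduct_comm]

lemma gram_isUnit_s7 {n : ℕ} {ι : Type*} [Fintype ι] [DecidableEq ι]
    (M : Matrix (Fin n) ι ℝ) (h : M.rank = n) : IsUnit (M * Mᵀ) := by
  have h1 : (M * Mᵀ).rank = n := by rw [Matrix.rank_self_mul_transpose, h]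
  rw [← Matrix.mulVec_surjective_iff_isUnit]
  have hr : LinearMap.range (M * Mᵀ).mulVecLin = ⊤ := by
    apply Submodule.eq_top_of_finrank_eq
    rw [← Matrix.rank, h1, Module.finrank_fintype_fun_eq_card, Fintype.card_fin]
  intro v
  obtain ⟨w, hw⟩ := LinearMap.range_eq_top.mp hr v
  exact ⟨w, by rw [← hw]; rfl⟩

lemma proj_facts {n : ℕ} {ι : Type*} [Fintype ι] [DecidableEq ι]
    (M : Matrix (Fin n) ι ℝ) (h : IsUnit (M * Mᵀ)) (w : ι → ℝ) :
    ((Mᵀ * (M * Mᵀ)⁻¹ * M) *ᵥ w) ⬝ᵥ ((Mᵀ * (M * Mᵀ)⁻¹ * M) *ᵥ w)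
      = w ⬝ᵥ ((Mᵀ * (M * Mᵀ)⁻¹ * M) *ᵥ w) ∧
    M *ᵥ ((Mᵀ * (M * Mᵀ)⁻¹ * M) *ᵥ w) = M *ᵥ w := by
  set P := Mᵀ * (M * Mᵀ)⁻¹ * M with hP
  have hdet : IsUnit (M * Mᵀ).det := (Matrix.isUnit_iff_isUnit_det _).mp h
  have hGi : (M * Mᵀ) * (M * Mᵀ)⁻¹ = 1 := Matrix.mul_nonsing_inv _ hdet
  have key : M * P = M := by
    have e : M * P = (M * Mᵀ) * (M * Mᵀ)⁻¹ * M := by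
      simp only [hP, Matrix.mul_assoc]
    rw [e, hGi, Matrix.one_mul]
  have hPP : P * P = P := by
    have e : P * P = Mᵀ * (M * Mᵀ)⁻¹ * (M * P) := by
      simp only [hP, Matrix.mul_assoc]
    rw [e, key]
  have hPT : Pᵀ = P := by
    have hGT : ((M * Mᵀ)⁻¹)ᵀ = (M * Mᵀ)⁻¹ := by
      rw [Matrix.transpose_nonsing_inv, Matrix.transpose_mul, Matrix.transpose_transpose]
    simp only [hP, Matrix.transpose_mul, Matrix.transpose_transpose, hGT, Matrix.mul_assoc]
  constructor
  · calc (P *ᵥ w) ⬝ᵥ (P *ᵥ w) = w ⬝ᵥ (Pᵀ *ᵥ (P *ᵥ w)) := (dot_mulVecT P w (P *ᵥ w)).symm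
      _ = w ⬝ᵥ ((Pᵀ * P) *ᵥ w) := by rw [Matrix.mulVec_mulVec]
      _ = w ⬝ᵥ (P *ᵥ w) := by rw [hPT, hPP]
  · rw [Matrix.mulVec_mulVec, key]

lemma le_of_sq_le_sq' {x a : ℝ} (h : x ^ 2 ≤ a ^ 2) (ha : 0 ≤ a) : x ≤ a := by
  nlinarith

lemma etaA_matrix_eq {n : ℕ} {ι : Type*} [Fintype ι] [DecidableEq ι]
    (B : Matrix (Fin n) ι ℝ) (r : ι → ℝ) :
    diagInv r * Bᵀ * (B * diagInv r * diagInv r * Bᵀ)⁻¹ * B * diagInv r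
      = (B * diagInv r)ᵀ * ((B * diagInv r) * (B * diagInv r)ᵀ)⁻¹ * (B * diagInv r) := by
  have hT : (B * diagInv r)ᵀ = diagInv r * Bᵀ := by
    rw [Matrix.transpose_mul]
    congr 1
    exact Matrix.diagonal_transpose _
  rw [hT]
  simp only [Matrix.mul_assoc]


set_option maxHeartbeats 1000000 in
/-- **Shifting the objective bound.** If `Ã = [A, -b 1ᵀ]` has full row rank and
`η_{Ã}((s, s_gap 1)) ≤ 1/10`, then `s'_gap = (1 - 1/(10√m)) s_gap` is positive and
`η_{Ã}((s, s'_gap 1)) < 21/100`. -/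
theorem shift_eta_bound {n m : ℕ} (hm : 1 ≤ m) (A : Matrix (Fin n) (Fin m) ℝ)
    (b : Fin n → ℝ) (s : Fin m → ℝ) (hs : ∀ i, 0 < s i) (sgap : ℝ) (hsgap : 0 < sgap)
    (Atil : Matrix (Fin n) (Fin m ⊕ Fin m) ℝ)
    (hAtil : Atil = Matrix.fromCols A (Matrix.of fun i (_ : Fin m) => -b i))
    (hrank : Atil.rank = n)
    (hη : etaA Atil (Sum.elim s fun _ => sgap) ≤ 1 / 10)
    (sgap' : ℝ) (hsgap' : sgap' = (1 - 1 / (10 * Real.sqrt m)) * sgap) :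
    0 < sgap' ∧ etaA Atil (Sum.elim s fun _ => sgap') < 21 / 100 := by
  classical
  have hm' : (1 : ℝ) ≤ (m : ℝ) := by exact_mod_cast hm
  set sm := Real.sqrt (m : ℝ) with hsmdef
  have hsm1 : 1 ≤ sm := Real.one_le_sqrt.mpr hm'
  have hsm0 : 0 < sm := lt_of_lt_of_le one_pos hsm1
  set α : ℝ := 1 - 1 / (10 * sm) with hαdef
  have hfrac : 1 / (10 * sm) ≤ 1 / 10 := by
    rw [div_le_div_iff₀ (by positivity) (by norm_num)]
    nlinarith
  have hα0 : 0 < α := by rw [hαdef]; nlinarith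
  have hα1 : α ≤ 1 := by
    rw [hαdef]
    have : 0 ≤ 1 / (10 * sm) := by positivity
    linarith
  have hαsq : α ^ 2 ≤ 1 := by nlinarith
  have hkey : (1 - α) * sm = 1 / 10 := by
    rw [hαdef]
    field_simp
    ring
  have hsgap'pos : 0 < sgap' := by rw [hsgap']; exact mul_pos hα0 hsgap
  refine ⟨hsgap'pos, ?_⟩
  set t : Fin m ⊕ Fin m → ℝ := Sum.elim s fun _ => sgap with htdef
  set t' : Fin m ⊕ Fin m → ℝ := Sum.elim s fun _ => sgap' with ht'def
  have htpos : ∀ i, 0 < t i := by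
    rintro (i | i)
    · simp only [htdef, Sum.elim_inl]; exact hs i
    · simp only [htdef, Sum.elim_inr]; exact hsgap
  have ht'pos : ∀ i, 0 < t' i := by
    rintro (i | i)
    · simp only [ht'def, Sum.elim_inl]; exact hs i
    · simp only [ht'def, Sum.elim_inr]; exact hsgap'pos
  have hdetInv : ∀ r : Fin m ⊕ Fin m → ℝ, (∀ i, 0 < r i) → IsUnit (diagInv r).det := by
    intro r hr
    rw [diagInv, Matrix.det_diagonal, isUnit_iff_ne_zero]
    exact Finset.prod_ne_zero_iff.mpr fun i _ => inv_ne_zero (hr i).ne'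
  set M : Matrix (Fin n) (Fin m ⊕ Fin m) ℝ := Atil * diagInv t with hMdef
  set M' : Matrix (Fin n) (Fin m ⊕ Fin m) ℝ := Atil * diagInv t' with hM'def
  have hrankM : M.rank = n := by
    rw [hMdef, Matrix.rank_mul_eq_left_of_isUnit_det _ _ (hdetInv t htpos), hrank]
  have hrankM' : M'.rank = n := by
    rw [hM'def, Matrix.rank_mul_eq_left_of_isUnit_det _ _ (hdetInv t' ht'pos), hrank]
  have hGM : IsUnit (M * Mᵀ) := gram_isUnit_s7 M hrankM
  have hGM' : IsUnit (M' * M'ᵀ) := gram_isUnit_s7 M' hrankM'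
  set one : Fin m ⊕ Fin m → ℝ := fun _ => 1 with honedef
  set u : Fin m ⊕ Fin m → ℝ := (Mᵀ * (M * Mᵀ)⁻¹ * M) *ᵥ one with hudef
  set u' : Fin m ⊕ Fin m → ℝ := (M'ᵀ * (M' * M'ᵀ)⁻¹ * M') *ᵥ one with hu'def
  have hηu : Real.sqrt (u ⬝ᵥ u) ≤ 1 / 10 := by
    have h := hη
    rw [etaA, eucNorm, etaA_matrix_eq, ← hMdef, ← honedef, ← hudef] at h
    exact h
  rw [etaA, eucNorm, etaA_matrix_eq, ← hM'def, ← honedef, ← hu'def]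
  -- projection facts
  obtain ⟨hu'self, -⟩ := proj_facts M' hGM' one
  obtain ⟨-, hMu⟩ := proj_facts M hGM one
  rw [← hu'def] at hu'self
  rw [← hudef] at hMu
  -- multiplicative relation between the two scalings
  set dinv : Fin m ⊕ Fin m → ℝ := Sum.elim (fun _ : Fin m => (1 : ℝ)) fun _ => α⁻¹ with hdinvdef
  have hdiag : diagInv t' = diagInv t * Matrix.diagonal dinv := by
    simp only [diagInv, Matrix.diagonal_mul_diagonal]
    refine congrArg Matrix.diagonal ?_
    funext i
    cases i with
    | inl k => simp [htdef, ht'def, hdinvdef]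
    | inr k =>
      simp only [htdef, ht'def, hdinvdef, Pi.mul_apply, Sum.elim_inr]
      rw [hsgap', mul_inv, mul_comm]
  have hM'M : M' = M * Matrix.diagonal dinv := by
    rw [hM'def, hdiag, hMdef, Matrix.mul_assoc]
  set y : Fin n → ℝ := (M' * M'ᵀ)⁻¹ *ᵥ (M' *ᵥ one) with hydef
  set v : Fin m ⊕ Fin m → ℝ := Mᵀ *ᵥ y with hvdef
  have hu'v : ∀ i, u' i = dinv i * v i := by
    have hy2 : y = ((M' * M'ᵀ)⁻¹ * M') *ᵥ one := by rw [hydef, Matrix.mulVec_mulVec]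
    have e1 : u' = (Matrix.diagonal dinv * Mᵀ) *ᵥ y := by
      calc u' = (M'ᵀ * ((M' * M'ᵀ)⁻¹ * M')) *ᵥ one := by rw [hu'def, Matrix.mul_assoc]
        _ = M'ᵀ *ᵥ (((M' * M'ᵀ)⁻¹ * M') *ᵥ one) := (Matrix.mulVec_mulVec _ _ _).symm
        _ = M'ᵀ *ᵥ y := by rw [hy2]
        _ = (Matrix.diagonal dinv * Mᵀ) *ᵥ y := by
              rw [hM'M, Matrix.transpose_mul, Matrix.diagonal_transpose]
    have e2 : u' = Matrix.diagonal dinv *ᵥ v := by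
      rw [e1, ← Matrix.mulVec_mulVec, ← hvdef]
    intro i
    rw [e2]
    exact Matrix.mulVec_diagonal _ _ _
  have hone_v : one ⬝ᵥ v = u ⬝ᵥ v := by
    rw [hvdef, dot_mulVecT M one y, ← hMu, ← dot_mulVecT M u y]
  clear_value sm α t t' M M' one u u' dinv y v
  -- now the numeric estimates
  set Q : ℝ := u' ⬝ᵥ u' with hQdef
  have hQ0 : 0 ≤ Q := by
    rw [hQdef, dotProduct]
    exact Finset.sum_nonneg fun i _ => mul_self_nonneg _
  set N : ℝ := Real.sqrt Q with hNdef
  have hN0 : 0 ≤ N := Real.sqrt_nonneg _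
  have hN2 : N ^ 2 = Q := Real.sq_sqrt hQ0
  clear_value Q N
  have hu2 : u ⬝ᵥ u ≤ 1 / 100 := by
    have h0 : 0 ≤ u ⬝ᵥ u := by
      rw [dotProduct]; exact Finset.sum_nonneg fun i _ => mul_self_nonneg _
    nlinarith [Real.sq_sqrt h0, Real.sqrt_nonneg (u ⬝ᵥ u)]
  -- split sums
  have hsum_split : ∀ f : Fin m ⊕ Fin m → ℝ,
      ∑ i, f i = (∑ k : Fin m, f (Sum.inl k)) + ∑ k : Fin m, f (Sum.inr k) := fun f =>
    Fintype.sum_sum_type f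
  have hvinl : ∀ k : Fin m, u' (Sum.inl k) = v (Sum.inl k) := by
    intro k; rw [hu'v]; simp [hdinvdef]
  have hvinr : ∀ k : Fin m, v (Sum.inr k) = α * u' (Sum.inr k) := by
    intro k
    rw [hu'v (Sum.inr k)]
    simp only [hdinvdef, Sum.elim_inr]
    rw [← mul_assoc, mul_inv_cancel₀ hα0.ne', one_mul]
  -- Step A : Q = u ⬝ᵥ v + (α⁻¹ - 1) * ∑ v (inr)
  have hStepA : Q = u ⬝ᵥ v + (α⁻¹ - 1) * ∑ k : Fin m, v (Sum.inr k) := by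
    have e1 : Q = ∑ i, u' i := by
      rw [hu'self]
      simp only [dotProduct, honedef, one_mul]
    have e2 : u ⬝ᵥ v = ∑ i, v i := by
      rw [← hone_v]
      simp only [dotProduct, honedef, one_mul]
    have e3 : ∑ k : Fin m, u' (Sum.inl k) = ∑ k : Fin m, v (Sum.inl k) :=
      Finset.sum_congr rfl fun k _ => hvinl k
    have e4 : ∑ k : Fin m, u' (Sum.inr k) = α⁻¹ * ∑ k : Fin m, v (Sum.inr k) := by
      rw [Finset.mul_sum]
      refine Finset.sum_congr rfl fun k _ => ?_
      rw [hu'v (Sum.inr k)]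
      simp [hdinvdef]
    rw [e1, e2, hsum_split u', hsum_split v, e3, e4]
    ring
  -- sums of squares
  have hQsum : Q = (∑ k : Fin m, u' (Sum.inl k) ^ 2) + ∑ k : Fin m, u' (Sum.inr k) ^ 2 := by
    rw [hQdef, dotProduct, hsum_split (fun i => u' i * u' i)]
    simp [sq]
  -- Step B : v ⬝ᵥ v ≤ Q
  have hStepB : v ⬝ᵥ v ≤ Q := by
    have hvv : v ⬝ᵥ v = (∑ k : Fin m, v (Sum.inl k) ^ 2) + ∑ k : Fin m, v (Sum.inr k) ^ 2 := by
      rw [dotProduct, hsum_split (fun i => v i * v i)]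
      simp [sq]
    rw [hvv, hQsum]
    refine add_le_add (le_of_eq ?_) (Finset.sum_le_sum fun k _ => ?_)
    · exact Finset.sum_congr rfl fun k _ => by rw [hvinl k]
    · rw [hvinr k]
      calc (α * u' (Sum.inr k)) ^ 2 = α ^ 2 * u' (Sum.inr k) ^ 2 := by ring
        _ ≤ 1 * u' (Sum.inr k) ^ 2 :=
            mul_le_mul_of_nonneg_right hαsq (sq_nonneg _)
        _ = u' (Sum.inr k) ^ 2 := one_mul _
  have hvv0 : 0 ≤ v ⬝ᵥ v := by
    rw [dotProduct]; exact Finset.sum_nonneg fun i _ => mul_self_nonneg _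
  -- Step C : u ⬝ᵥ v ≤ (1/10) * N
  have hStepC : u ⬝ᵥ v ≤ 1 / 10 * N := by
    have hCS : (u ⬝ᵥ v) ^ 2 ≤ (u ⬝ᵥ u) * (v ⬝ᵥ v) := by
      have h := Finset.sum_mul_sq_le_sq_mul_sq Finset.univ u v
      simpa [dotProduct, sq] using h
    have h2 : (u ⬝ᵥ v) ^ 2 ≤ (1 / 10 * N) ^ 2 := by
      have hQN : (1 / 10 * N) ^ 2 = 1 / 100 * Q := by rw [mul_pow, hN2]; ring
      calc (u ⬝ᵥ v) ^ 2 ≤ (u ⬝ᵥ u) * (v ⬝ᵥ v) := hCS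
        _ ≤ 1 / 100 * Q := by nlinarith [hu2, hStepB, hvv0]
        _ = (1 / 10 * N) ^ 2 := hQN.symm
    exact le_of_sq_le_sq' h2 (by positivity)
  -- Step D : ∑ v (inr) ≤ α * sm * N
  have hSinQ : ∑ k : Fin m, u' (Sum.inr k) ^ 2 ≤ Q := by
    rw [hQsum]
    have : 0 ≤ ∑ k : Fin m, u' (Sum.inl k) ^ 2 :=
      Finset.sum_nonneg fun k _ => sq_nonneg _
    linarith
  have hSin : ∑ k : Fin m, u' (Sum.inr k) ≤ sm * N := by
    refine le_of_sq_le_sq' ?_ (by positivity)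
    have hCS2 : (∑ k : Fin m, u' (Sum.inr k)) ^ 2 ≤ (m : ℝ) * ∑ k : Fin m, u' (Sum.inr k) ^ 2 := by
      have h := sq_sum_le_card_mul_sum_sq (s := (Finset.univ : Finset (Fin m)))
        (f := fun k => u' (Sum.inr k))
      simpa using h
    have hsm2 : sm ^ 2 = (m : ℝ) := by rw [hsmdef]; exact Real.sq_sqrt (by positivity)
    calc (∑ k : Fin m, u' (Sum.inr k)) ^ 2 ≤ (m : ℝ) * ∑ k : Fin m, u' (Sum.inr k) ^ 2 := hCS2
      _ ≤ (m : ℝ) * Q := by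
          have hm0 : (0:ℝ) ≤ (m : ℝ) := by positivity
          exact mul_le_mul_of_nonneg_left hSinQ hm0
      _ = (sm * N) ^ 2 := by rw [mul_pow, hsm2, hN2]
  have hStepD : ∑ k : Fin m, v (Sum.inr k) ≤ α * (sm * N) := by
    have e : ∑ k : Fin m, v (Sum.inr k) = α * ∑ k : Fin m, u' (Sum.inr k) := by
      rw [Finset.mul_sum]
      exact Finset.sum_congr rfl fun k _ => hvinr k
    rw [e]
    exact mul_le_mul_of_nonneg_left hSin hα0.le
  -- combine
  have hαinv : 0 ≤ α⁻¹ - 1 := by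
    have h1 : α * α⁻¹ = 1 := mul_inv_cancel₀ hα0.ne'
    nlinarith
  have hfin : Q ≤ 1 / 10 * N + (α⁻¹ - 1) * (α * (sm * N)) := by
    rw [hStepA]
    exact add_le_add hStepC (mul_le_mul_of_nonneg_left hStepD hαinv)
  have hsimp : (α⁻¹ - 1) * (α * (sm * N)) = (1 - α) * sm * N := by
    have h1 : α⁻¹ * α = 1 := inv_mul_cancel₀ hα0.ne'
    linear_combination (sm * N) * h1
  have hQN5 : Q ≤ 1 / 5 * N := by
    rw [hsimp] at hfin
    have : (1 - α) * sm * N = 1 / 10 * N := by rw [hkey]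
    linarith [hfin, this]
  nlinarith [hN2, hN0, hQN5]
end

section
/- Let A be an n×m real matrix with m ≥ 1, b ∈ ℝⁿ, c ∈ ℝ^m, z ∈ ℝ, and let Ã = [A, −b·1_mᵀ] have full row rank. Suppose (y, s, s_gap) satisfies Aᵀy + s = c, bᵀy − z = s_gap, with all entries of s positive, s_gap > 0, and η_{Ã}((s, s_gap·1_m)) ≤ 1/10. Let z⁺ = z + s_gap/(10√m). Suppose (ȳ, s̄, s̄_gap) is the analytic center of Ω^D_{b,z} and (ȳ⁺, s̄⁺, s̄⁺_gap) is the analytic center of Ω^D_{b,z⁺}. Then Σ_{j=1}^m log s̄⁺_j + m·log s̄⁺_gap ≤ Σ_{j=1}^m log s̄_j + m·log s̄_gap − (9/100)·√m. -/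
open Matrix

open Matrix

lemma log_lin {x y : ℝ} (hx : 0 < x) (hy : 0 < y) :
    Real.log x ≤ Real.log y + (x - y) * y⁻¹ := by
  have h := Real.log_le_sub_one_of_pos (show (0:ℝ) < x / y by positivity)
  rw [Real.log_div hx.ne' hy.ne'] at h
  have h2 : x / y - 1 = (x - y) * y⁻¹ := by field_simp
  linarith [h2 ▸ h]

lemma isUnit_det_aux {κ ι : Type*} [Fintype κ] [Fintype ι] [DecidableEq κ] [DecidableEq ι]
    (B : Matrix κ ι ℝ) (hrank : B.rank = Fintype.card κ) (t : ι → ℝ) (ht : ∀ i, 0 < t i) :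
    IsUnit (B * diagInv t * diagInv t * Bᵀ).det := by
  have hT : (diagInv t)ᵀ = diagInv t := Matrix.diagonal_transpose _
  have hdet : IsUnit (diagInv t).det := by
    rw [diagInv, Matrix.det_diagonal, isUnit_iff_ne_zero]
    exact Finset.prod_ne_zero_iff.2 fun i _ => inv_ne_zero (ht i).ne'
  have hNM : B * diagInv t * diagInv t * Bᵀ = (B * diagInv t) * (B * diagInv t)ᵀ := by
    rw [Matrix.transpose_mul, hT, Matrix.mul_assoc (B * diagInv t)]
  have hNrank : (B * diagInv t * diagInv t * Bᵀ).rank = Fintype.card κ := by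
    rw [hNM, rank_self_mul_transpose, rank_mul_eq_left_of_isUnit_det _ _ hdet, hrank]
  rw [← Matrix.isUnit_iff_isUnit_det, ← Matrix.mulVec_surjective_iff_isUnit]
  have : LinearMap.range (B * diagInv t * diagInv t * Bᵀ).mulVecLin = ⊤ := by
    apply Submodule.eq_top_of_finrank_eq
    rw [Module.finrank_fintype_fun_eq_card]
    exact hNrank
  intro v
  obtain ⟨w, hw⟩ := LinearMap.range_eq_top.1 this v
  exact ⟨w, hw⟩

/-- Core bound: if the near-centrality measure is at most 1/10, the analytic-center
slacks are within a factor 10/9 of the current slacks. -/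
lemma ratio_bound {κ ι : Type*} [Fintype κ] [Fintype ι] [DecidableEq κ] [DecidableEq ι]
    (B : Matrix κ ι ℝ) (hrank : B.rank = Fintype.card κ)
    (t tb : ι → ℝ) (ht : ∀ i, 0 < t i) (htb : ∀ i, 0 < tb i)
    (q : κ → ℝ) (hdiff : (fun i => tb i - t i) = Bᵀ *ᵥ q)
    (hker : B *ᵥ (fun i => (tb i)⁻¹) = 0)
    (hη : etaA B t ≤ 1 / 10) :
    ∀ i, tb i ≤ (10 / 9) * t i := by
  classical
  set T : Matrix ι ι ℝ := diagInv t with hTdef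
  have hT : Tᵀ = T := Matrix.diagonal_transpose _
  set N : Matrix κ κ ℝ := B * T * T * Bᵀ with hNdef
  have hNdet : IsUnit N.det := isUnit_det_aux B hrank t ht
  have hNsymm : Nᵀ = N := by
    rw [hNdef, Matrix.transpose_mul, Matrix.transpose_mul, Matrix.transpose_mul, hT,
      Matrix.transpose_transpose]
    rw [Matrix.mul_assoc, Matrix.mul_assoc]
  have hNinv : (N⁻¹)ᵀ = N⁻¹ := by rw [Matrix.transpose_nonsing_inv, hNsymm]
  set P : Matrix ι ι ℝ := T * Bᵀ * N⁻¹ * B * T with hPdef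
  set w : ι → ℝ := P *ᵥ (fun _ => 1) with hwdef
  have hηw : Real.sqrt (w ⬝ᵥ w) ≤ 1 / 10 := hη
  -- a is the relative difference
  set a : ι → ℝ := fun i => (tb i - t i) * (t i)⁻¹ with hadef
  have haTB : a = (T * Bᵀ) *ᵥ q := by
    funext i
    rw [← Matrix.mulVec_mulVec, ← hdiff]
    simp [hTdef, diagInv, Matrix.mulVec, diagonal_dotProduct, hadef, mul_comm]
  -- P * (T * Bᵀ) = T * Bᵀ
  have hPTB : P * (T * Bᵀ) = T * Bᵀ := by
    have h1 : P * (T * Bᵀ) = T * Bᵀ * (N⁻¹ * N) := by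
      rw [hPdef, hNdef]
      simp only [Matrix.mul_assoc]
    rw [h1, Matrix.nonsing_inv_mul _ hNdet, Matrix.mul_one]
  have hPa : P *ᵥ a = a := by
    rw [haTB, Matrix.mulVec_mulVec, hPTB]
  have hPsymm : Pᵀ = P := by
    rw [hPdef]
    simp only [Matrix.transpose_mul, hT, hNinv, Matrix.transpose_transpose]
    simp only [Matrix.mul_assoc]
  -- sum a = w ⬝ᵥ a
  have hsuma : (fun _ => (1:ℝ)) ⬝ᵥ a = w ⬝ᵥ a := by
    conv_lhs => rw [← hPa]
    rw [Matrix.dotProduct_mulVec, hwdef, ← Matrix.mulVec_transpose, hPsymm]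
  -- Cauchy-Schwarz
  set r : ℝ := Real.sqrt (a ⬝ᵥ a) with hrdef
  have har : 0 ≤ r := Real.sqrt_nonneg _
  have haa : 0 ≤ a ⬝ᵥ a := Finset.sum_nonneg fun i _ => mul_self_nonneg _
  have hr2 : r ^ 2 = a ⬝ᵥ a := Real.sq_sqrt haa
  have hCS : w ⬝ᵥ a ≤ Real.sqrt (w ⬝ᵥ w) * r := by
    have h1 : (w ⬝ᵥ a) ^ 2 ≤ (w ⬝ᵥ w) * (a ⬝ᵥ a) := by
      have := Finset.sum_mul_sq_le_sq_mul_sq Finset.univ w a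
      simpa [dotProduct, pow_two] using this
    calc w ⬝ᵥ a ≤ |w ⬝ᵥ a| := le_abs_self _
      _ = Real.sqrt ((w ⬝ᵥ a) ^ 2) := (Real.sqrt_sq_eq_abs _).symm
      _ ≤ Real.sqrt ((w ⬝ᵥ w) * (a ⬝ᵥ a)) := Real.sqrt_le_sqrt h1
      _ = Real.sqrt (w ⬝ᵥ w) * r := by
          have hww : 0 ≤ w ⬝ᵥ w := Finset.sum_nonneg fun i _ => mul_self_nonneg _
          rw [Real.sqrt_mul hww]
  have hsum_le : ∑ i, a i ≤ (1 / 10) * r := by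
    have h1 : (fun _ => (1:ℝ)) ⬝ᵥ a = ∑ i, a i := by simp [dotProduct]
    have h2 : w ⬝ᵥ a ≤ (1 / 10) * r :=
      le_trans hCS (mul_le_mul_of_nonneg_right hηw har)
    linarith [hsuma, h1 ▸ hsuma]
  -- each |a i| ≤ r
  have hai : ∀ i, a i ≤ r := by
    intro i
    have h1 : a i * a i ≤ a ⬝ᵥ a := by
      rw [dotProduct]
      exact Finset.single_le_sum (f := fun j => a j * a j)
        (fun j _ => mul_self_nonneg _) (Finset.mem_univ i)
    calc a i ≤ |a i| := le_abs_self _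
      _ = Real.sqrt (a i ^ 2) := (Real.sqrt_sq_eq_abs _).symm
      _ ≤ r := by rw [hrdef]; exact Real.sqrt_le_sqrt (by nlinarith)
  -- key identity: ∑ a i * (t i * (tb i)⁻¹) = 0
  have h0 : ∑ i, a i * (t i * (tb i)⁻¹) = 0 := by
    have h1 : ∑ i, a i * (t i * (tb i)⁻¹) = (fun i => tb i - t i) ⬝ᵥ (fun i => (tb i)⁻¹) := by
      rw [dotProduct]
      apply Finset.sum_congr rfl
      intro i _
      field_simp [hadef, (ht i).ne']
      rw [show a i * t i = tb i - t i by simp only [hadef]; field_simp [(ht i).ne']]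
    rw [h1, hdiff, Matrix.mulVec_transpose, ← Matrix.dotProduct_mulVec, hker]
    simp [dotProduct]
  -- ∑ a_i^2 * (t/tb) = ∑ a_i
  have hsq : ∑ i, a i * a i * (t i * (tb i)⁻¹) = ∑ i, a i := by
    have : ∀ i, a i * a i * (t i * (tb i)⁻¹) = a i - a i * (t i * (tb i)⁻¹) := by
      intro i
      have h1 : t i ≠ 0 := (ht i).ne'
      have h2 : tb i ≠ 0 := (htb i).ne'
      field_simp [hadef]
      have ha : a i * t i = tb i - t i := by simp only [hadef]; field_simp
      linear_combination (a i) * ha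
    rw [Finset.sum_congr rfl fun i _ => this i, Finset.sum_sub_distrib, h0, sub_zero]
  -- lower bound each term: t/tb ≥ (1+r)⁻¹
  have hterm : ∀ i, a i * a i * (1 + r)⁻¹ ≤ a i * a i * (t i * (tb i)⁻¹) := by
    intro i
    apply mul_le_mul_of_nonneg_left _ (mul_self_nonneg _)
    have h2 : (0:ℝ) < tb i := htb i
    have h3 : tb i * (t i)⁻¹ = 1 + a i := by
      rw [hadef]
      have := (ht i).ne'
      field_simp
      ring
    have h4 : tb i * (t i)⁻¹ ≤ 1 + r := by rw [h3]; linarith [hai i]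
    have h5 : (0:ℝ) < 1 + r := by linarith
    rw [inv_le_comm₀ h5 (mul_pos (ht i) (inv_pos.2 (htb i)))]
    calc (t i * (tb i)⁻¹)⁻¹ = tb i * (t i)⁻¹ := by
          rw [mul_inv, inv_inv]; ring
      _ ≤ 1 + r := h4
  have hr19 : r ≤ 1 / 9 := by
    have h1 : (a ⬝ᵥ a) * (1 + r)⁻¹ ≤ (1/10) * r := by
      calc (a ⬝ᵥ a) * (1 + r)⁻¹ = ∑ i, a i * a i * (1 + r)⁻¹ := by
            rw [dotProduct, Finset.sum_mul]
        _ ≤ ∑ i, a i * a i * (t i * (tb i)⁻¹) := Finset.sum_le_sum fun i _ => hterm i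
        _ = ∑ i, a i := hsq
        _ ≤ (1/10) * r := hsum_le
    have h2 : r * r * (1 + r)⁻¹ ≤ (1/10) * r := by
      rw [← hr2, pow_two] at h1
      exact h1
    have h5 : (0:ℝ) < 1 + r := by linarith
    by_contra hcon
    push_neg at hcon
    have h6 : r * r * (1+r)⁻¹ * (1+r) ≤ (1/10) * r * (1+r) :=
      mul_le_mul_of_nonneg_right h2 (le_of_lt h5)
    rw [mul_assoc, inv_mul_cancel₀ h5.ne', mul_one] at h6
    nlinarith
  intro i
  have := hai i
  have h1 : (0:ℝ) < t i := ht i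
  have : (tb i - t i) * (t i)⁻¹ ≤ 1/9 := le_trans this hr19
  have h2 : tb i - t i ≤ (1/9) * t i := by
    have := mul_le_mul_of_nonneg_right this (le_of_lt h1)
    rwa [mul_assoc, inv_mul_cancel₀ h1.ne', mul_one] at this
  linarith

/-- **Potential decrease under a shift.** Suppose `(y, s, s_gap)` is a near-central point of
`Ω^D_{b,z}` (with `η_{Ã}((s, s_gap 1)) ≤ 1/10` for `Ã = [A, -b 1ᵀ]` of full row rank), and let
`z⁺ = z + s_gap/(10√m)`. If `(ȳ, s̄, s̄_gap)` and `(ȳ⁺, s̄⁺, s̄⁺_gap)` are the analytic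
centers of `Ω^D_{b,z}` and `Ω^D_{b,z⁺}` respectively, then the potential
`B(z) = ∑ⱼ log s̄ⱼ + m log s̄_gap` decreases by at least `(9/100)√m`. -/
theorem potential_decrease {n m : ℕ} (hm : 1 ≤ m) (A : Matrix (Fin n) (Fin m) ℝ)
    (b : Fin n → ℝ) (c : Fin m → ℝ) (z : ℝ)
    (Atil : Matrix (Fin n) (Fin m ⊕ Fin m) ℝ)
    (hAtil : Atil = Matrix.fromCols A (Matrix.of fun i (_ : Fin m) => -b i))
    (hrank : Atil.rank = n)
    -- the current near-central point of `Ω^D_{b,z}`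
    (y : Fin n → ℝ) (s : Fin m → ℝ) (sgap : ℝ)
    (hfeas : Aᵀ *ᵥ y + s = c) (hgap : b ⬝ᵥ y - z = sgap)
    (hs : ∀ j, 0 < s j) (hsgap : 0 < sgap)
    (hη : etaA Atil (Sum.elim s fun _ => sgap) ≤ 1 / 10)
    -- the shifted bound
    (zplus : ℝ) (hzplus : zplus = z + sgap / (10 * Real.sqrt m))
    -- the analytic center of `Ω^D_{b,z}`
    (ybar : Fin n → ℝ) (sbar : Fin m → ℝ) (sgapbar : ℝ)
    (hbfeas : Aᵀ *ᵥ ybar + sbar = c) (hbgap : b ⬝ᵥ ybar - z = sgapbar)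
    (hbs : ∀ j, 0 < sbar j) (hbsgap : 0 < sgapbar)
    (hbcenter : A *ᵥ (fun j => (sbar j)⁻¹) = ((m : ℝ) / sgapbar) • b)
    -- the analytic center of `Ω^D_{b,z⁺}`
    (ybarp : Fin n → ℝ) (sbarp : Fin m → ℝ) (sgapbarp : ℝ)
    (hpfeas : Aᵀ *ᵥ ybarp + sbarp = c) (hpgap : b ⬝ᵥ ybarp - zplus = sgapbarp)
    (hps : ∀ j, 0 < sbarp j) (hpsgap : 0 < sgapbarp)
    (hpcenter : A *ᵥ (fun j => (sbarp j)⁻¹) = ((m : ℝ) / sgapbarp) • b) :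
    (∑ j, Real.log (sbarp j)) + m * Real.log sgapbarp ≤
      (∑ j, Real.log (sbar j)) + m * Real.log sgapbar - (9 / 100) * Real.sqrt m := by
  have hm1 : (1:ℝ) ≤ m := by exact_mod_cast hm
  have hmpos : (0:ℝ) < m := lt_of_lt_of_le one_pos hm1
  set R := Real.sqrt m with hRdef
  have hR1 : (1:ℝ) ≤ R := Real.one_le_sqrt.2 hm1
  have hRpos : (0:ℝ) < R := lt_of_lt_of_le one_pos hR1
  have hRR : R * R = m := Real.mul_self_sqrt (le_of_lt hmpos)
  set δ := sgap / (10 * R) with hδdef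
  have hδpos : 0 < δ := by positivity
  -- step 1: the gap bound sgapbar ≤ (10/9) sgap
  have ht : ∀ i, 0 < Sum.elim s (fun _ : Fin m => sgap) i := by
    rintro (j | j)
    · exact hs j
    · exact hsgap
  have htb : ∀ i, 0 < Sum.elim sbar (fun _ : Fin m => sgapbar) i := by
    rintro (j | j)
    · exact hbs j
    · exact hbsgap
  have hdiff : (fun i => Sum.elim sbar (fun _ : Fin m => sgapbar) i -
      Sum.elim s (fun _ : Fin m => sgap) i) = Atilᵀ *ᵥ (y - ybar) := by
    funext i
    rw [hAtil, Matrix.transpose_fromCols, Matrix.fromRows_mulVec]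
    cases i with
    | inl j =>
      have h1 := congrFun hfeas j
      have h2 := congrFun hbfeas j
      simp only [Pi.add_apply] at h1 h2
      have h3 : (Aᵀ *ᵥ (y - ybar)) j = (Aᵀ *ᵥ y) j - (Aᵀ *ᵥ ybar) j := by
        rw [Matrix.mulVec_sub]; rfl
      simp only [Sum.elim_inl]
      rw [h3]; linarith
    | inr j =>
      simp only [Sum.elim_inr]
      have h4 : ((Matrix.of fun i (_ : Fin m) => -b i)ᵀ *ᵥ (y - ybar)) j
          = (b ⬝ᵥ ybar) - (b ⬝ᵥ y) := by
        simp only [Matrix.mulVec, dotProduct, Matrix.transpose_apply, Matrix.of_apply,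
          Pi.sub_apply, ← Finset.sum_sub_distrib]
        exact Finset.sum_congr rfl fun i _ => by ring
      rw [h4]; linarith
  have hker : Atil *ᵥ (fun i => (Sum.elim sbar (fun _ : Fin m => sgapbar) i)⁻¹) = 0 := by
    have hinv : (fun i => (Sum.elim sbar (fun _ : Fin m => sgapbar) i)⁻¹)
        = Sum.elim (fun j => (sbar j)⁻¹) (fun _ : Fin m => sgapbar⁻¹) := by
      funext i; cases i <;> rfl
    rw [hAtil, hinv, Matrix.fromCols_mulVec_sumElim, hbcenter]
    funext i
    simp only [Pi.add_apply, Pi.smul_apply, smul_eq_mul, Matrix.mulVec, dotProduct,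
      Matrix.of_apply, Pi.zero_apply]
    rw [Finset.sum_const, Finset.card_univ, Fintype.card_fin, nsmul_eq_mul]
    field_simp
    ring
  have hratio := ratio_bound Atil (by rw [hrank, Fintype.card_fin])
    (Sum.elim s fun _ => sgap) (Sum.elim sbar fun _ => sgapbar) ht htb (y - ybar) hdiff hker hη
  have hgapbound : sgapbar ≤ (10/9) * sgap := by
    have := hratio (Sum.inr ⟨0, hm⟩)
    simpa using this
  -- step 2: first-order comparison
  have hd : (fun j => sbarp j - sbar j) = Aᵀ *ᵥ (ybar - ybarp) := by
    funext j
    have h1 := congrFun hbfeas j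
    have h2 := congrFun hpfeas j
    simp only [Pi.add_apply] at h1 h2
    have h3 : (Aᵀ *ᵥ (ybar - ybarp)) j = (Aᵀ *ᵥ ybar) j - (Aᵀ *ᵥ ybarp) j := by
      rw [Matrix.mulVec_sub]; rfl
    rw [h3]; linarith
  have key : ∑ j, (sbarp j - sbar j) * (sbar j)⁻¹
      = ((m:ℝ)/sgapbar) * (sgapbar - sgapbarp - δ) := by
    have h1 : ∑ j, (sbarp j - sbar j) * (sbar j)⁻¹
        = (fun j => sbarp j - sbar j) ⬝ᵥ (fun j => (sbar j)⁻¹) := rfl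
    rw [h1, hd, Matrix.mulVec_transpose, ← Matrix.dotProduct_mulVec, hbcenter,
      dotProduct_smul, smul_eq_mul]
    congr 1
    rw [sub_dotProduct, dotProduct_comm ybar b, dotProduct_comm ybarp b]
    have hz : zplus = z + δ := by rw [hzplus, hδdef]
    linarith
  have hlog2 : Real.log sgapbarp ≤ Real.log sgapbar + (sgapbarp - sgapbar) * sgapbar⁻¹ :=
    log_lin hpsgap hbsgap
  have hsum1 : ∑ j, Real.log (sbarp j)
      ≤ (∑ j, Real.log (sbar j)) + ((m:ℝ)/sgapbar) * (sgapbar - sgapbarp - δ) := by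
    calc ∑ j, Real.log (sbarp j)
        ≤ ∑ j, (Real.log (sbar j) + (sbarp j - sbar j) * (sbar j)⁻¹) :=
          Finset.sum_le_sum fun j _ => log_lin (hps j) (hbs j)
      _ = (∑ j, Real.log (sbar j)) + ∑ j, (sbarp j - sbar j) * (sbar j)⁻¹ :=
          Finset.sum_add_distrib
      _ = _ := by rw [key]
  have hcomb : ((m:ℝ)/sgapbar) * (sgapbar - sgapbarp - δ)
      + (m:ℝ) * ((sgapbarp - sgapbar) * sgapbar⁻¹) = -(((m:ℝ)/sgapbar) * δ) := by
    field_simp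
    ring
  have hfinal : (9/100) * R ≤ ((m:ℝ)/sgapbar) * δ := by
    have h1 : ((m:ℝ)/sgapbar) * δ = ((m:ℝ) * sgap) / (sgapbar * (10 * R)) := by
      rw [hδdef]; field_simp
    rw [h1, le_div_iff₀ (by positivity)]
    nlinarith [mul_le_mul_of_nonneg_left hgapbound (le_of_lt hmpos), hRR]
  have hm2 := mul_le_mul_of_nonneg_left hlog2 (le_of_lt hmpos)
  calc (∑ j, Real.log (sbarp j)) + m * Real.log sgapbarp
      ≤ (∑ j, Real.log (sbar j)) + ((m:ℝ)/sgapbar) * (sgapbar - sgapbarp - δ)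
        + ((m:ℝ) * Real.log sgapbar + (m:ℝ) * ((sgapbarp - sgapbar) * sgapbar⁻¹)) := by
        rw [mul_add] at hm2
        linarith
    _ = (∑ j, Real.log (sbar j)) + m * Real.log sgapbar - ((m:ℝ)/sgapbar) * δ := by
        linarith [hcomb]
    _ ≤ (∑ j, Real.log (sbar j)) + m * Real.log sgapbar - (9/100) * R := by
        linarith
end

section
/- Let A be an n×m real matrix, b ∈ ℝⁿ, c ∈ ℝ^m, and z < z⁺ two real numbers. Suppose (ȳ, s̄, s̄_gap) is the analytic center of Ω^D_{b,z} and (ȳ⁺, s̄⁺, s̄⁺_gap) is the analytic center of Ω^D_{b,z⁺}. Define B = Σ_{j=1}^m log s̄_j + m·log s̄_gap and B⁺ = Σ_{j=1}^m log s̄⁺_j + m·log s̄⁺_gap. Then s̄_gap / s̄⁺_gap ≥ e^{(B − B⁺)/(2m)} − 1. -/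
open Matrix

/-- Key identity at an analytic center: for any other feasible point,
the scaled slacks sum to `2m` (level-shift corrected). -/
lemma center_id {n m : ℕ} (A : Matrix (Fin n) (Fin m) ℝ)
    (b : Fin n → ℝ) (c : Fin m → ℝ) (z1 z2 : ℝ)
    (y1 : Fin n → ℝ) (s1 : Fin m → ℝ) (g1 : ℝ)
    (h1 : Aᵀ *ᵥ y1 + s1 = c) (hg1 : b ⬝ᵥ y1 - z1 = g1)
    (hc1 : A *ᵥ (fun j => (s1 j)⁻¹) = ((m : ℝ) / g1) • b)
    (hg1pos : 0 < g1) (hs1 : ∀ j, 0 < s1 j)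
    (y2 : Fin n → ℝ) (s2 : Fin m → ℝ) (g2 : ℝ)
    (h2 : Aᵀ *ᵥ y2 + s2 = c) (hg2 : b ⬝ᵥ y2 - z2 = g2) :
    ∑ j, s2 j / s1 j = 2 * m - (m / g1) * (g2 + z2 - z1) := by
  have hAT : Aᵀ *ᵥ (y1 - y2) = s2 - s1 := by
    rw [Matrix.mulVec_sub, eq_sub_of_add_eq h1, eq_sub_of_add_eq h2]
    abel
  have key : (fun j => (s1 j)⁻¹) ⬝ᵥ (s2 - s1) = ((m : ℝ) / g1) * (b ⬝ᵥ (y1 - y2)) := by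
    rw [← hAT, Matrix.dotProduct_mulVec, Matrix.vecMul_transpose, hc1,
      smul_dotProduct, smul_eq_mul]
  have lhs : (fun j => (s1 j)⁻¹) ⬝ᵥ (s2 - s1) = (∑ j, s2 j / s1 j) - m := by
    simp only [dotProduct, Pi.sub_apply, mul_sub]
    rw [Finset.sum_sub_distrib]
    congr 1
    · exact Finset.sum_congr rfl fun j _ => by rw [inv_mul_eq_div]
    · simp [inv_mul_cancel₀ (hs1 _).ne']
  have rhsb : b ⬝ᵥ (y1 - y2) = g1 + z1 - (g2 + z2) := by
    rw [dotProduct_sub]; linarith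
  rw [lhs, rhsb] at key
  have hgne : g1 ≠ 0 := hg1pos.ne'
  field_simp at key ⊢
  nlinarith [key]

/-- **Potential decrease controls the gap slack.** Let `(ȳ, s̄, s̄_gap)` and
`(ȳ⁺, s̄⁺, s̄⁺_gap)` be the analytic centers of `Ω^D_{b,z}` and `Ω^D_{b,z⁺}` with `z < z⁺`,
and let `B, B⁺` be the corresponding potentials. Then
`s̄_gap / s̄⁺_gap ≥ e^{(B - B⁺)/(2m)} - 1`. -/
theorem gap_ratio_ge_exp_potential {n m : ℕ} (A : Matrix (Fin n) (Fin m) ℝ)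
    (b : Fin n → ℝ) (c : Fin m → ℝ) (z zplus : ℝ) (hz : z < zplus)
    -- the analytic center of `Ω^D_{b,z}`
    (ybar : Fin n → ℝ) (sbar : Fin m → ℝ) (sgapbar : ℝ)
    (hbfeas : Aᵀ *ᵥ ybar + sbar = c) (hbgap : b ⬝ᵥ ybar - z = sgapbar)
    (hbs : ∀ j, 0 < sbar j) (hbsgap : 0 < sgapbar)
    (hbcenter : A *ᵥ (fun j => (sbar j)⁻¹) = ((m : ℝ) / sgapbar) • b)
    -- the analytic center of `Ω^D_{b,z⁺}`
    (ybarp : Fin n → ℝ) (sbarp : Fin m → ℝ) (sgapbarp : ℝ)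
    (hpfeas : Aᵀ *ᵥ ybarp + sbarp = c) (hpgap : b ⬝ᵥ ybarp - zplus = sgapbarp)
    (hps : ∀ j, 0 < sbarp j) (hpsgap : 0 < sgapbarp)
    (hpcenter : A *ᵥ (fun j => (sbarp j)⁻¹) = ((m : ℝ) / sgapbarp) • b)
    (B Bplus : ℝ)
    (hB : B = (∑ j, Real.log (sbar j)) + m * Real.log sgapbar)
    (hBplus : Bplus = (∑ j, Real.log (sbarp j)) + m * Real.log sgapbarp) :
    Real.exp ((B - Bplus) / (2 * m)) - 1 ≤ sgapbar / sgapbarp := by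
  rcases Nat.eq_zero_or_pos m with hm | hm
  · subst hm
    rw [hB, hBplus]
    norm_num
    positivity
  have hmpos : (0 : ℝ) < m := Nat.cast_pos.mpr hm
  have hmne : (m : ℝ) ≠ 0 := hmpos.ne'
  -- two centering identities
  have E1 := center_id A b c z zplus ybar sbar sgapbar hbfeas hbgap hbcenter hbsgap hbs
    ybarp sbarp sgapbarp hpfeas hpgap
  have E2 := center_id A b c zplus z ybarp sbarp sgapbarp hpfeas hpgap hpcenter hpsgap hps
    ybar sbar sgapbar hbfeas hbgap
  -- from E1: zplus - z ≤ 2 * sgapbar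
  have hsum1 : (0:ℝ) ≤ ∑ j, sbarp j / sbar j :=
    Finset.sum_nonneg fun j _ => le_of_lt (div_pos (hps j) (hbs j))
  have hΔ : zplus - z ≤ 2 * sgapbar := by
    have hk : (0:ℝ) < (m : ℝ) / sgapbar := div_pos hmpos hbsgap
    have h2m : ((m:ℝ) / sgapbar) * (2 * sgapbar) = 2 * m := by field_simp
    have hle : ((m:ℝ) / sgapbar) * (sgapbarp + zplus - z) ≤ ((m:ℝ)/sgapbar) * (2 * sgapbar) := by
      rw [h2m]; linarith [E1, hsum1]
    have := le_of_mul_le_mul_left hle hk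
    linarith [hpsgap]
  -- Jensen: exp of average of logs ≤ average
  set a : Fin m → ℝ := fun j => Real.log (sbar j) - Real.log (sbarp j) with ha
  set L : ℝ := ∑ j, (1 / (m:ℝ)) * a j with hL
  set R : ℝ := ∑ j, (1 / (m:ℝ)) * (sbar j / sbarp j) with hR
  have hJensen : Real.exp L ≤ R := by
    have h0 : ∀ j ∈ (Finset.univ : Finset (Fin m)), (0:ℝ) ≤ 1 / (m:ℝ) := by
      intro j _; positivity
    have h1 : ∑ _j : Fin m, (1 / (m:ℝ)) = 1 := by
      simp [Finset.sum_const]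
      field_simp
    have hmem : ∀ j ∈ (Finset.univ : Finset (Fin m)), a j ∈ Set.univ := by
      intro j _; trivial
    have := convexOn_exp.map_sum_le h0 h1 hmem
    simp only [smul_eq_mul] at this
    refine le_trans ?_ (le_of_le_of_eq this ?_)
    · exact le_of_eq (by rw [hL])
    · rw [hR]
      refine Finset.sum_congr rfl fun j _ => ?_
      rw [ha]
      rw [Real.exp_sub, Real.exp_log (hbs j), Real.exp_log (hps j)]
  -- two-point convexity
  set lg : ℝ := Real.log sgapbar - Real.log sgapbarp with hlg
  have ht : (B - Bplus) / (2 * m) = (1/2) * L + (1/2) * lg := by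
    have hsa : ∑ j, a j = (∑ j, Real.log (sbar j)) - ∑ j, Real.log (sbarp j) := by
      simp only [ha]; exact Finset.sum_sub_distrib _ _
    rw [hB, hBplus, hL, hlg, ← Finset.mul_sum, hsa]
    field_simp
    ring
  have h2pt : Real.exp ((1/2) * L + (1/2) * lg) ≤ (1/2) * Real.exp L + (1/2) * Real.exp lg := by
    have := convexOn_exp.2 (Set.mem_univ L) (Set.mem_univ lg)
      (by norm_num : (0:ℝ) ≤ 1/2) (by norm_num : (0:ℝ) ≤ 1/2) (by norm_num)
    simpa [smul_eq_mul] using this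
  have hexplg : Real.exp lg = sgapbar / sgapbarp := by
    rw [hlg, Real.exp_sub, Real.exp_log hbsgap, Real.exp_log hpsgap]
  -- compute R from E2
  have hRval : R = 2 - (sgapbar - (zplus - z)) / sgapbarp := by
    rw [hR, ← Finset.mul_sum, E2]
    field_simp
    ring
  have hfinal : (1/2) * R + (1/2) * (sgapbar / sgapbarp) ≤ 1 + sgapbar / sgapbarp := by
    have hdd : (zplus - z) / (2 * sgapbarp) ≤ sgapbar / sgapbarp := by
      rw [div_le_div_iff₀ (by positivity) hpsgap]
      nlinarith
    have expand : (1/2) * (2 - (sgapbar - (zplus - z)) / sgapbarp) + (1/2) * (sgapbar / sgapbarp)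
        = 1 + (zplus - z) / (2 * sgapbarp) := by
      field_simp
      ring
    rw [hRval]
    linarith
  calc Real.exp ((B - Bplus) / (2 * m)) - 1
      = Real.exp ((1/2) * L + (1/2) * lg) - 1 := by rw [ht]
    _ ≤ (1/2) * Real.exp L + (1/2) * Real.exp lg - 1 := by linarith
    _ ≤ (1/2) * R + (1/2) * (sgapbar / sgapbarp) - 1 := by rw [hexplg]; linarith
    _ ≤ sgapbar / sgapbarp := by linarith
end

section
/- Let A be an n×m real matrix, s ∈ ℝ^m with all entries positive, S = diag(s), and suppose AS^{-2}Aᵀ is positive definite. Let b, b̂ ∈ ℝⁿ and s_gap, ŝ_gap > 0. Let Â = [A, −b̂·1_mᵀ] and Ã = [A, −b·1_mᵀ], both assumed to have full row rank. Suppose: ŝ_gap ≥ 40·m·‖b̂‖_{(AS^{-2}Aᵀ)^{-1}}, s_gap ≥ 40·m·‖b‖_{(AS^{-2}Aᵀ)^{-1}}, and η_{Â}((s, ŝ_gap·1_m)) ≤ 1/40. Then η_{Ã}((s, s_gap·1_m)) ≤ 1/10. -/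
open Matrix

open Matrix

section AuxLemmas

variable {N : ℕ}

private lemma qf_nonneg {Q : Matrix (Fin N) (Fin N) ℝ} (hQ : Q.PosSemidef) (x : Fin N → ℝ) :
    0 ≤ x ⬝ᵥ Q *ᵥ x := by simpa using hQ.dotProduct_mulVec_nonneg x

private lemma herm_transpose {Q : Matrix (Fin N) (Fin N) ℝ} (hQ : Q.IsHermitian) : Qᵀ = Q := by
  ext i j
  simpa [Matrix.conjTranspose_apply] using congrFun (congrFun hQ i) j

private lemma psd_cs {Q : Matrix (Fin N) (Fin N) ℝ} (hQ : Q.PosSemidef) (x y : Fin N → ℝ) :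
    (x ⬝ᵥ Q *ᵥ y) ^ 2 ≤ (x ⬝ᵥ Q *ᵥ x) * (y ⬝ᵥ Q *ᵥ y) := by
  have hsym : Qᵀ = Q := herm_transpose hQ.1
  have hyx : y ⬝ᵥ Q *ᵥ x = x ⬝ᵥ Q *ᵥ y := by
    rw [dotProduct_mulVec, ← mulVec_transpose, hsym, dotProduct_comm]
  have key : ∀ t : ℝ, 0 ≤ (y ⬝ᵥ Q *ᵥ y) * (t * t) + (2 * (x ⬝ᵥ Q *ᵥ y)) * t +
      (x ⬝ᵥ Q *ᵥ x) := by
    intro t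
    have h0 := hQ.dotProduct_mulVec_nonneg (x + t • y)
    simp only [star_trivial, mulVec_add, mulVec_smul, dotProduct_add, add_dotProduct,
      dotProduct_smul, smul_dotProduct, smul_eq_mul] at h0
    rw [hyx] at h0
    nlinarith [h0]
  have hd := discrim_le_zero key
  rw [discrim] at hd
  nlinarith [hd]

private lemma pd_add_psd {M E : Matrix (Fin N) (Fin N) ℝ} (hM : M.PosDef) (hE : E.PosSemidef) :
    (M + E).PosDef := by
  refine Matrix.PosDef.of_dotProduct_mulVec_pos (hM.1.add hE.1) fun x hx => ?_
  have h1 := hM.dotProduct_mulVec_pos hx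
  have h2 := hE.dotProduct_mulVec_nonneg x
  simp only [star_trivial, add_mulVec, dotProduct_add] at *
  linarith

private lemma vmv_qf (b x : Fin N → ℝ) : x ⬝ᵥ (vecMulVec b b) *ᵥ x = (b ⬝ᵥ x) ^ 2 := by
  simp only [dotProduct, mulVec, vecMulVec_apply, pow_two, Finset.sum_mul, Finset.mul_sum]
  rw [Finset.sum_comm]
  apply Finset.sum_congr rfl; intro i _
  apply Finset.sum_congr rfl; intro j _
  ring

private lemma psd_smul_vmv (b : Fin N → ℝ) {c : ℝ} (hc : 0 ≤ c) :
    (c • vecMulVec b b).PosSemidef := by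
  refine Matrix.PosSemidef.of_dotProduct_mulVec_nonneg ?_ ?_
  · ext i j
    simp [Matrix.conjTranspose_apply, vecMulVec_apply, mul_comm]
  · intro x
    have : x ⬝ᵥ (c • vecMulVec b b) *ᵥ x = c * (b ⬝ᵥ x) ^ 2 := by
      rw [smul_mulVec, dotProduct_smul, smul_eq_mul, vmv_qf]
    simpa [this] using mul_nonneg hc (sq_nonneg _)

private lemma pd_mul_inv' {M : Matrix (Fin N) (Fin N) ℝ} (hM : M.PosDef) : M * M⁻¹ = 1 :=
  Matrix.mul_nonsing_inv _ hM.det_pos.ne'.isUnit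

private lemma inv_qf_le {M E : Matrix (Fin N) (Fin N) ℝ} (hM : M.PosDef) (hE : E.PosSemidef)
    (w : Fin N → ℝ) : w ⬝ᵥ (M + E)⁻¹ *ᵥ w ≤ w ⬝ᵥ M⁻¹ *ᵥ w := by
  have hNPD : (M + E).PosDef := pd_add_psd hM hE
  set x := (M + E)⁻¹ *ᵥ w with hxdef
  have hw : (M + E) *ᵥ x = w := by
    rw [hxdef, mulVec_mulVec, pd_mul_inv' hNPD, one_mulVec]
  have hMw : M *ᵥ (M⁻¹ *ᵥ w) = w := by
    rw [mulVec_mulVec, pd_mul_inv' hM, one_mulVec]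
  have hLHS : w ⬝ᵥ (M + E)⁻¹ *ᵥ w = x ⬝ᵥ M *ᵥ x + x ⬝ᵥ E *ᵥ x := by
    rw [show w ⬝ᵥ (M + E)⁻¹ *ᵥ w = w ⬝ᵥ x from rfl, dotProduct_comm, ← hw, add_mulVec,
      dotProduct_add]
  have hcs := psd_cs hM.posSemidef x (M⁻¹ *ᵥ w)
  rw [hMw] at hcs
  rw [dotProduct_comm (M⁻¹ *ᵥ w) w] at hcs
  have hxw : x ⬝ᵥ w = x ⬝ᵥ M *ᵥ x + x ⬝ᵥ E *ᵥ x := by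
    rw [← hw, add_mulVec, dotProduct_add]
  rw [hxw] at hcs
  have ha := qf_nonneg hM.posSemidef x
  have he := qf_nonneg hE x
  have hr := qf_nonneg hM.inv.posSemidef w
  rw [hLHS]
  rcases eq_or_lt_of_le ha with h | h
  · have : x ⬝ᵥ E *ᵥ x = 0 := by nlinarith [hcs]
    rw [← h, this]; simpa using hr
  · nlinarith [hcs]

private lemma inv_qf_ge {M Nh : Matrix (Fin N) (Fin N) ℝ} (hM : M.PosDef) (hNh : Nh.PosDef)
    {α : ℝ} (hα : 0 < α) (hcomp : ∀ x, x ⬝ᵥ Nh *ᵥ x ≤ α * (x ⬝ᵥ M *ᵥ x)) (w : Fin N → ℝ) :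
    w ⬝ᵥ M⁻¹ *ᵥ w ≤ α * (w ⬝ᵥ Nh⁻¹ *ᵥ w) := by
  set y := M⁻¹ *ᵥ w with hydef
  have hw : M *ᵥ y = w := by rw [hydef, mulVec_mulVec, pd_mul_inv' hM, one_mulVec]
  have hNw : Nh *ᵥ (Nh⁻¹ *ᵥ w) = w := by rw [mulVec_mulVec, pd_mul_inv' hNh, one_mulVec]
  have hLHS : w ⬝ᵥ M⁻¹ *ᵥ w = y ⬝ᵥ M *ᵥ y := by
    rw [show w ⬝ᵥ M⁻¹ *ᵥ w = w ⬝ᵥ y from rfl, dotProduct_comm, ← hw]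
  have hcs := psd_cs hNh.posSemidef y (Nh⁻¹ *ᵥ w)
  rw [hNw] at hcs
  rw [dotProduct_comm (Nh⁻¹ *ᵥ w) w] at hcs
  have hyw : y ⬝ᵥ w = y ⬝ᵥ M *ᵥ y := by rw [← hw]
  rw [hyw] at hcs
  have hg := qf_nonneg hM.posSemidef y
  have hh := qf_nonneg hNh.inv.posSemidef w
  have hcmp := hcomp y
  rw [hLHS]
  rcases eq_or_lt_of_le hg with h | h
  · rw [← h]; positivity
  · nlinarith [hcs, hcmp]

private lemma tri_add {Q : Matrix (Fin N) (Fin N) ℝ} (hQ : Q.PosSemidef) (u z : Fin N → ℝ) :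
    Real.sqrt ((u + z) ⬝ᵥ Q *ᵥ (u + z)) ≤
      Real.sqrt (u ⬝ᵥ Q *ᵥ u) + Real.sqrt (z ⬝ᵥ Q *ᵥ z) := by
  have hsym : Qᵀ = Q := herm_transpose hQ.1
  have hzu : z ⬝ᵥ Q *ᵥ u = u ⬝ᵥ Q *ᵥ z := by
    rw [dotProduct_mulVec, ← mulVec_transpose, hsym, dotProduct_comm]
  have ha := qf_nonneg hQ u
  have hb := qf_nonneg hQ z
  have hcs := psd_cs hQ u z
  have hcross : u ⬝ᵥ Q *ᵥ z ≤ Real.sqrt (u ⬝ᵥ Q *ᵥ u) * Real.sqrt (z ⬝ᵥ Q *ᵥ z) := by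
    have h1 : u ⬝ᵥ Q *ᵥ z ≤ |u ⬝ᵥ Q *ᵥ z| := le_abs_self _
    have h2 : |u ⬝ᵥ Q *ᵥ z| = Real.sqrt ((u ⬝ᵥ Q *ᵥ z) ^ 2) := by
      rw [Real.sqrt_sq_eq_abs]
    rw [h2] at h1
    refine h1.trans ?_
    rw [← Real.sqrt_mul ha]
    exact Real.sqrt_le_sqrt hcs
  have hexp : (u + z) ⬝ᵥ Q *ᵥ (u + z) =
      u ⬝ᵥ Q *ᵥ u + 2 * (u ⬝ᵥ Q *ᵥ z) + z ⬝ᵥ Q *ᵥ z := by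
    simp only [mulVec_add, dotProduct_add, add_dotProduct]
    rw [hzu]; ring
  rw [hexp]
  have hs : u ⬝ᵥ Q *ᵥ u + 2 * (u ⬝ᵥ Q *ᵥ z) + z ⬝ᵥ Q *ᵥ z ≤
      (Real.sqrt (u ⬝ᵥ Q *ᵥ u) + Real.sqrt (z ⬝ᵥ Q *ᵥ z)) ^ 2 := by
    have h1 := Real.sq_sqrt ha
    have h2 := Real.sq_sqrt hb
    nlinarith [hcross]
  calc Real.sqrt (u ⬝ᵥ Q *ᵥ u + 2 * (u ⬝ᵥ Q *ᵥ z) + z ⬝ᵥ Q *ᵥ z)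
      ≤ Real.sqrt ((Real.sqrt (u ⬝ᵥ Q *ᵥ u) + Real.sqrt (z ⬝ᵥ Q *ᵥ z)) ^ 2) :=
        Real.sqrt_le_sqrt hs
    _ = _ := Real.sqrt_sq (by positivity)

private lemma tri_sub {Q : Matrix (Fin N) (Fin N) ℝ} (hQ : Q.PosSemidef) (u z : Fin N → ℝ) :
    Real.sqrt ((u - z) ⬝ᵥ Q *ᵥ (u - z)) ≤
      Real.sqrt (u ⬝ᵥ Q *ᵥ u) + Real.sqrt (z ⬝ᵥ Q *ᵥ z) := by
  have h := tri_add hQ u (-z)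
  have hneg : (-z) ⬝ᵥ Q *ᵥ (-z) = z ⬝ᵥ Q *ᵥ z := by
    rw [mulVec_neg, dotProduct_neg, neg_dotProduct, neg_neg]
  rw [hneg] at h
  simpa [sub_eq_add_neg] using h

private lemma smul_qf (Q : Matrix (Fin N) (Fin N) ℝ) (c : ℝ) (z : Fin N → ℝ) :
    (c • z) ⬝ᵥ Q *ᵥ (c • z) = c ^ 2 * (z ⬝ᵥ Q *ᵥ z) := by
  rw [mulVec_smul, dotProduct_smul, smul_dotProduct]
  simp [smul_eq_mul]; ring

private lemma eta_formula {n m : ℕ} (A : Matrix (Fin n) (Fin m) ℝ) (s : Fin m → ℝ)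
    (b' : Fin n → ℝ) (gap : ℝ)
    (hN : (A * diagInv s * diagInv s * Aᵀ +
      ((m : ℝ) * (gap⁻¹ * gap⁻¹)) • vecMulVec b' b').PosDef) :
    etaA (Matrix.fromCols A (Matrix.of fun i (_ : Fin m) => -b' i))
        (Sum.elim s fun _ => gap) =
      Real.sqrt (((A * diagInv s) *ᵥ (fun _ => 1) - ((m : ℝ) * gap⁻¹) • b') ⬝ᵥ
        (A * diagInv s * diagInv s * Aᵀ + ((m : ℝ) * (gap⁻¹ * gap⁻¹)) • vecMulVec b' b')⁻¹ *ᵥ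
        ((A * diagInv s) *ᵥ (fun _ => 1) - ((m : ℝ) * gap⁻¹) • b')) := by
  set S1 : Matrix (Fin m) (Fin m) ℝ := diagInv s with hS1
  set B0 : Matrix (Fin n) (Fin m) ℝ := Matrix.of fun i (_ : Fin m) => -b' i with hB0
  set B2 : Matrix (Fin n) (Fin m) ℝ := Matrix.of fun i (_ : Fin m) => -(gap⁻¹ * b' i) with hB2
  set Ab : Matrix (Fin n) (Fin m ⊕ Fin m) ℝ := Matrix.fromCols A B0 with hAb
  set D : Matrix (Fin m ⊕ Fin m) (Fin m ⊕ Fin m) ℝ :=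
    diagInv (Sum.elim s fun _ => gap) with hDdef
  set M : Matrix (Fin n) (Fin n) ℝ := A * S1 * S1 * Aᵀ with hM
  set Nm : Matrix (Fin n) (Fin n) ℝ :=
    M + ((m : ℝ) * (gap⁻¹ * gap⁻¹)) • vecMulVec b' b' with hNm
  set w : Fin n → ℝ := (A * S1) *ᵥ (fun _ => 1) - ((m : ℝ) * gap⁻¹) • b' with hwdef
  have hD : D = Matrix.fromBlocks S1 0 0 (diagInv fun _ : Fin m => gap) := by
    rw [hDdef, hS1]
    unfold diagInv
    ext (i | i) (j | j) <;>
      simp [Matrix.diagonal_apply, Sum.inl.injEq, Sum.inr.injEq]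
  have hDT : Dᵀ = D := by
    rw [hDdef]; unfold diagInv; exact Matrix.diagonal_transpose _
  have hBG : B0 * diagInv (fun _ : Fin m => gap) = B2 := by
    ext i j
    unfold diagInv
    rw [Matrix.mul_diagonal]
    simp [hB0, hB2, mul_comm]
  have hC : Ab * D = Matrix.fromCols (A * S1) B2 := by
    rw [hAb, hD, Matrix.fromCols_mul_fromBlocks, Matrix.mul_zero, Matrix.mul_zero,
      add_zero, zero_add, hBG]
  have hCT : D * Abᵀ = (Ab * D)ᵀ := by
    rw [Matrix.transpose_mul, hDT]
  have hB2B2 : B2 * B2ᵀ = ((m : ℝ) * (gap⁻¹ * gap⁻¹)) • vecMulVec b' b' := by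
    ext i j
    simp only [Matrix.mul_apply, Matrix.transpose_apply, hB2, Matrix.of_apply,
      Matrix.smul_apply, vecMulVec_apply, smul_eq_mul]
    rw [Finset.sum_const, Finset.card_univ, Fintype.card_fin]
    simp [nsmul_eq_mul]; ring
  have hCCT : (Ab * D) * (Ab * D)ᵀ = Nm := by
    rw [hC, Matrix.transpose_fromCols, Matrix.fromCols_mul_fromRows, hB2B2, hNm, hM]
    congr 1
    rw [Matrix.transpose_mul]
    have : S1ᵀ = S1 := by rw [hS1]; unfold diagInv; exact Matrix.diagonal_transpose _
    rw [this, ← Matrix.mul_assoc]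
  have hNblock : Ab * D * D * Abᵀ = Nm := by
    calc Ab * D * D * Abᵀ = (Ab * D) * (D * Abᵀ) := by rw [Matrix.mul_assoc]
    _ = (Ab * D) * (Ab * D)ᵀ := by rw [hCT]
    _ = Nm := hCCT
  have hw : (Ab * D) *ᵥ (fun _ => (1 : ℝ)) = w := by
    rw [hC]
    have h1 : (fun _ : Fin m ⊕ Fin m => (1 : ℝ)) =
        Sum.elim (fun _ => (1 : ℝ)) (fun _ => (1 : ℝ)) := by
      funext x; cases x <;> rfl
    have hB2v : B2 *ᵥ (fun _ => (1 : ℝ)) = -(((m : ℝ) * gap⁻¹) • b') := by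
      ext i
      simp only [hB2, Matrix.mulVec, dotProduct, Matrix.of_apply, mul_one, Pi.neg_apply,
        Pi.smul_apply, smul_eq_mul]
      rw [Finset.sum_const, Finset.card_univ, Fintype.card_fin]
      simp [nsmul_eq_mul]; ring
    rw [h1, Matrix.fromCols_mulVec_sumElim, hB2v, hwdef, sub_eq_add_neg]
  have hNmul : Nm *ᵥ (Nm⁻¹ *ᵥ w) = w := by
    rw [Matrix.mulVec_mulVec, pd_mul_inv' hN, Matrix.one_mulVec]
  have key : (D * Abᵀ * (Ab * D * D * Abᵀ)⁻¹ * Ab * D) *ᵥ (fun _ => (1 : ℝ))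
      = (Ab * D)ᵀ *ᵥ (Nm⁻¹ *ᵥ w) := by
    rw [hNblock]
    have hassoc : D * Abᵀ * Nm⁻¹ * Ab * D = (Ab * D)ᵀ * (Nm⁻¹ * (Ab * D)) := by
      rw [hCT]; simp only [Matrix.mul_assoc]
    rw [hassoc, ← Matrix.mulVec_mulVec, ← Matrix.mulVec_mulVec, hw]
  have hzz : ((Ab * D)ᵀ *ᵥ (Nm⁻¹ *ᵥ w)) ⬝ᵥ ((Ab * D)ᵀ *ᵥ (Nm⁻¹ *ᵥ w))
      = w ⬝ᵥ Nm⁻¹ *ᵥ w := by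
    have e1 : (Nm⁻¹ *ᵥ w) ⬝ᵥ ((Ab * D) * (Ab * D)ᵀ) *ᵥ (Nm⁻¹ *ᵥ w)
        = ((Ab * D)ᵀ *ᵥ (Nm⁻¹ *ᵥ w)) ⬝ᵥ ((Ab * D)ᵀ *ᵥ (Nm⁻¹ *ᵥ w)) := by
      rw [← Matrix.mulVec_mulVec, Matrix.dotProduct_mulVec, ← Matrix.mulVec_transpose]
    rw [← e1, hCCT, hNmul, dotProduct_comm]
  unfold etaA eucNorm
  rw [← hDdef, key, hzz]

end AuxLemmas

set_option maxHeartbeats 1000000 in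
/-- **Switching from the auxiliary to the true central path.** If `A S⁻² Aᵀ` is positive
definite, `ŝ_gap ≥ 40 m ‖b̂‖_{(A S⁻² Aᵀ)⁻¹}`, `s_gap ≥ 40 m ‖b‖_{(A S⁻² Aᵀ)⁻¹}` and
`η_{Â}((s, ŝ_gap 1)) ≤ 1/40` for `Â = [A, -b̂ 1ᵀ]`, then
`η_{Ã}((s, s_gap 1)) ≤ 1/10` for `Ã = [A, -b 1ᵀ]`. -/
theorem switch_central_path {n m : ℕ} (A : Matrix (Fin n) (Fin m) ℝ)
    (s : Fin m → ℝ) (hs : ∀ i, 0 < s i)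
    (hPD : (A * diagInv s * diagInv s * Aᵀ).PosDef)
    (b bhat : Fin n → ℝ) (sgap sgaphat : ℝ) (hsgap : 0 < sgap) (hsgaphat : 0 < sgaphat)
    (Ahat : Matrix (Fin n) (Fin m ⊕ Fin m) ℝ)
    (hAhat : Ahat = Matrix.fromCols A (Matrix.of fun i (_ : Fin m) => -bhat i))
    (Atil : Matrix (Fin n) (Fin m ⊕ Fin m) ℝ)
    (hAtil : Atil = Matrix.fromCols A (Matrix.of fun i (_ : Fin m) => -b i))
    (hrankhat : Ahat.rank = n) (hranktil : Atil.rank = n)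
    (h1 : 40 * m * mnorm (A * diagInv s * diagInv s * Aᵀ)⁻¹ bhat ≤ sgaphat)
    (h2 : 40 * m * mnorm (A * diagInv s * diagInv s * Aᵀ)⁻¹ b ≤ sgap)
    (hη : etaA Ahat (Sum.elim s fun _ => sgaphat) ≤ 1 / 40) :
    etaA Atil (Sum.elim s fun _ => sgap) ≤ 1 / 10 := by
  have hEpsd : (((m : ℝ) * (sgap⁻¹ * sgap⁻¹)) • vecMulVec b b).PosSemidef :=
    psd_smul_vmv b (by positivity)
  have hEhpsd : (((m : ℝ) * (sgaphat⁻¹ * sgaphat⁻¹)) • vecMulVec bhat bhat).PosSemidef :=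
    psd_smul_vmv bhat (by positivity)
  have hNPD : (A * diagInv s * diagInv s * Aᵀ +
      ((m : ℝ) * (sgap⁻¹ * sgap⁻¹)) • vecMulVec b b).PosDef := pd_add_psd hPD hEpsd
  have hNhPD : (A * diagInv s * diagInv s * Aᵀ +
      ((m : ℝ) * (sgaphat⁻¹ * sgaphat⁻¹)) • vecMulVec bhat bhat).PosDef := pd_add_psd hPD hEhpsd
  rw [hAtil, eta_formula A s b sgap hNPD]
  rw [hAhat, eta_formula A s bhat sgaphat hNhPD] at hη
  set M : Matrix (Fin n) (Fin n) ℝ := A * diagInv s * diagInv s * Aᵀ with hMdef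
  set v : Fin n → ℝ := (A * diagInv s) *ᵥ (fun _ => 1) with hvdef
  set w : Fin n → ℝ := v - ((m : ℝ) * sgap⁻¹) • b with hwdef
  set wh : Fin n → ℝ := v - ((m : ℝ) * sgaphat⁻¹) • bhat with hwhdef
  set E : Matrix (Fin n) (Fin n) ℝ := ((m : ℝ) * (sgap⁻¹ * sgap⁻¹)) • vecMulVec b b with hEdef
  set Eh : Matrix (Fin n) (Fin n) ℝ :=
    ((m : ℝ) * (sgaphat⁻¹ * sgaphat⁻¹)) • vecMulVec bhat bhat with hEhdef
  have hMsym : Mᵀ = M := herm_transpose hPD.1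
  have hMw : ∀ u : Fin n → ℝ, M *ᵥ (M⁻¹ *ᵥ u) = u := fun u => by
    rw [mulVec_mulVec, pd_mul_inv' hPD, one_mulVec]
  have hQpsd : (M⁻¹).PosSemidef := hPD.inv.posSemidef
  -- basic quantities
  have hβ0 : 0 ≤ mnorm M⁻¹ b := Real.sqrt_nonneg _
  have hβh0 : 0 ≤ mnorm M⁻¹ bhat := Real.sqrt_nonneg _
  have hβsq : mnorm M⁻¹ b ^ 2 = b ⬝ᵥ M⁻¹ *ᵥ b := Real.sq_sqrt (qf_nonneg hQpsd b)
  have hβhsq : mnorm M⁻¹ bhat ^ 2 = bhat ⬝ᵥ M⁻¹ *ᵥ bhat := Real.sq_sqrt (qf_nonneg hQpsd bhat)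
  have hm0 : (0 : ℝ) ≤ (m : ℝ) := Nat.cast_nonneg m
  have hp0 : (0 : ℝ) ≤ sgap⁻¹ := by positivity
  have hph0 : (0 : ℝ) ≤ sgaphat⁻¹ := by positivity
  -- scaled norm bounds
  have hcb : (m : ℝ) * sgap⁻¹ * mnorm M⁻¹ b ≤ 1 / 40 := by
    have h := mul_le_mul_of_nonneg_right h2 hp0
    rw [mul_inv_cancel₀ hsgap.ne'] at h
    nlinarith [h]
  have hchb : (m : ℝ) * sgaphat⁻¹ * mnorm M⁻¹ bhat ≤ 1 / 40 := by
    have h := mul_le_mul_of_nonneg_right h1 hph0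
    rw [mul_inv_cancel₀ hsgaphat.ne'] at h
    nlinarith [h]
  -- comparison N̂ ≼ (1 + 1/1600) M
  have hsmall : (m : ℝ) * (sgaphat⁻¹ * sgaphat⁻¹) * (bhat ⬝ᵥ M⁻¹ *ᵥ bhat) ≤ 1 / 1600 := by
    rw [← hβhsq]
    rcases Nat.eq_zero_or_pos m with hm | hm
    · simp [hm]
    · have hm1 : (1 : ℝ) ≤ (m : ℝ) := Nat.one_le_cast.mpr hm
      have hq0 : 0 ≤ (m : ℝ) * sgaphat⁻¹ * mnorm M⁻¹ bhat := by positivity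
      have hbase0 : 0 ≤ (m : ℝ) * (sgaphat⁻¹ * sgaphat⁻¹) * mnorm M⁻¹ bhat ^ 2 := by positivity
      calc (m : ℝ) * (sgaphat⁻¹ * sgaphat⁻¹) * mnorm M⁻¹ bhat ^ 2
          ≤ (m : ℝ) * (sgaphat⁻¹ * sgaphat⁻¹) * mnorm M⁻¹ bhat ^ 2 * m :=
            le_mul_of_one_le_right hbase0 hm1
        _ = ((m : ℝ) * sgaphat⁻¹ * mnorm M⁻¹ bhat) ^ 2 := by ring
        _ ≤ (1 / 40) ^ 2 := pow_le_pow_left₀ hq0 hchb 2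
        _ ≤ 1 / 1600 := by norm_num
  have hcomp : ∀ x, x ⬝ᵥ (M + Eh) *ᵥ x ≤ (1 + 1 / 1600) * (x ⬝ᵥ M *ᵥ x) := by
    intro x
    have hEx : x ⬝ᵥ Eh *ᵥ x = (m : ℝ) * (sgaphat⁻¹ * sgaphat⁻¹) * (bhat ⬝ᵥ x) ^ 2 := by
      rw [hEhdef, smul_mulVec, dotProduct_smul, smul_eq_mul, vmv_qf]
    have hcsb : (bhat ⬝ᵥ x) ^ 2 ≤ (bhat ⬝ᵥ M⁻¹ *ᵥ bhat) * (x ⬝ᵥ M *ᵥ x) := by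
      have e1 : (M⁻¹ *ᵥ bhat) ⬝ᵥ M *ᵥ x = bhat ⬝ᵥ x := by
        rw [dotProduct_mulVec, ← mulVec_transpose, hMsym, hMw bhat]
      have e2 : (M⁻¹ *ᵥ bhat) ⬝ᵥ M *ᵥ (M⁻¹ *ᵥ bhat) = bhat ⬝ᵥ M⁻¹ *ᵥ bhat := by
        rw [hMw bhat, dotProduct_comm]
      have hc := psd_cs hPD.posSemidef (M⁻¹ *ᵥ bhat) x
      rw [e1, e2] at hc
      exact hc
    have hx0 := qf_nonneg hPD.posSemidef x
    have hb0 := qf_nonneg hQpsd bhat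
    have hcoef : (0 : ℝ) ≤ (m : ℝ) * (sgaphat⁻¹ * sgaphat⁻¹) := by positivity
    have hexp : x ⬝ᵥ (M + Eh) *ᵥ x = x ⬝ᵥ M *ᵥ x + x ⬝ᵥ Eh *ᵥ x := by
      rw [add_mulVec, dotProduct_add]
    rw [hexp, hEx]
    nlinarith [mul_le_mul_of_nonneg_left hcsb hcoef,
      mul_le_mul_of_nonneg_right hsmall hx0]
  -- bound on the hatted quadratic form
  have hqh0 := qf_nonneg hNhPD.inv.posSemidef wh
  have hqh : wh ⬝ᵥ (M + Eh)⁻¹ *ᵥ wh ≤ 1 / 1600 := by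
    nlinarith [Real.sq_sqrt hqh0, Real.sqrt_nonneg (wh ⬝ᵥ (M + Eh)⁻¹ *ᵥ wh), hη]
  have hwhM : wh ⬝ᵥ M⁻¹ *ᵥ wh ≤ (1 + 1 / 1600) * (wh ⬝ᵥ (M + Eh)⁻¹ *ᵥ wh) :=
    inv_qf_ge hPD hNhPD (by norm_num) hcomp wh
  have h20 : Real.sqrt (wh ⬝ᵥ M⁻¹ *ᵥ wh) ≤ 1 / 20 := by
    have hle : wh ⬝ᵥ M⁻¹ *ᵥ wh ≤ (1 / 20) ^ 2 := by nlinarith [hqh, hwhM, hqh0]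
    calc Real.sqrt (wh ⬝ᵥ M⁻¹ *ᵥ wh) ≤ Real.sqrt ((1 / 20) ^ 2) := Real.sqrt_le_sqrt hle
      _ = 1 / 20 := Real.sqrt_sq (by norm_num)
  -- triangle inequalities
  have hvQ : Real.sqrt (v ⬝ᵥ M⁻¹ *ᵥ v) ≤ Real.sqrt (wh ⬝ᵥ M⁻¹ *ᵥ wh) +
      (m : ℝ) * sgaphat⁻¹ * mnorm M⁻¹ bhat := by
    have hveq : v = wh + ((m : ℝ) * sgaphat⁻¹) • bhat := by
      rw [hwhdef]; abel
    have h := tri_add hQpsd wh (((m : ℝ) * sgaphat⁻¹) • bhat)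
    rw [← hveq, smul_qf, Real.sqrt_mul (sq_nonneg _), Real.sqrt_sq (by positivity)] at h
    exact h
  have hwQ : Real.sqrt (w ⬝ᵥ M⁻¹ *ᵥ w) ≤ Real.sqrt (v ⬝ᵥ M⁻¹ *ᵥ v) +
      (m : ℝ) * sgap⁻¹ * mnorm M⁻¹ b := by
    have h := tri_sub hQpsd v (((m : ℝ) * sgap⁻¹) • b)
    rw [smul_qf, Real.sqrt_mul (sq_nonneg _), Real.sqrt_sq (by positivity)] at h
    exact h
  -- final chain
  have hfin : w ⬝ᵥ (M + E)⁻¹ *ᵥ w ≤ w ⬝ᵥ M⁻¹ *ᵥ w := inv_qf_le hPD hEpsd w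
  calc Real.sqrt (w ⬝ᵥ (M + E)⁻¹ *ᵥ w) ≤ Real.sqrt (w ⬝ᵥ M⁻¹ *ᵥ w) :=
        Real.sqrt_le_sqrt hfin
    _ ≤ Real.sqrt (v ⬝ᵥ M⁻¹ *ᵥ v) + (m : ℝ) * sgap⁻¹ * mnorm M⁻¹ b := hwQ
    _ ≤ (Real.sqrt (wh ⬝ᵥ M⁻¹ *ᵥ wh) + (m : ℝ) * sgaphat⁻¹ * mnorm M⁻¹ bhat) +
        (m : ℝ) * sgap⁻¹ * mnorm M⁻¹ b := by linarith [hvQ]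
    _ ≤ 1 / 20 + 1 / 40 + 1 / 40 := by linarith [h20, hchb, hcb]
    _ ≤ 1 / 10 := by norm_num
end

section
/- Let U ≥ 1 and K > 0 be real numbers, let A be an (n−2)×m real matrix all of whose entries have absolute value at most U, and let u_t ∈ ℝ^m be a standard basis vector. Suppose y₁ ∈ ℝ^{n−2}, y₂, s₁, s₂, s₃ ∈ ℝ^m, and s₄, s₅ ∈ ℝ^{n−2}, with s₁, s₂, s₃, s₄, s₅ all componentwise nonnegative, satisfy: Aᵀy₁ + y₂ + s₁ = −u_t, y₂ + s₂ = 0, −y₂ + s₃ = K·1_m, y₁ + s₄ = K·1_{n−2}, and −y₁ + s₅ = K·1_{n−2}. Then every coordinate of y₁, y₂, s₁, s₂, s₃, s₄, s₅ has absolute value at most (nU + 1)·K + 1. -/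
open Matrix

/-- **Boundedness of the dual of the modified generalized max-flow LP.** With `K` playing the
role of `4U/ε_FLOW`, every feasible dual point has all coordinates of absolute value at most
`(nU + 1)K + 1`. -/
theorem maxflow_dual_bounded {n m : ℕ} (hn : 2 ≤ n) (U K : ℝ) (hU : 1 ≤ U) (hK : 0 < K)
    (A : Matrix (Fin (n - 2)) (Fin m) ℝ) (hA : ∀ i j, |A i j| ≤ U)
    (t : Fin m)
    (y₁ : Fin (n - 2) → ℝ) (y₂ : Fin m → ℝ)
    (s₁ s₂ s₃ : Fin m → ℝ) (s₄ s₅ : Fin (n - 2) → ℝ)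
    (hs₁ : ∀ j, 0 ≤ s₁ j) (hs₂ : ∀ j, 0 ≤ s₂ j) (hs₃ : ∀ j, 0 ≤ s₃ j)
    (hs₄ : ∀ i, 0 ≤ s₄ i) (hs₅ : ∀ i, 0 ≤ s₅ i)
    (e₁ : Aᵀ *ᵥ y₁ + y₂ + s₁ = -Pi.single t 1)
    (e₂ : y₂ + s₂ = 0)
    (e₃ : -y₂ + s₃ = fun _ => K)
    (e₄ : y₁ + s₄ = fun _ => K)
    (e₅ : -y₁ + s₅ = fun _ => K) :
    (∀ i, |y₁ i| ≤ (n * U + 1) * K + 1) ∧ (∀ j, |y₂ j| ≤ (n * U + 1) * K + 1) ∧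
      (∀ j, |s₁ j| ≤ (n * U + 1) * K + 1) ∧ (∀ j, |s₂ j| ≤ (n * U + 1) * K + 1) ∧
      (∀ j, |s₃ j| ≤ (n * U + 1) * K + 1) ∧ (∀ i, |s₄ i| ≤ (n * U + 1) * K + 1) ∧
      (∀ i, |s₅ i| ≤ (n * U + 1) * K + 1) := by

  have hn2 : (2:ℝ) ≤ (n:ℝ) := by exact_mod_cast hn
  have hcast : ((n - 2 : ℕ) : ℝ) ≤ (n : ℝ) := by exact_mod_cast Nat.sub_le n 2
  have hy₁ : ∀ i, |y₁ i| ≤ K := by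
    intro i
    have h4 : y₁ i + s₄ i = K := congrFun e₄ i
    have h5 : -y₁ i + s₅ i = K := congrFun e₅ i
    rw [abs_le]; constructor <;> linarith [hs₄ i, hs₅ i]
  have hy₂ : ∀ j, |y₂ j| ≤ K := by
    intro j
    have h2 : y₂ j + s₂ j = 0 := congrFun e₂ j
    have h3 : -y₂ j + s₃ j = K := congrFun e₃ j
    rw [abs_le]; constructor <;> linarith [hs₂ j, hs₃ j]
  have hnU2 : (2:ℝ) ≤ n * U := by nlinarith
  have hM2 : 2 * K ≤ (n * U + 1) * K + 1 := by nlinarith [mul_le_mul_of_nonneg_right hnU2 hK.le]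
  have hM1 : K ≤ (n * U + 1) * K + 1 := by nlinarith [mul_le_mul_of_nonneg_right hnU2 hK.le]
  refine ⟨fun i => le_trans (hy₁ i) hM1, fun j => le_trans (hy₂ j) hM1, ?_, ?_, ?_, ?_, ?_⟩
  · intro j
    have h1 := congrFun e₁ j
    simp only [Pi.add_apply, Pi.neg_apply] at h1
    have hAv : |(Aᵀ *ᵥ y₁) j| ≤ ((n - 2 : ℕ) : ℝ) * (U * K) := by
      have heq : (Aᵀ *ᵥ y₁) j = ∑ i, A i j * y₁ i := by
        simp [Matrix.mulVec, dotProduct, Matrix.transpose_apply]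
      rw [heq]
      calc |∑ i, A i j * y₁ i| ≤ ∑ i, |A i j * y₁ i| := Finset.abs_sum_le_sum_abs _ _
        _ ≤ ∑ _i : Fin (n-2), U * K := by
            apply Finset.sum_le_sum
            intro i _
            rw [abs_mul]
            exact mul_le_mul (hA i j) (hy₁ i) (abs_nonneg _) (by linarith)
        _ = ((n - 2 : ℕ) : ℝ) * (U * K) := by
            simp [Finset.sum_const, Finset.card_univ]
    have hsingle : |(Pi.single t 1 : Fin m → ℝ) j| ≤ 1 := by
      rcases eq_or_ne j t with h | h <;> simp [Pi.single_apply, h]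
    have h1' : s₁ j = -((Pi.single t 1 : Fin m → ℝ) j) - (Aᵀ *ᵥ y₁) j - y₂ j := by linarith
    have hnU : ((n - 2 : ℕ) : ℝ) * (U * K) ≤ n * U * K := by
      have : 0 ≤ U * K := by positivity
      nlinarith
    have := abs_le.mp hAv
    have := abs_le.mp hsingle
    have := abs_le.mp (hy₂ j)
    rw [abs_le]; constructor <;> nlinarith
  · intro j
    have h2 : y₂ j + s₂ j = 0 := congrFun e₂ j
    have := abs_le.mp (hy₂ j)
    rw [abs_le]; constructor <;> linarith [hs₂ j]
  · intro j
    have h2 : y₂ j + s₂ j = 0 := congrFun e₂ j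
    have h3 : -y₂ j + s₃ j = K := congrFun e₃ j
    have := abs_le.mp (hy₂ j)
    rw [abs_le]; constructor <;> linarith [hs₃ j]
  · intro i
    have h4 : y₁ i + s₄ i = K := congrFun e₄ i
    have := abs_le.mp (hy₁ i)
    rw [abs_le]; constructor <;> linarith [hs₄ i]
  · intro i
    have h5 : -y₁ i + s₅ i = K := congrFun e₅ i
    have := abs_le.mp (hy₁ i)
    rw [abs_le]; constructor <;> linarith [hs₅ i]
end

section
/- Let m ≥ 1 and U ≥ 1 be integers, let V be a finite nonempty set of vectors in ℝ^m all of whose coordinates are integers in {0, 1, …, U}, and let q ∈ ℝ^m have integer coordinates in {1, …, U}. Let δ₁, …, δ_m be independent random variables, each uniformly distributed on the set {k/(4m²U²) : k = 1, …, 2mU}, and let δ = (δ₁, …, δ_m). Then with probability at least 1/2, both of the following hold: there is a unique vector v* ∈ V minimizing (q+δ)ᵀv over v ∈ V, and this v* also satisfies qᵀv* = min_{v ∈ V} qᵀv. -/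
open Matrix

namespace PerturbIso

open scoped Classical

variable {m N : ℕ}

/-- perturbed cost of vector `v` under sample `ω`. -/
noncomputable def pc (q : Fin m → ℝ) (D : ℝ) (ω : Fin m → Fin N) (v : Fin m → ℝ) : ℝ :=
  (q + fun j => (((ω j : ℕ) : ℝ) + 1) / D) ⬝ᵥ v

/-- the set of minimizers of the perturbed cost. -/
noncomputable def mins (q : Fin m → ℝ) (D : ℝ) (V : Finset (Fin m → ℝ))
    (ω : Fin m → Fin N) : Finset (Fin m → ℝ) :=
  V.filter (fun v => ∀ u ∈ V, pc q D ω v ≤ pc q D ω u)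

/-- `ω` is bad at coordinate `i` if two minimizers differ in coordinate `i`. -/
def bad (q : Fin m → ℝ) (D : ℝ) (V : Finset (Fin m → ℝ)) (i : Fin m)
    (ω : Fin m → Fin N) : Prop :=
  ∃ v ∈ mins q D V ω, ∃ w ∈ mins q D V ω, v i ≠ w i

/-- the largest `i`-th coordinate of a minimizer. -/
noncomputable def fval (q : Fin m → ℝ) (D : ℝ) (V : Finset (Fin m → ℝ)) (i : Fin m)
    (ω : Fin m → Fin N) : ℝ :=
  if h : (mins q D V ω).Nonempty then (mins q D V ω).sup' h (fun v => v i) else 0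

lemma mem_mins {q : Fin m → ℝ} {D : ℝ} {V : Finset (Fin m → ℝ)} {ω : Fin m → Fin N}
    {v : Fin m → ℝ} :
    v ∈ mins q D V ω ↔ v ∈ V ∧ ∀ u ∈ V, pc q D ω v ≤ pc q D ω u := Finset.mem_filter

lemma pc_sub {q : Fin m → ℝ} {D : ℝ} (hD : D ≠ 0) (i : Fin m) {ω₁ ω₂ : Fin m → Fin N}
    (hag : ∀ j, j ≠ i → ω₁ j = ω₂ j) (u : Fin m → ℝ) :
    pc q D ω₂ u - pc q D ω₁ u
      = (((ω₂ i : ℕ) : ℝ) - ((ω₁ i : ℕ) : ℝ)) / D * u i := by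
  simp only [pc, dotProduct, Pi.add_apply, ← Finset.sum_sub_distrib]
  rw [Finset.sum_eq_single i]
  · field_simp
    ring
  · intro j _ hj
    rw [hag j hj]
    ring
  · intro h
    exact absurd (Finset.mem_univ i) h

/-- If `ω` is bad at `i`, then the max minimizer-coordinate is attained and some
minimizer has strictly smaller `i`-th coordinate. -/
lemma bad_witness {q : Fin m → ℝ} {D : ℝ} {V : Finset (Fin m → ℝ)} {i : Fin m}
    {ω : Fin m → Fin N} (h : bad q D V i ω) :
    (∃ v ∈ mins q D V ω, v i = fval q D V i ω) ∧
      (∃ w ∈ mins q D V ω, w i < fval q D V i ω) := by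
  obtain ⟨v, hv, w, hw, hvw⟩ := h
  have hne : (mins q D V ω).Nonempty := ⟨v, hv⟩
  have hfv : fval q D V i ω = (mins q D V ω).sup' hne (fun v => v i) := dif_pos hne
  obtain ⟨v₀, hv₀, hv₀e⟩ := Finset.exists_mem_eq_sup' hne (fun v => v i)
  refine ⟨⟨v₀, hv₀, by rw [hfv, hv₀e]⟩, ?_⟩
  rcases lt_or_gt_of_ne hvw with hlt | hlt
  · exact ⟨v, hv, lt_of_lt_of_le hlt (by rw [hfv]; exact Finset.le_sup' (fun u => u i) hw)⟩
  · exact ⟨w, hw, lt_of_lt_of_le hlt (by rw [hfv]; exact Finset.le_sup' (fun u => u i) hv)⟩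

lemma slice_lt {q : Fin m → ℝ} {D : ℝ} (hD : 0 < D) {V : Finset (Fin m → ℝ)} {i : Fin m}
    {ω₁ ω₂ : Fin m → Fin N} (hag : ∀ j, j ≠ i → ω₁ j = ω₂ j)
    (h₁ : bad q D V i ω₁) (h₂ : bad q D V i ω₂)
    (hf : fval q D V i ω₁ = fval q D V i ω₂)
    (hlt : (ω₁ i : ℕ) < (ω₂ i : ℕ)) : False := by
  obtain ⟨⟨v, hv, hvi⟩, ⟨w, hw, hwi⟩⟩ := bad_witness h₁
  obtain ⟨⟨v', hv', hvi'⟩, -⟩ := bad_witness h₂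
  have hΔ : (0 : ℝ) < (((ω₂ i : ℕ) : ℝ) - ((ω₁ i : ℕ) : ℝ)) / D := by
    apply div_pos _ hD
    have : ((ω₁ i : ℕ) : ℝ) < ((ω₂ i : ℕ) : ℝ) := by exact_mod_cast hlt
    linarith
  set Δ : ℝ := (((ω₂ i : ℕ) : ℝ) - ((ω₁ i : ℕ) : ℝ)) / D with hΔdef
  have hvm := (mem_mins.mp hv)
  have hwm := (mem_mins.mp hw)
  have hvm' := (mem_mins.mp hv')
  have e1 : pc q D ω₂ w - pc q D ω₁ w = Δ * w i := pc_sub (ne_of_gt hD) i hag w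
  have e2 : pc q D ω₂ v - pc q D ω₁ v = Δ * v i := pc_sub (ne_of_gt hD) i hag v
  have e3 : pc q D ω₂ v' - pc q D ω₁ v' = Δ * v' i := pc_sub (ne_of_gt hD) i hag v'
  have h1 : pc q D ω₁ w = pc q D ω₁ v :=
    le_antisymm (hwm.2 v hvm.1) (hvm.2 w hwm.1)
  have h2 : pc q D ω₂ v' ≤ pc q D ω₂ w := hvm'.2 w hwm.1
  have h3 : pc q D ω₁ v ≤ pc q D ω₁ v' := hvm.2 v' hvm'.1
  have hmul : Δ * w i < Δ * v i := by
    apply mul_lt_mul_of_pos_left _ hΔ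
    rw [hvi]
    exact hwi
  have hveq : v' i = v i := by rw [hvi', ← hf, hvi]
  rw [hveq] at e3
  linarith

/-- Within a slice (samples agreeing off coordinate `i`), a bad sample is determined
by the largest minimizer-coordinate value. -/
lemma slice_inj {q : Fin m → ℝ} {D : ℝ} (hD : 0 < D) {V : Finset (Fin m → ℝ)} {i : Fin m}
    {ω₁ ω₂ : Fin m → Fin N} (hag : ∀ j, j ≠ i → ω₁ j = ω₂ j)
    (h₁ : bad q D V i ω₁) (h₂ : bad q D V i ω₂)
    (hf : fval q D V i ω₁ = fval q D V i ω₂) : ω₁ = ω₂ := by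
  have hii : ω₁ i = ω₂ i := by
    rcases lt_trichotomy ((ω₁ i : ℕ)) ((ω₂ i : ℕ)) with h | h | h
    · exact absurd (slice_lt hD hag h₁ h₂ hf h) (fun x => x)
    · exact Fin.ext h
    · exact absurd (slice_lt hD (fun j hj => (hag j hj).symm) h₂ h₁ hf.symm h) (fun x => x)
  funext j
  by_cases hj : j = i
  · rw [hj]; exact hii
  · exact hag j hj

/-- On a bad sample, `fval` is (the cast of) a natural number in `{1, …, U}`. -/
lemma fval_mem {q : Fin m → ℝ} {D : ℝ} {V : Finset (Fin m → ℝ)} {i : Fin m} {U : ℕ}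
    (hVint : ∀ v ∈ V, ∃ k : ℕ, k ≤ U ∧ v i = (k : ℝ))
    {ω : Fin m → Fin N} (h : bad q D V i ω) :
    ∃ k : ℕ, 1 ≤ k ∧ k ≤ U ∧ fval q D V i ω = (k : ℝ) := by
  obtain ⟨⟨v, hv, hvi⟩, ⟨w, hw, hwi⟩⟩ := bad_witness h
  obtain ⟨k, hkU, hkv⟩ := hVint v (mem_mins.mp hv).1
  obtain ⟨k', _, hkw⟩ := hVint w (mem_mins.mp hw).1
  refine ⟨k, ?_, hkU, by rw [← hvi, hkv]⟩
  have h0 : (0 : ℝ) ≤ w i := by rw [hkw]; positivity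
  have : (0 : ℝ) < (k : ℝ) := by
    rw [← hkv, hvi]
    exact lt_of_le_of_lt h0 hwi
  exact_mod_cast this

end PerturbIso

open PerturbIso in
/-- **Isolation of a minimum-cost vertex by random perturbation.** Let `V` be a nonempty
finite set of vectors in `ℝ^m` with integer coordinates in `{0, …, U}` and `q` an integer
cost vector with coordinates in `{1, …, U}`. Perturb each cost independently by a value
uniform on `{k/(4m²U²) : k = 1, …, 2mU}` (modelled here by the uniform measure on
`Fin m → Fin (2mU)`). Then with probability at least `1/2` there is a unique vector of `V`
minimizing the perturbed cost, and it also minimizes the original cost. -/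
theorem perturbed_costs_isolate {m U : ℕ} (hm : 1 ≤ m) (hU : 1 ≤ U)
    (V : Finset (Fin m → ℝ)) (hV : V.Nonempty)
    (hVint : ∀ v ∈ V, ∀ i, ∃ k : ℕ, k ≤ U ∧ v i = (k : ℝ))
    (q : Fin m → ℝ) (hq : ∀ i, ∃ k : ℕ, 1 ≤ k ∧ k ≤ U ∧ q i = (k : ℝ)) :
    (1 / 2 : ENNReal) ≤
      (PMF.uniformOfFinset (Finset.univ : Finset (Fin m → Fin (2 * m * U)))
          ⟨fun _ => ⟨0, Nat.mul_pos (Nat.mul_pos Nat.zero_lt_two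
              (Nat.lt_of_lt_of_le Nat.zero_lt_one hm))
            (Nat.lt_of_lt_of_le Nat.zero_lt_one hU)⟩, Finset.mem_univ _⟩).toMeasure
        {ω | ∃ v₀ ∈ V,
          (∀ v ∈ V, v ≠ v₀ →
            ((q + fun i => (((ω i : ℕ) : ℝ) + 1) / (4 * m ^ 2 * U ^ 2)) ⬝ᵥ v₀ <
              (q + fun i => (((ω i : ℕ) : ℝ) + 1) / (4 * m ^ 2 * U ^ 2)) ⬝ᵥ v)) ∧
          (∀ v ∈ V, q ⬝ᵥ v₀ ≤ q ⬝ᵥ v)} := by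
  classical
  set N : ℕ := 2 * m * U with hNdef
  have hN : 0 < N := by
    have := Nat.mul_pos (Nat.mul_pos Nat.zero_lt_two
      (Nat.lt_of_lt_of_le Nat.zero_lt_one hm)) (Nat.lt_of_lt_of_le Nat.zero_lt_one hU)
    omega
  set D : ℝ := 4 * (m : ℝ) ^ 2 * (U : ℝ) ^ 2 with hDdef
  have hm' : (1 : ℝ) ≤ (m : ℝ) := by exact_mod_cast hm
  have hU' : (1 : ℝ) ≤ (U : ℝ) := by exact_mod_cast hU
  have hm0 : (0 : ℝ) < (m : ℝ) := by linarith
  have hU0 : (0 : ℝ) < (U : ℝ) := by linarith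
  have hD : (0 : ℝ) < D := by
    rw [hDdef]
    exact mul_pos (mul_pos (by norm_num) (pow_pos hm0 2)) (pow_pos hU0 2)
  -- integrality data
  choose kq hkq1 hkq2 hkq3 using hq
  choose nv hnvle hnveq using hVint
  have hqnat : ∀ v (hv : v ∈ V), q ⬝ᵥ v = ((∑ j, kq j * nv v hv j : ℕ) : ℝ) := by
    intro v hv
    rw [dotProduct]
    push_cast
    exact Finset.sum_congr rfl fun j _ => by rw [hkq3 j, hnveq v hv j]
  -- the perturbation part of the cost is in [0, 1/2]
  have hpert : ∀ (ω : Fin m → Fin N) (v) (hv : v ∈ V),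
      0 ≤ (fun j => (((ω j : ℕ) : ℝ) + 1) / D) ⬝ᵥ v ∧
        (fun j => (((ω j : ℕ) : ℝ) + 1) / D) ⬝ᵥ v ≤ 1 / 2 := by
    intro ω v hv
    have hv0 : ∀ j, (0 : ℝ) ≤ v j := fun j => by rw [hnveq v hv j]; positivity
    have hvU : ∀ j, v j ≤ (U : ℝ) := fun j => by
      rw [hnveq v hv j]; exact_mod_cast hnvle v hv j
    constructor
    · rw [dotProduct]
      apply Finset.sum_nonneg
      intro j _
      have : (0:ℝ) ≤ (((ω j : ℕ) : ℝ) + 1) / D := by positivity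
      exact mul_nonneg this (hv0 j)
    · rw [dotProduct]
      have hterm : ∀ j ∈ Finset.univ, (((ω j : ℕ) : ℝ) + 1) / D * v j ≤ (N : ℝ) / D * U := by
        intro j _
        have h1 : (((ω j : ℕ) : ℝ) + 1) ≤ (N : ℝ) := by
          have := (ω j).isLt
          exact_mod_cast Nat.succ_le_of_lt this
        have h2 : (0:ℝ) ≤ (((ω j : ℕ) : ℝ) + 1) := by positivity
        gcongr
        · exact hv0 j
        · exact hvU j
      calc ∑ j, (((ω j : ℕ) : ℝ) + 1) / D * v j ≤ ∑ _j : Fin m, (N : ℝ) / D * U :=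
            Finset.sum_le_sum hterm
        _ = (m : ℝ) * ((N : ℝ) / D * U) := by
            rw [Finset.sum_const, Finset.card_univ, Fintype.card_fin, nsmul_eq_mul]
        _ = 1 / 2 := by
            rw [hNdef, hDdef]
            push_cast
            field_simp
            ring
  -- a minimizer of the perturbed cost minimizes the original cost
  have hqmin : ∀ (ω : Fin m → Fin N) (v₀) (hv₀ : v₀ ∈ V),
      (∀ u ∈ V, pc q D ω v₀ ≤ pc q D ω u) → ∀ v ∈ V, q ⬝ᵥ v₀ ≤ q ⬝ᵥ v := by
    intro ω v₀ hv₀ hmin v hv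
    by_contra hlt
    push_neg at hlt
    have ha := hqnat v hv
    have hb := hqnat v₀ hv₀
    have hab : (∑ j, kq j * nv v hv j : ℕ) < (∑ j, kq j * nv v₀ hv₀ j : ℕ) := by
      have := hlt
      rw [ha, hb] at this
      exact_mod_cast this
    have hab' : ((∑ j, kq j * nv v hv j : ℕ) : ℝ) + 1 ≤ ((∑ j, kq j * nv v₀ hv₀ j : ℕ) : ℝ) := by
      exact_mod_cast Nat.succ_le_of_lt hab
    have hpv := hpert ω v hv
    have hpv₀ := hpert ω v₀ hv₀
    have hcv : pc q D ω v = q ⬝ᵥ v + (fun j => (((ω j : ℕ) : ℝ) + 1) / D) ⬝ᵥ v := by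
      rw [pc, add_dotProduct]
    have hcv₀ : pc q D ω v₀ = q ⬝ᵥ v₀ + (fun j => (((ω j : ℕ) : ℝ) + 1) / D) ⬝ᵥ v₀ := by
      rw [pc, add_dotProduct]
    have := hmin v hv
    rw [hcv, hcv₀, ha, hb] at this
    linarith [hpv.1, hpv.2, hpv₀.1, hpv₀.2]
  -- a sample that is bad at no coordinate lies in the event
  have hgood : ∀ ω : Fin m → Fin N, (∀ i, ¬ bad q D V i ω) →
      ∃ v₀ ∈ V, (∀ v ∈ V, v ≠ v₀ → pc q D ω v₀ < pc q D ω v) ∧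
        (∀ v ∈ V, q ⬝ᵥ v₀ ≤ q ⬝ᵥ v) := by
    intro ω hnb
    obtain ⟨v₀, hv₀, hmin⟩ := V.exists_min_image (pc q D ω) hV
    refine ⟨v₀, hv₀, ?_, hqmin ω v₀ hv₀ hmin⟩
    intro v hv hne
    rcases lt_or_eq_of_le (hmin v hv) with hlt | heq
    · exact hlt
    · exfalso
      obtain ⟨i, hi⟩ := Function.ne_iff.mp hne
      apply hnb i
      refine ⟨v, mem_mins.mpr ⟨hv, fun u hu => ?_⟩, v₀, mem_mins.mpr ⟨hv₀, hmin⟩, hi⟩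
      rw [← heq]
      exact hmin u hu
  -- counting bad samples at a fixed coordinate
  set T : Finset ℝ := (Finset.Icc 1 U).image (fun k : ℕ => (k : ℝ)) with hTdef
  have hTcard : T.card ≤ U := by
    refine Finset.card_image_le.trans ?_
    simp [Nat.card_Icc]
  have hBi : ∀ i : Fin m,
      (((Finset.univ : Finset (Fin m → Fin N)).filter (bad q D V i)).card) * N ≤ U * N ^ m := by
    intro i
    have hinj := Finset.card_le_card_of_injOn
      (s := ((Finset.univ : Finset (Fin m → Fin N)).filter (bad q D V i)) ×ˢ (Finset.univ : Finset (Fin N)))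
      (t := T ×ˢ (Finset.univ : Finset (Fin m → Fin N)))
      (fun p => (fval q D V i p.1, Function.update p.1 i p.2)) ?_ ?_
    · have h1 : (((Finset.univ : Finset (Fin m → Fin N)).filter (bad q D V i)) ×ˢ
          (Finset.univ : Finset (Fin N))).card
            = ((Finset.univ : Finset (Fin m → Fin N)).filter (bad q D V i)).card * N := by
        rw [Finset.card_product, Finset.card_univ, Fintype.card_fin]
      have h2 : (T ×ˢ (Finset.univ : Finset (Fin m → Fin N))).card ≤ U * N ^ m := by
        rw [Finset.card_product, Finset.card_univ]
        have : Fintype.card (Fin m → Fin N) = N ^ m := by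
          rw [Fintype.card_fun, Fintype.card_fin, Fintype.card_fin]
        rw [this]
        exact Nat.mul_le_mul_right _ hTcard
      omega
    · rintro ⟨ω, z⟩ hp
      rw [Finset.mem_coe, Finset.mem_product] at hp ⊢
      obtain ⟨hω, -⟩ := hp
      rw [Finset.mem_filter] at hω
      obtain ⟨k, hk1, hkU, hke⟩ := fval_mem (fun v hv => ⟨nv v hv i, hnvle v hv i, hnveq v hv i⟩) hω.2
      refine ⟨?_, Finset.mem_univ _⟩
      rw [hTdef, Finset.mem_image]
      exact ⟨k, Finset.mem_Icc.mpr ⟨hk1, hkU⟩, hke.symm⟩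
    · rintro ⟨ω₁, z₁⟩ hp₁ ⟨ω₂, z₂⟩ hp₂ heq
      simp only [Finset.coe_product, Set.mem_prod, Finset.mem_coe, Finset.mem_filter] at hp₁ hp₂
      have hfe : fval q D V i ω₁ = fval q D V i ω₂ := congrArg Prod.fst heq
      have hue : Function.update ω₁ i z₁ = Function.update ω₂ i z₂ := congrArg Prod.snd heq
      have hz : z₁ = z₂ := by
        have := congrFun hue i
        rwa [Function.update_self, Function.update_self] at this
      have hag : ∀ j, j ≠ i → ω₁ j = ω₂ j := by
        intro j hj
        have := congrFun hue j
        rwa [Function.update_of_ne hj, Function.update_of_ne hj] at this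
      have hωe : ω₁ = ω₂ := slice_inj hD hag hp₁.1.2 hp₂.1.2 hfe
      rw [hωe, hz]
  -- total count of bad samples
  have hcard_univ : Fintype.card (Fin m → Fin N) = N ^ m := by
    rw [Fintype.card_fun, Fintype.card_fin, Fintype.card_fin]
  set G : Finset (Fin m → Fin N) := Finset.univ.filter (fun ω =>
    ∃ v₀ ∈ V, (∀ v ∈ V, v ≠ v₀ → pc q D ω v₀ < pc q D ω v) ∧
      (∀ v ∈ V, q ⬝ᵥ v₀ ≤ q ⬝ᵥ v)) with hGdef
  have hGcard : N ^ m ≤ 2 * G.card := by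
    have hsub : Finset.univ.filter (fun ω : Fin m → Fin N => ¬ (∃ v₀ ∈ V,
        (∀ v ∈ V, v ≠ v₀ → pc q D ω v₀ < pc q D ω v) ∧ (∀ v ∈ V, q ⬝ᵥ v₀ ≤ q ⬝ᵥ v)))
          ⊆ Finset.univ.biUnion (fun i => (Finset.univ : Finset (Fin m → Fin N)).filter (bad q D V i)) := by
      intro ω hω
      rw [Finset.mem_filter] at hω
      rw [Finset.mem_biUnion]
      by_contra hc
      push_neg at hc
      apply hω.2
      apply hgood
      intro i hbad
      exact (hc i (Finset.mem_univ i)) (Finset.mem_filter.mpr ⟨Finset.mem_univ _, hbad⟩)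
    have hb1 : (Finset.univ.filter (fun ω : Fin m → Fin N => ¬ (∃ v₀ ∈ V,
        (∀ v ∈ V, v ≠ v₀ → pc q D ω v₀ < pc q D ω v) ∧ (∀ v ∈ V, q ⬝ᵥ v₀ ≤ q ⬝ᵥ v)))).card
          ≤ ∑ i : Fin m, ((Finset.univ : Finset (Fin m → Fin N)).filter (bad q D V i)).card :=
      (Finset.card_le_card hsub).trans (Finset.card_biUnion_le)
    have hb2 : (∑ i : Fin m, ((Finset.univ : Finset (Fin m → Fin N)).filter (bad q D V i)).card) * N ≤ m * (U * N ^ m) := by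
      calc (∑ i : Fin m, ((Finset.univ : Finset (Fin m → Fin N)).filter (bad q D V i)).card) * N
          = ∑ i : Fin m, (((Finset.univ : Finset (Fin m → Fin N)).filter (bad q D V i)).card * N) := by
            rw [Finset.sum_mul]
        _ ≤ ∑ _i : Fin m, U * N ^ m := Finset.sum_le_sum fun i _ => hBi i
        _ = m * (U * N ^ m) := by rw [Finset.sum_const, Finset.card_univ, Fintype.card_fin,
            smul_eq_mul]
    have hkey : 2 * (m * (U * N ^ m)) = N ^ m * N := by rw [hNdef]; ring
    have hsplit := Finset.card_filter_add_card_filter_not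
      (s := (Finset.univ : Finset (Fin m → Fin N))) (p := fun ω => ∃ v₀ ∈ V,
        (∀ v ∈ V, v ≠ v₀ → pc q D ω v₀ < pc q D ω v) ∧ (∀ v ∈ V, q ⬝ᵥ v₀ ≤ q ⬝ᵥ v))
    rw [Finset.card_univ, hcard_univ] at hsplit
    have hbadhalf : 2 * (Finset.univ.filter (fun ω : Fin m → Fin N => ¬ (∃ v₀ ∈ V,
        (∀ v ∈ V, v ≠ v₀ → pc q D ω v₀ < pc q D ω v) ∧
          (∀ v ∈ V, q ⬝ᵥ v₀ ≤ q ⬝ᵥ v)))).card ≤ N ^ m := by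
      have : 2 * ((Finset.univ.filter (fun ω : Fin m → Fin N => ¬ (∃ v₀ ∈ V,
          (∀ v ∈ V, v ≠ v₀ → pc q D ω v₀ < pc q D ω v) ∧
            (∀ v ∈ V, q ⬝ᵥ v₀ ≤ q ⬝ᵥ v)))).card) * N ≤ N ^ m * N := by
        calc 2 * ((Finset.univ.filter (fun ω : Fin m → Fin N => ¬ (∃ v₀ ∈ V,
            (∀ v ∈ V, v ≠ v₀ → pc q D ω v₀ < pc q D ω v) ∧
              (∀ v ∈ V, q ⬝ᵥ v₀ ≤ q ⬝ᵥ v)))).card) * N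
            ≤ 2 * ((∑ i : Fin m, ((Finset.univ : Finset (Fin m → Fin N)).filter (bad q D V i)).card) * N) := by
              rw [Nat.mul_assoc]
              exact Nat.mul_le_mul_left _ (Nat.mul_le_mul_right _ hb1)
          _ ≤ 2 * (m * (U * N ^ m)) := Nat.mul_le_mul_left _ hb2
          _ = N ^ m * N := hkey
      exact Nat.le_of_mul_le_mul_right this hN
    rw [hGdef]
    omega
  -- from counting to measure
  have hmeasE : MeasurableSet {ω : Fin m → Fin N | ∃ v₀ ∈ V,
      (∀ v ∈ V, v ≠ v₀ →
        ((q + fun i => (((ω i : ℕ) : ℝ) + 1) / D) ⬝ᵥ v₀ <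
          (q + fun i => (((ω i : ℕ) : ℝ) + 1) / D) ⬝ᵥ v)) ∧
      (∀ v ∈ V, q ⬝ᵥ v₀ ≤ q ⬝ᵥ v)} :=
    (Set.to_countable _).measurableSet
  erw [PMF.toMeasure_uniformOfFinset_apply _ _ hmeasE]
  have hGF : ∀ (h : DecidablePred (· ∈ {ω : Fin m → Fin N | ∃ v₀ ∈ V,
      (∀ v ∈ V, v ≠ v₀ →
        ((q + fun i => (((ω i : ℕ) : ℝ) + 1) / D) ⬝ᵥ v₀ <
          (q + fun i => (((ω i : ℕ) : ℝ) + 1) / D) ⬝ᵥ v)) ∧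
      (∀ v ∈ V, q ⬝ᵥ v₀ ≤ q ⬝ᵥ v)})),
      @Finset.filter _ _ h Finset.univ = G := by
    intro h
    rw [hGdef]
    apply Finset.filter_congr
    intro ω _
    exact Iff.rfl
  rw [hGF _, Finset.card_univ, hcard_univ]
  have hNm0 : ((N ^ m : ℕ) : ENNReal) ≠ 0 := by
    simp only [ne_eq, Nat.cast_eq_zero, pow_eq_zero_iff']
    omega
  have hNmtop : ((N ^ m : ℕ) : ENNReal) ≠ ⊤ := ENNReal.natCast_ne_top _
  rw [ENNReal.le_div_iff_mul_le (Or.inl hNm0) (Or.inl hNmtop)]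
  have hle : ((N ^ m : ℕ) : ENNReal) ≤ ((2 * G.card : ℕ) : ENNReal) := by
    exact_mod_cast hGcard
  calc (1 / 2 : ENNReal) * ((N ^ m : ℕ) : ENNReal)
      ≤ (1 / 2 : ENNReal) * ((2 * G.card : ℕ) : ENNReal) := mul_le_mul_right hle _
    _ = (G.card : ENNReal) := by
        push_cast
        rw [← mul_assoc, one_div, ENNReal.inv_mul_cancel two_ne_zero ENNReal.ofNat_ne_top,
          one_mul]
end

section
/- For all vectors v, w ∈ ℝ^m and every symmetric positive definite m×m real matrix M: ‖w‖_{M + vvᵀ} ≤ ‖w‖_M · (1 + vᵀM^{-1}v)^{1/2}. -/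
open Matrix

lemma cauchy_schwarz_aux {m : ℕ} (M : Matrix (Fin m) (Fin m) ℝ)
    (hM : M.PosDef) (v w : Fin m → ℝ) :
    (v ⬝ᵥ w) * (v ⬝ᵥ w) ≤ (w ⬝ᵥ M *ᵥ w) * (v ⬝ᵥ M⁻¹ *ᵥ v) := by
  set u : Fin m → ℝ := M⁻¹ *ᵥ v with hu
  have hMu : M *ᵥ u = v := by
    rw [hu, mulVec_mulVec, Matrix.mul_nonsing_inv M (isUnit_iff_ne_zero.mpr hM.det_pos.ne'), one_mulVec]
  have hsymm : Mᵀ = M := hM.isHermitian.eq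
  have huMw : u ⬝ᵥ M *ᵥ w = v ⬝ᵥ w := by
    rw [Matrix.dotProduct_mulVec, ← Matrix.mulVec_transpose, hsymm, hMu]
  have huMu : u ⬝ᵥ M *ᵥ u = v ⬝ᵥ M⁻¹ *ᵥ v := by
    rw [Matrix.dotProduct_mulVec, ← Matrix.mulVec_transpose, hsymm, hMu,
      dotProduct_comm]
  have hwMu : w ⬝ᵥ M *ᵥ u = v ⬝ᵥ w := by
    rw [hMu, dotProduct_comm]
  have key : ∀ t : ℝ, 0 ≤ (v ⬝ᵥ M⁻¹ *ᵥ v) * (t * t) + (2 * (v ⬝ᵥ w)) * t + w ⬝ᵥ M *ᵥ w := by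
    intro t
    have h := hM.posSemidef.dotProduct_mulVec_nonneg (w + t • u)
    simp only [star_trivial, mulVec_add, mulVec_smul, dotProduct_add, add_dotProduct,
      smul_dotProduct, dotProduct_smul, smul_eq_mul, huMw, huMu, hwMu] at h
    nlinarith [h]
  have hd := discrim_le_zero key
  rw [discrim] at hd
  nlinarith [hd]

/-- For every symmetric positive definite `M` and vectors `v, w`:
`‖w‖_{M + vvᵀ} ≤ ‖w‖_M (1 + vᵀ M⁻¹ v)^{1/2}`. -/
theorem mnorm_rank_one_update_le {m : ℕ} (M : Matrix (Fin m) (Fin m) ℝ)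
    (hM : M.PosDef) (v w : Fin m → ℝ) :
    mnorm (M + Matrix.vecMulVec v v) w ≤
      mnorm M w * Real.sqrt (1 + v ⬝ᵥ M⁻¹ *ᵥ v) := by
  have hc : 0 ≤ w ⬝ᵥ M *ᵥ w := hM.posSemidef.dotProduct_mulVec_nonneg w
  have hvv : w ⬝ᵥ (Matrix.vecMulVec v v) *ᵥ w = (v ⬝ᵥ w) * (v ⬝ᵥ w) := by
    have : (Matrix.vecMulVec v v) *ᵥ w = (v ⬝ᵥ w) • v := by
      ext i
      simp [mulVec, vecMulVec_apply, dotProduct, Finset.mul_sum, Finset.sum_mul, mul_comm,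
        mul_left_comm]
    rw [this, dotProduct_smul, smul_eq_mul, dotProduct_comm w v]
  have hcs := cauchy_schwarz_aux M hM v w
  rw [mnorm, mnorm, ← Real.sqrt_mul hc]
  apply Real.sqrt_le_sqrt
  rw [add_mulVec, dotProduct_add, hvv]
  nlinarith [hcs]
end

section
/- For all vectors v, w ∈ ℝ^m and every symmetric positive definite m×m real matrix M: ‖w‖_{(M + vvᵀ)^{-1}} ≥ ‖w‖_{M^{-1}} · (1 + vᵀM^{-1}v)^{-1/2}. -/
open Matrix

section aux

variable {n : ℕ}

lemma mul_vecMulVec (M : Matrix (Fin n) (Fin n) ℝ) (a b : Fin n → ℝ) :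
    M * vecMulVec a b = vecMulVec (M *ᵥ a) b := by
  ext i j
  simp only [mul_apply, vecMulVec_apply, mulVec, dotProduct, Finset.sum_mul]
  exact Finset.sum_congr rfl fun k _ => by ring

lemma vecMulVec_mul (M : Matrix (Fin n) (Fin n) ℝ) (a b : Fin n → ℝ) :
    vecMulVec a b * M = vecMulVec a (b ᵥ* M) := by
  ext i j
  simp only [mul_apply, vecMulVec_apply, vecMul, dotProduct, Finset.mul_sum]
  exact Finset.sum_congr rfl fun k _ => by ring

lemma vecMulVec_mulVec' (a b x : Fin n → ℝ) :
    vecMulVec a b *ᵥ x = (b ⬝ᵥ x) • a := by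
  ext i
  simp only [mulVec, vecMulVec_apply, dotProduct, Pi.smul_apply, smul_eq_mul, Finset.sum_mul]
  exact Finset.sum_congr rfl fun k _ => by ring

lemma cs {P : Matrix (Fin n) (Fin n) ℝ} (hP : P.PosSemidef) (v w : Fin n → ℝ) :
    (v ⬝ᵥ P *ᵥ w) ^ 2 ≤ (v ⬝ᵥ P *ᵥ v) * (w ⬝ᵥ P *ᵥ w) := by
  have hPt : Pᵀ = P := (show P.IsSymm by simpa using hP.1).eq
  have hsym : w ⬝ᵥ P *ᵥ v = v ⬝ᵥ P *ᵥ w := by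
    rw [dotProduct_mulVec, dotProduct_comm, ← mulVec_transpose, hPt]
  have hq : ∀ s t : ℝ, 0 ≤ s ^ 2 * (v ⬝ᵥ P *ᵥ v) + 2 * s * t * (v ⬝ᵥ P *ᵥ w)
      + t ^ 2 * (w ⬝ᵥ P *ᵥ w) := by
    intro s t
    have := hP.dotProduct_mulVec_nonneg (s • v + t • w)
    simp only [star_trivial, mulVec_add, mulVec_smul, dotProduct_add, add_dotProduct,
      smul_dotProduct, dotProduct_smul, smul_eq_mul, hsym] at this
    nlinarith [this]
  generalize v ⬝ᵥ P *ᵥ v = a at hq ⊢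
  generalize v ⬝ᵥ P *ᵥ w = b at hq ⊢
  generalize w ⬝ᵥ P *ᵥ w = c at hq ⊢
  have h1 := hq c (-b)
  have h2 := hq (-b) a
  have h3 := hq 1 (-b)
  have ha : 0 ≤ a := by have := hq 1 0; nlinarith
  have hc : 0 ≤ c := by have := hq 0 1; nlinarith
  rcases hc.lt_or_eq with hc | hc
  · nlinarith
  · subst hc
    rcases ha.lt_or_eq with ha | ha
    · nlinarith
    · subst ha
      nlinarith

end aux

/-- For every symmetric positive definite `M` and vectors `v, w`:
`‖w‖_{(M + vvᵀ)⁻¹} ≥ ‖w‖_{M⁻¹} (1 + vᵀ M⁻¹ v)^{-1/2}`. -/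
theorem mnorm_inv_rank_one_update_ge {m : ℕ} (M : Matrix (Fin m) (Fin m) ℝ)
    (hM : M.PosDef) (v w : Fin m → ℝ) :
    mnorm M⁻¹ w * (Real.sqrt (1 + v ⬝ᵥ M⁻¹ *ᵥ v))⁻¹ ≤
      mnorm (M + Matrix.vecMulVec v v)⁻¹ w := by
  set P := M⁻¹ with hPdef
  have hP : P.PosDef := hM.inv
  have hPsym : Pᵀ = P := by
    have := hP.isHermitian
    exact (show P.IsSymm by simpa using this).eq
  set c : ℝ := v ⬝ᵥ P *ᵥ v with hc
  have hc0 : 0 ≤ c := by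
    have := hP.posSemidef.dotProduct_mulVec_nonneg v
    simpa using this
  have h1c : (0:ℝ) < 1 + c := by linarith
  set u : Fin m → ℝ := P *ᵥ v with hu
  set N : Matrix (Fin m) (Fin m) ℝ := P - (1 + c)⁻¹ • vecMulVec u u with hN
  have hMP : M * P = 1 := Matrix.mul_nonsing_inv M (isUnit_iff_ne_zero.mpr hM.det_pos.ne')
  have hvP : v ᵥ* P = u := by rw [← mulVec_transpose, hPsym]
  have hinv : (M + vecMulVec v v)⁻¹ = N := by
    apply Matrix.inv_eq_right_inv
    have hMu : M *ᵥ u = v := by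
      rw [hu, mulVec_mulVec, hMP, one_mulVec]
    have expand : (M + vecMulVec v v) * N
        = 1 - (1 + c)⁻¹ • vecMulVec v u + vecMulVec v u
          - ((1 + c)⁻¹ * c) • vecMulVec v u := by
      rw [hN, add_mul, mul_sub, mul_sub, hMP, mul_smul_comm, mul_smul_comm,
        _root_.mul_vecMulVec, hMu, vecMulVec_mul, hvP, _root_.mul_vecMulVec, vecMulVec_mulVec']
      rw [show (vecMulVec ((v ⬝ᵥ u) • v) u) = (v ⬝ᵥ u) • vecMulVec v u by
        ext i j; simp [vecMulVec_apply]; ring]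
      have hvu : v ⬝ᵥ u = c := rfl
      rw [hvu, smul_smul]
      abel
    rw [expand]
    have : (1:ℝ) - (1 + c)⁻¹ - (1 + c)⁻¹ * c = 0 := by
      field_simp
      ring
    calc 1 - (1 + c)⁻¹ • vecMulVec v u + vecMulVec v u - ((1 + c)⁻¹ * c) • vecMulVec v u
        = 1 + ((1:ℝ) - (1 + c)⁻¹ - (1 + c)⁻¹ * c) • vecMulVec v u := by
          rw [sub_smul, sub_smul, one_smul]; abel
      _ = 1 := by rw [this, zero_smul, add_zero]
  rw [hinv]
  -- compute the quadratic form of N at w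
  have hqN : w ⬝ᵥ N *ᵥ w = w ⬝ᵥ P *ᵥ w - (1 + c)⁻¹ * (v ⬝ᵥ P *ᵥ w) ^ 2 := by
    rw [hN, sub_mulVec, dotProduct_sub, smul_mulVec, dotProduct_smul,
      vecMulVec_mulVec']
    have huw : u ⬝ᵥ w = v ⬝ᵥ P *ᵥ w := by
      rw [dotProduct_mulVec, hvP]
    rw [smul_eq_mul, dotProduct_smul, smul_eq_mul, huw, dotProduct_comm w u, huw]
    ring
  have hq0 : 0 ≤ w ⬝ᵥ P *ᵥ w := by
    have := hP.posSemidef.dotProduct_mulVec_nonneg w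
    simpa using this
  have hCS : (v ⬝ᵥ P *ᵥ w) ^ 2 ≤ c * (w ⬝ᵥ P *ᵥ w) := cs hP.posSemidef v w
  unfold mnorm
  rw [← Real.sqrt_inv, ← Real.sqrt_mul hq0]
  apply Real.sqrt_le_sqrt
  rw [hqN]
  have hinv1 : (1 + c)⁻¹ * (1 + c) = 1 := inv_mul_cancel₀ h1c.ne'
  nlinarith [inv_pos.mpr h1c, sq_nonneg (v ⬝ᵥ P *ᵥ w)]
end

section
/- Let M = [[M₁₁, M₁₂], [M₁₂ᵀ, M₂₂]] be an n×n symmetric M-matrix in block form whose eigenvalues all lie in the interval [λ_min, λ_max] with 0 < λ_min ≤ λ_max, and let κ = λ_max/λ_min. Then for every componentwise positive vector v (of the dimension of M₁₁): ‖M₁₂ᵀM₁₁^{-1}v‖ ≤ κ^{1/2}·n^{1/2}·‖v‖. -/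
open Matrix

private lemma quad_bounds {n : Type*} [Fintype n] [DecidableEq n] {A : Matrix n n ℝ}
    (hA : A.IsHermitian) {lammin lammax : ℝ}
    (heig : ∀ i, hA.eigenvalues i ∈ Set.Icc lammin lammax) (x : n → ℝ) :
    lammin * (x ⬝ᵥ x) ≤ x ⬝ᵥ (A *ᵥ x) ∧ x ⬝ᵥ (A *ᵥ x) ≤ lammax * (x ⬝ᵥ x) := by
  set U : Matrix n n ℝ := (Matrix.IsHermitian.eigenvectorUnitary hA : Matrix n n ℝ) with hU
  have hUU : U * star U = 1 :=
    (Matrix.mem_unitaryGroup_iff).mp (Matrix.IsHermitian.eigenvectorUnitary hA).2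
  set y : n → ℝ := star U *ᵥ x with hy
  have hyx : star U *ᵥ x = x ᵥ* U := by
    rw [Matrix.star_eq_conjTranspose, Matrix.conjTranspose_eq_transpose_of_trivial,
      Matrix.mulVec_transpose]
  have hq : x ⬝ᵥ (A *ᵥ x) = ∑ i, hA.eigenvalues i * (y i * y i) := by
    conv_lhs => rw [hA.spectral_theorem, Unitary.conjStarAlgAut_apply, ← Matrix.mulVec_mulVec, Matrix.dotProduct_mulVec,
      ← Matrix.vecMul_vecMul, ← hyx, ← hy]
    simp only [Matrix.vecMul_diagonal, dotProduct, RCLike.ofReal_real_eq_id,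
      Function.comp, id_eq]
    exact Finset.sum_congr rfl fun i _ => by ring
  have hxy : x ⬝ᵥ x = ∑ i, y i * y i := by
    have : y ⬝ᵥ y = x ⬝ᵥ x := by
      show (star U *ᵥ x) ⬝ᵥ (star U *ᵥ x) = x ⬝ᵥ x
      nth_rewrite 1 [hyx]
      rw [← Matrix.dotProduct_mulVec, Matrix.mulVec_mulVec, hUU, Matrix.one_mulVec]
    rw [← this]; rfl
  constructor
  · rw [hq, hxy, Finset.mul_sum]
    exact Finset.sum_le_sum fun i _ =>
      mul_le_mul_of_nonneg_right (heig i).1 (mul_self_nonneg _)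
  · rw [hq, hxy, Finset.mul_sum]
    exact Finset.sum_le_sum fun i _ =>
      mul_le_mul_of_nonneg_right (heig i).2 (mul_self_nonneg _)

/-- If `M = [[M₁₁, M₁₂], [M₁₂ᵀ, M₂₂]]` is an `n × n` symmetric M-matrix (symmetric positive
definite with nonpositive off-diagonal entries) whose eigenvalues lie in
`[λ_min, λ_max]` with `κ = λ_max / λ_min`, then for every componentwise positive `v`,
`‖M₁₂ᵀ M₁₁⁻¹ v‖ ≤ κ^{1/2} n^{1/2} ‖v‖`. -/
theorem mmatrix_offdiag_bound {n₁ n₂ : ℕ}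
    (M₁₁ : Matrix (Fin n₁) (Fin n₁) ℝ) (M₁₂ : Matrix (Fin n₁) (Fin n₂) ℝ)
    (M₂₂ : Matrix (Fin n₂) (Fin n₂) ℝ)
    (hPD : (Matrix.fromBlocks M₁₁ M₁₂ M₁₂ᵀ M₂₂).PosDef)
    (hoff : ∀ i j : Fin n₁ ⊕ Fin n₂, i ≠ j → Matrix.fromBlocks M₁₁ M₁₂ M₁₂ᵀ M₂₂ i j ≤ 0)
    (lammin lammax : ℝ) (hlam0 : 0 < lammin) (hlam : lammin ≤ lammax)
    (heig : ∀ i, hPD.1.eigenvalues i ∈ Set.Icc lammin lammax)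
    (v : Fin n₁ → ℝ) (hv : ∀ i, 0 < v i) :
    eucNorm ((M₁₂ᵀ * M₁₁⁻¹) *ᵥ v) ≤
      Real.sqrt (lammax / lammin) * Real.sqrt ((n₁ : ℝ) + n₂) * eucNorm v := by
  classical
  set Mb := Matrix.fromBlocks M₁₁ M₁₂ M₁₂ᵀ M₂₂ with hMb
  have hH : Mb.IsHermitian := hPD.1
  have dnn : ∀ {k : ℕ} (z : Fin k → ℝ), 0 ≤ z ⬝ᵥ z := fun z =>
    Finset.sum_nonneg fun i _ => mul_self_nonneg _
  have h11 : M₁₁.PosDef := by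
    refine Matrix.PosDef.of_dotProduct_mulVec_pos ?_ ?_
    · ext i j
      have := congrFun (congrFun hH (Sum.inl i)) (Sum.inl j)
      simpa [Matrix.conjTranspose_apply, hMb] using this
    · intro x hx
      have hx' : Sum.elim x (0 : Fin n₂ → ℝ) ≠ 0 := fun h =>
        hx (funext fun i => congrFun h (Sum.inl i))
      have := hPD.dotProduct_mulVec_pos hx'
      simpa [hMb, Matrix.fromBlocks_mulVec, sumElim_dotProduct_sumElim] using this
  have hdet : IsUnit M₁₁.det := isUnit_iff_ne_zero.2 h11.det_pos.ne'
  set w : Fin n₁ → ℝ := M₁₁⁻¹ *ᵥ v with hw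
  have hMw : M₁₁ *ᵥ w = v := by
    rw [hw, Matrix.mulVec_mulVec, Matrix.mul_nonsing_inv _ hdet, Matrix.one_mulVec]
  set u : Fin n₂ → ℝ := M₁₂ᵀ *ᵥ w with hu
  have hgoalvec : (M₁₂ᵀ * M₁₁⁻¹) *ᵥ v = u := by rw [← Matrix.mulVec_mulVec]
  set s := u ⬝ᵥ u with hs
  set p := w ⬝ᵥ v with hp
  set c2 := u ⬝ᵥ (M₂₂ *ᵥ u) with hc2
  have hdotWV : ∀ (a : Fin n₁ → ℝ) (b : Fin n₂ → ℝ),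
      (Sum.elim a b) ⬝ᵥ (Mb *ᵥ Sum.elim a b)
        = a ⬝ᵥ (M₁₁ *ᵥ a) + 2 * ((M₁₂ᵀ *ᵥ a) ⬝ᵥ b) + b ⬝ᵥ (M₂₂ *ᵥ b) := by
    intro a b
    rw [hMb, Matrix.fromBlocks_mulVec, sumElim_dotProduct_sumElim,
      dotProduct_add, dotProduct_add]
    simp only [Sum.elim_comp_inl, Sum.elim_comp_inr]
    have h1 : a ⬝ᵥ (M₁₂ *ᵥ b) = (M₁₂ᵀ *ᵥ a) ⬝ᵥ b := by
      rw [Matrix.dotProduct_mulVec, Matrix.mulVec_transpose]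
    have h2 : b ⬝ᵥ (M₁₂ᵀ *ᵥ a) = (M₁₂ᵀ *ᵥ a) ⬝ᵥ b := dotProduct_comm _ _
    rw [h1, h2]; ring
  have hplow : lammin * (w ⬝ᵥ w) ≤ p := by
    have := (quad_bounds hH heig (Sum.elim w 0)).1
    rw [hdotWV w 0, sumElim_dotProduct_sumElim] at this
    simpa [hMw, hp] using this
  have hpnonneg : 0 ≤ p := le_trans (mul_nonneg hlam0.le (dnn w)) hplow
  have hc2high : c2 ≤ lammax * s := by
    have := (quad_bounds hH heig (Sum.elim 0 u)).2
    rw [hdotWV 0 u, sumElim_dotProduct_sumElim] at this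
    simpa [hc2, hs] using this
  have key : ∀ t : ℝ, 0 ≤ c2 * (t * t) + (-(2 * s)) * t + p := by
    intro t
    have h0 := hPD.posSemidef.dotProduct_mulVec_nonneg (Sum.elim w (-(t • u)))
    rw [star_trivial, hdotWV w (-(t • u))] at h0
    have e1 : (M₁₂ᵀ *ᵥ w) ⬝ᵥ (-(t • u)) = -(t * s) := by
      rw [← hu, dotProduct_neg, dotProduct_smul]; rw [hs]; simp [smul_eq_mul]
    have e2 : (-(t • u)) ⬝ᵥ (M₂₂ *ᵥ (-(t • u))) = c2 * (t * t) := by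
      rw [Matrix.mulVec_neg, Matrix.mulVec_smul, dotProduct_neg,
        neg_dotProduct, neg_neg, dotProduct_smul, smul_dotProduct]
      rw [hc2]; simp [smul_eq_mul]; ring
    rw [e1, e2, hMw, ← hp] at h0
    linarith
  have hdisc := discrim_le_zero key
  rw [discrim] at hdisc
  have hsq : s * s ≤ c2 * p := by nlinarith
  have hs0 : 0 ≤ s := dnn u
  have hcs : p * p ≤ (w ⬝ᵥ w) * (v ⬝ᵥ v) := by
    have := Finset.sum_mul_sq_le_sq_mul_sq Finset.univ w v
    simpa [hp, dotProduct, pow_two] using this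
  have hvv : 0 ≤ v ⬝ᵥ v := dnn v
  have sbound : s ≤ lammax / lammin * (v ⬝ᵥ v) := by
    have hkk : 0 ≤ lammax / lammin := div_nonneg (le_trans hlam0.le hlam) hlam0.le
    rcases eq_or_lt_of_le hs0 with h | h
    · rw [← h]; exact mul_nonneg hkk hvv
    · have hsl : s ≤ lammax * p := by nlinarith
      have hpl : lammin * p ≤ v ⬝ᵥ v := by
        rcases eq_or_lt_of_le hpnonneg with hp0 | hp0
        · rw [← hp0]; simpa using hvv
        · have h1 : lammin * (p * p) ≤ p * (v ⬝ᵥ v) := by nlinarith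
          nlinarith
      have h2 := mul_le_mul_of_nonneg_left hpl hkk
      have h3 : lammax / lammin * (lammin * p) = lammax * p := by
        field_simp
      linarith
  rw [hgoalvec]
  have h1 : eucNorm u ≤ Real.sqrt (lammax / lammin) * eucNorm v := by
    rw [eucNorm, eucNorm, ← Real.sqrt_mul (div_nonneg (le_trans hlam0.le hlam) hlam0.le)]
    exact Real.sqrt_le_sqrt sbound
  rcases Nat.eq_zero_or_pos n₁ with h0 | h0
  · subst h0
    have hv0 : eucNorm v = 0 := by
      rw [eucNorm]
      simp [dotProduct]
    rw [hv0] at h1 ⊢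
    simpa using h1
  · have hn : (1 : ℝ) ≤ Real.sqrt ((n₁ : ℝ) + n₂) := by
      rw [show (1 : ℝ) = Real.sqrt 1 by simp]
      apply Real.sqrt_le_sqrt
      have : (1 : ℝ) ≤ (n₁ : ℝ) := by exact_mod_cast h0
      have : (0 : ℝ) ≤ (n₂ : ℝ) := Nat.cast_nonneg _
      linarith
    have hnn : 0 ≤ eucNorm v := Real.sqrt_nonneg _
    calc eucNorm u ≤ Real.sqrt (lammax / lammin) * eucNorm v := h1
      _ = Real.sqrt (lammax / lammin) * 1 * eucNorm v := by ring
      _ ≤ Real.sqrt (lammax / lammin) * Real.sqrt ((n₁ : ℝ) + n₂) * eucNorm v := by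
          exact mul_le_mul_of_nonneg_right
            (mul_le_mul_of_nonneg_left hn (Real.sqrt_nonneg _)) hnn
end
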